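/- arXiv:1707.05502 — 10 statements merged into one kernel-verified Lean document; each statement's English description precedes it below -/
import Mathlib

section
/- Let G be the incidence matrix of a directed graph Γ on q vertices (each column of G equals e_i - e_j for some edge (v_i, v_j)). Then Γ has a directed path from vertex k to vertex ℓ and a directed path from vertex ℓ to vertex k if and only if the convex cone positively spanned by the columns of G contains the line spanned by e_k - e_ℓ. -/
open Matrix

/-- strong (k,ℓ)-connectivity of a directed graph iff the cone of its
incidence matrix contains the line spanned by `e_k - e_ℓ`. -/
theorem stmt0 (q p : ℕ) (g : Fin p → Fin q × Fin q)
    (hg : ∀ σ, (g σ).1 ≠ (g σ).2)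
    (G : Matrix (Fin q) (Fin p) ℝ)
    (hG : ∀ i σ, G i σ =
      (if i = (g σ).1 then (1 : ℝ) else 0) - (if i = (g σ).2 then 1 else 0))
    (k ℓ : Fin q) (hkl : k ≠ ℓ) :
    (Relation.ReflTransGen (fun a b => ∃ σ, g σ = (a, b)) k ℓ ∧
      Relation.ReflTransGen (fun a b => ∃ σ, g σ = (a, b)) ℓ k) ↔
    ∀ x ∈ Submodule.span ℝ
        ({fun i => (if i = k then (1 : ℝ) else 0) - (if i = ℓ then 1 else 0)} :
          Set (Fin q → ℝ)),
      x ∈ {y : Fin q → ℝ | ∃ α : Fin p → ℝ, (∀ σ, 0 ≤ α σ) ∧ G.mulVec α = y} := by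
  classical
  set r : Fin q → Fin q → Prop := fun a b => ∃ σ, g σ = (a, b) with hr
  -- A path from a to b gives a nonnegative combination equal to e_a - e_b.
  have coneA : ∀ a b : Fin q, Relation.ReflTransGen r a b →
      ∃ α : Fin p → ℝ, (∀ σ, 0 ≤ α σ) ∧
        G.mulVec α = fun i => (if i = a then (1:ℝ) else 0) - (if i = b then 1 else 0) := by
    intro a b h
    induction h with
    | refl =>
      refine ⟨0, fun σ => le_refl 0, ?_⟩
      funext i
      simp [Matrix.mulVec, dotProduct]
    | @tail b c h1 h2 ih =>
      obtain ⟨α, hαpos, hα⟩ := ih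
      obtain ⟨σ, hσ⟩ := h2
      refine ⟨fun τ => α τ + if τ = σ then 1 else 0, ?_, ?_⟩
      · intro τ
        have := hαpos τ
        show 0 ≤ α τ + if τ = σ then 1 else 0
        split_ifs <;> linarith
      · funext i
        have h1' : G.mulVec (fun τ => α τ + if τ = σ then 1 else 0) i
            = G.mulVec α i + G i σ := by
          simp [Matrix.mulVec, dotProduct, mul_add, Finset.sum_add_distrib, mul_ite,
            mul_one, mul_zero, Finset.sum_ite_eq']
        rw [h1', hα, hG i σ, hσ]
        have hbc : b ≠ c := by
          have := hg σ; rw [hσ] at this; exact this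
        simp only
        by_cases h1 : i = a <;> by_cases h2 : i = b <;> by_cases h3 : i = c <;>
          simp [h1, h2, h3]
  -- The hard direction: a nonnegative combination equal to e_a - e_b gives a path.
  have hard : ∀ a b : Fin q, a ≠ b → ∀ α : Fin p → ℝ, (∀ σ, 0 ≤ α σ) →
      G.mulVec α = (fun i => (if i = a then (1:ℝ) else 0) - (if i = b then 1 else 0)) →
      Relation.ReflTransGen r a b := by
    intro a b hab α hpos hGα
    by_contra hnr
    set r' : Fin q → Fin q → Prop := fun x y => ∃ σ, 0 < α σ ∧ g σ = (x, y) with hr'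
    set S : Finset (Fin q) := Finset.univ.filter (fun i => Relation.ReflTransGen r' a i)
      with hS
    have haS : a ∈ S := Finset.mem_filter.2 ⟨Finset.mem_univ _, Relation.ReflTransGen.refl⟩
    have hbS : b ∉ S := by
      simp only [hS, Finset.mem_filter, Finset.mem_univ, true_and]
      intro hreach
      exact hnr (Relation.ReflTransGen.mono (p := r) (fun x y (hxy : r' x y) => ⟨hxy.choose, hxy.choose_spec.2⟩) _ _ hreach)
    have key : ∑ i ∈ S, G.mulVec α i ≤ 0 := by
      have hswap : ∑ i ∈ S, G.mulVec α i = ∑ σ : Fin p, α σ *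
          ((if (g σ).1 ∈ S then (1:ℝ) else 0) - (if (g σ).2 ∈ S then 1 else 0)) := by
        simp only [Matrix.mulVec, dotProduct]
        rw [Finset.sum_comm]
        refine Finset.sum_congr rfl (fun σ _ => ?_)
        simp only [hG, sub_mul, ite_mul, one_mul, zero_mul, Finset.sum_sub_distrib,
          Finset.sum_ite_eq', Finset.sum_ite_eq]
        split_ifs <;> ring
      rw [hswap]
      apply Finset.sum_nonpos
      intro σ _
      rcases eq_or_lt_of_le (hpos σ) with h0 | h0
      · rw [← h0]; simp
      · by_cases h1 : (g σ).1 ∈ S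
        · have h2 : (g σ).2 ∈ S := by
            simp only [hS, Finset.mem_filter, Finset.mem_univ, true_and] at h1 ⊢
            exact h1.tail ⟨σ, h0, rfl⟩
          simp [h1, h2]
        · have hle : ((if (g σ).1 ∈ S then (1:ℝ) else 0) - (if (g σ).2 ∈ S then 1 else 0)) ≤ 0 := by
            simp only [h1, if_false]
            split_ifs <;> norm_num
          exact mul_nonpos_of_nonneg_of_nonpos (le_of_lt h0) hle
    have key2 : ∑ i ∈ S, G.mulVec α i = 1 := by
      rw [hGα]
      simp only [Finset.sum_sub_distrib, Finset.sum_ite_eq', Finset.sum_ite_eq]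
      simp [haS, hbS]
    linarith
  constructor
  · rintro ⟨h1, h2⟩ x hx
    rw [Submodule.mem_span_singleton] at hx
    obtain ⟨c, rfl⟩ := hx
    obtain ⟨α1, hα1pos, hα1⟩ := coneA k ℓ h1
    obtain ⟨α2, hα2pos, hα2⟩ := coneA ℓ k h2
    rcases le_or_gt 0 c with hc | hc
    · refine ⟨c • α1, fun σ => mul_nonneg hc (hα1pos σ), ?_⟩
      rw [Matrix.mulVec_smul, hα1]
    · refine ⟨(-c) • α2, fun σ => mul_nonneg (by linarith) (hα2pos σ), ?_⟩
      rw [Matrix.mulVec_smul, hα2]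
      funext i
      simp only [Pi.smul_apply, smul_eq_mul]
      ring
  · intro h
    have hv : (fun i => (if i = k then (1:ℝ) else 0) - (if i = ℓ then 1 else 0)) ∈
        Submodule.span ℝ ({fun i => (if i = k then (1:ℝ) else 0) - (if i = ℓ then 1 else 0)} :
          Set (Fin q → ℝ)) := Submodule.mem_span_singleton_self _
    obtain ⟨α1, hα1pos, hα1⟩ := h _ hv
    have hv2 : (fun i => (if i = ℓ then (1:ℝ) else 0) - (if i = k then 1 else 0)) ∈
        Submodule.span ℝ ({fun i => (if i = k then (1:ℝ) else 0) - (if i = ℓ then 1 else 0)} :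
          Set (Fin q → ℝ)) := by
      rw [Submodule.mem_span_singleton]
      exact ⟨-1, by funext i; simp only [Pi.smul_apply, smul_eq_mul]; ring⟩
    obtain ⟨α2, hα2pos, hα2⟩ := h _ hv2
    exact ⟨hard k ℓ hkl α1 hα1pos hα1, hard ℓ k hkl.symm α2 hα2pos hα2⟩
end

section
/- Let G be the incidence matrix of a directed graph Γ on q vertices. Then there exists an undirected path between vertices k and ℓ if and only if the range (column space) of G contains the line spanned by e_k - e_ℓ. -/
open Matrix

/-- (k,ℓ)-connectivity (undirected path) of a directed graph iff the
column space of its incidence matrix contains the line spanned by `e_k - e_ℓ`. -/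
theorem stmt1 (q p : ℕ) (g : Fin p → Fin q × Fin q)
    (hg : ∀ σ, (g σ).1 ≠ (g σ).2)
    (G : Matrix (Fin q) (Fin p) ℝ)
    (hG : ∀ i σ, G i σ =
      (if i = (g σ).1 then (1 : ℝ) else 0) - (if i = (g σ).2 then 1 else 0))
    (k ℓ : Fin q) (hkl : k ≠ ℓ) :
    Relation.ReflTransGen (fun a b => ∃ σ, g σ = (a, b) ∨ g σ = (b, a)) k ℓ ↔
    Submodule.span ℝ
        ({fun i => (if i = k then (1 : ℝ) else 0) - (if i = ℓ then 1 else 0)} :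
          Set (Fin q → ℝ)) ≤ LinearMap.range G.mulVecLin := by
  classical
  have hcol : ∀ σ, (fun i => (if i = (g σ).1 then (1 : ℝ) else 0)
      - (if i = (g σ).2 then 1 else 0)) ∈ LinearMap.range G.mulVecLin := by
    intro σ
    refine ⟨Pi.single σ 1, ?_⟩
    funext i
    simp [Matrix.mulVecLin_apply, Matrix.mulVec, dotProduct,
      Pi.single_apply, hG i σ]
  constructor
  · intro hpath
    rw [Submodule.span_le, Set.singleton_subset_iff]
    have key : ∀ b : Fin q,
        Relation.ReflTransGen (fun a b => ∃ σ, g σ = (a, b) ∨ g σ = (b, a)) k b →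
        (fun i => (if i = k then (1 : ℝ) else 0) - (if i = b then 1 else 0)) ∈
          LinearMap.range G.mulVecLin := by
      intro b hb
      induction hb with
      | refl =>
        refine ⟨0, ?_⟩
        funext i
        simp
      | @tail b c hab hbc ih =>
        obtain ⟨σ, hσ | hσ⟩ := hbc
        · have := Submodule.add_mem _ ih (hcol σ)
          convert this using 1
          funext i
          have h1 : (g σ).1 = b := by rw [hσ]
          have h2 : (g σ).2 = c := by rw [hσ]
          simp only [Pi.add_apply, h1, h2]
          ring
        · have := Submodule.sub_mem _ ih (hcol σ)
          convert this using 1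
          funext i
          have h1 : (g σ).1 = c := by rw [hσ]
          have h2 : (g σ).2 = b := by rw [hσ]
          simp only [Pi.sub_apply, h1, h2]
          ring
    exact key ℓ hpath
  · intro hle
    have hmem : (fun i => (if i = k then (1 : ℝ) else 0) - (if i = ℓ then 1 else 0)) ∈
        LinearMap.range G.mulVecLin :=
      hle (Submodule.subset_span rfl)
    obtain ⟨x, hx⟩ := hmem
    set R : Fin q → Fin q → Prop := fun a b => ∃ σ, g σ = (a, b) ∨ g σ = (b, a) with hR
    set f : Fin q → ℝ := fun i => if Relation.ReflTransGen R k i then 1 else 0 with hf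
    have hedge : ∀ σ, f (g σ).1 = f (g σ).2 := by
      intro σ
      have h12 : R (g σ).1 (g σ).2 := ⟨σ, Or.inl rfl⟩
      have h21 : R (g σ).2 (g σ).1 := ⟨σ, Or.inr rfl⟩
      simp only [hf]
      by_cases h : Relation.ReflTransGen R k (g σ).1
      · rw [if_pos h, if_pos (h.tail h12)]
      · rw [if_neg h, if_neg (fun h' => h (h'.tail h21))]
    have hdot : ∀ v ∈ LinearMap.range G.mulVecLin, ∑ i, f i * v i = 0 := by
      rintro v ⟨y, rfl⟩
      have : ∑ i, f i * (G.mulVecLin y) i = ∑ σ, (∑ i, f i * G i σ) * y σ := by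
        simp only [Matrix.mulVecLin_apply, Matrix.mulVec, dotProduct,
          Finset.mul_sum, Finset.sum_mul]
        rw [Finset.sum_comm]
        refine Finset.sum_congr rfl fun σ _ => Finset.sum_congr rfl fun i _ => by ring
      rw [this]
      apply Finset.sum_eq_zero
      intro σ _
      have : ∑ i, f i * G i σ = f (g σ).1 - f (g σ).2 := by
        simp only [hG _ σ, mul_sub, mul_ite, mul_one, mul_zero,
          Finset.sum_sub_distrib, Finset.sum_ite_eq', Finset.mem_univ, if_true]
      rw [this, hedge σ, sub_self, zero_mul]
    have h0 : ∑ i, f i * ((if i = k then (1 : ℝ) else 0) - (if i = ℓ then 1 else 0)) = 0 := by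
      exact hdot _ ⟨x, hx⟩
    have hsum : ∑ i, f i * ((if i = k then (1 : ℝ) else 0) - (if i = ℓ then 1 else 0))
        = f k - f ℓ := by
      simp only [mul_sub, mul_ite, mul_one, mul_zero,
        Finset.sum_sub_distrib, Finset.sum_ite_eq', Finset.mem_univ, if_true]
    have hfk : f k = 1 := by simp [hf, Relation.ReflTransGen.refl]
    have hfl : f ℓ = 1 := by
      have := h0
      rw [hsum, hfk] at this
      linarith
    simp only [hf] at hfl
    by_contra hcon
    rw [if_neg hcon] at hfl
    norm_num at hfl
end

section
/- Let G be the incidence matrix of a directed graph Γ on q vertices. Then Γ is strongly connected (for every pair of vertices there is a directed path in each direction) if and only if the convex cone spanned by the columns of G contains the entire subspace {x ∈ ℝ^q : 1^T x = 0} (the orthogonal complement of the all-ones vector). -/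
open Matrix

/-- auxiliary: the difference of two basis vectors -/
def vecd (q : ℕ) (k ℓ : Fin q) : Fin q → ℝ :=
  fun i => (if i = k then (1 : ℝ) else 0) - (if i = ℓ then 1 else 0)

/-- a directed graph is strongly connected iff the cone spanned by the
columns of its incidence matrix contains `{x : 1ᵀx = 0}`. -/
theorem stmt2 (q p : ℕ) (g : Fin p → Fin q × Fin q)
    (hg : ∀ σ, (g σ).1 ≠ (g σ).2)
    (G : Matrix (Fin q) (Fin p) ℝ)
    (hG : ∀ i σ, G i σ =
      (if i = (g σ).1 then (1 : ℝ) else 0) - (if i = (g σ).2 then 1 else 0)) :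
    (∀ k ℓ : Fin q, Relation.ReflTransGen (fun a b => ∃ σ, g σ = (a, b)) k ℓ) ↔
    ∀ x : Fin q → ℝ, (∑ i : Fin q, x i = 0) →
      ∃ α : Fin p → ℝ, (∀ σ, 0 ≤ α σ) ∧ G.mulVec α = x := by
  classical
  set r : Fin q → Fin q → Prop := fun a b => ∃ σ, g σ = (a, b) with hr
  set P : (Fin q → ℝ) → Prop :=
    fun x => ∃ α : Fin p → ℝ, (∀ σ, 0 ≤ α σ) ∧ G.mulVec α = x with hP
  have Pzero : P 0 := ⟨0, fun _ => le_refl _, by simp [Matrix.mulVec_zero]⟩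
  have Padd : ∀ u v, P u → P v → P (u + v) := by
    rintro u v ⟨α, hα, hαe⟩ ⟨β, hβ, hβe⟩
    exact ⟨α + β, fun σ => add_nonneg (hα σ) (hβ σ), by
      rw [Matrix.mulVec_add, hαe, hβe]⟩
  have Psmul : ∀ (c : ℝ) v, 0 ≤ c → P v → P (c • v) := by
    rintro c v hc ⟨α, hα, hαe⟩
    exact ⟨c • α, fun σ => mul_nonneg hc (hα σ), by
      rw [Matrix.mulVec_smul, hαe]⟩
  have Pcol : ∀ σ, P (vecd q (g σ).1 (g σ).2) := by
    intro σ
    refine ⟨fun τ => if τ = σ then 1 else 0,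
      fun τ => by dsimp only; split <;> norm_num, ?_⟩
    funext i
    simp only [Matrix.mulVec, dotProduct, mul_ite, mul_one, mul_zero,
      Finset.sum_ite_eq', Finset.mem_univ, if_true, vecd]
    rw [hG]
  constructor
  · -- strong connectivity → cone contains the hyperplane
    intro hconn x hx
    have Pvecd : ∀ k ℓ : Fin q, P (vecd q k ℓ) := by
      intro k ℓ
      induction hconn k ℓ with
      | refl =>
          have h0 : vecd q k k = 0 := by funext i; simp [vecd]
          rw [h0]; exact Pzero
      | @tail b c _ hbc ih =>
          obtain ⟨σ, hσ⟩ := hbc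
          have := Padd _ _ ih (Pcol σ)
          have heq : vecd q k b + vecd q (g σ).1 (g σ).2 = vecd q k c := by
            funext i
            simp only [Pi.add_apply, vecd, hσ]
            ring
          rwa [heq] at this
    rcases Nat.eq_zero_or_pos q with hq | hq
    · refine ⟨0, fun _ => le_refl _, ?_⟩
      funext i
      exact absurd i.2 (by omega)
    · set v0 : Fin q := ⟨0, hq⟩
      have hxsum : x = ∑ i : Fin q, |x i| • (if 0 ≤ x i then vecd q i v0 else vecd q v0 i) := by
        funext j
        rw [Finset.sum_apply]
        have key : ∀ i : Fin q,
            (|x i| • (if 0 ≤ x i then vecd q i v0 else vecd q v0 i)) j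
            = x i * ((if j = i then (1:ℝ) else 0) - (if j = v0 then 1 else 0)) := by
          intro i
          by_cases h : 0 ≤ x i
          · rw [if_pos h, Pi.smul_apply, smul_eq_mul, abs_of_nonneg h, vecd]
          · rw [if_neg h, Pi.smul_apply, smul_eq_mul, abs_of_neg (not_le.mp h)]
            simp only [vecd]
            ring
        rw [Finset.sum_congr rfl (fun i _ => key i)]
        simp only [mul_sub]
        rw [Finset.sum_sub_distrib, ← Finset.sum_mul]
        rw [hx]
        simp [mul_ite]
      rw [hxsum]
      refine Finset.sum_induction _ P Padd Pzero ?_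
      intro i _
      apply Psmul _ _ (abs_nonneg _)
      split <;> exact Pvecd _ _
  · -- cone contains hyperplane → strong connectivity
    intro hcone k ℓ
    by_cases hkl : k = ℓ
    · subst hkl; exact Relation.ReflTransGen.refl
    have hsum : ∑ i : Fin q, vecd q k ℓ i = 0 := by
      simp only [vecd]
      rw [Finset.sum_sub_distrib]
      simp
    obtain ⟨α, hα, hGα⟩ := hcone (vecd q k ℓ) hsum
    by_contra hnl
    set S : Finset (Fin q) := Finset.univ.filter
      (fun i => Relation.ReflTransGen r k i) with hS
    have hkS : k ∈ S := by
      simp [hS, Relation.ReflTransGen.refl]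
    have hlS : ℓ ∉ S := by
      simp only [hS, Finset.mem_filter, Finset.mem_univ, true_and]
      exact hnl
    have h1 : ∑ i ∈ S, vecd q k ℓ i = 1 := by
      simp only [vecd]
      rw [Finset.sum_sub_distrib, Finset.sum_ite_eq' S k (fun _ => (1:ℝ)),
        Finset.sum_ite_eq' S ℓ (fun _ => (1:ℝ)), if_pos hkS, if_neg hlS]
      norm_num
    have h2 : ∑ i ∈ S, vecd q k ℓ i ≤ 0 := by
      rw [← hGα]
      simp only [Matrix.mulVec, dotProduct]
      rw [Finset.sum_comm]
      apply Finset.sum_nonpos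
      intro σ _
      rw [← Finset.sum_mul]
      have hcol : ∑ i ∈ S, G i σ ≤ 0 := by
        have : ∑ i ∈ S, G i σ =
            (if (g σ).1 ∈ S then (1:ℝ) else 0) - (if (g σ).2 ∈ S then 1 else 0) := by
          rw [Finset.sum_congr rfl (fun i _ => hG i σ), Finset.sum_sub_distrib,
            Finset.sum_ite_eq' S (g σ).1 (fun _ => (1:ℝ)),
            Finset.sum_ite_eq' S (g σ).2 (fun _ => (1:ℝ))]
        rw [this]
        by_cases h1 : (g σ).1 ∈ S
        · have h2' : (g σ).2 ∈ S := by
            simp only [hS, Finset.mem_filter, Finset.mem_univ, true_and] at h1 ⊢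
            exact h1.tail ⟨σ, rfl⟩
          simp [h1, h2']
        · rw [if_neg h1]; split <;> norm_num
      calc (∑ i ∈ S, G i σ) * α σ ≤ 0 * α σ :=
            mul_le_mul_of_nonneg_right hcol (hα σ)
        _ = 0 := zero_mul _
    linarith
end

section
/- Consider an array of q ≥ 2 identical LTI systems ẋ_i = A x_i + Σ_σ B_{iσ} u_σ with relative actuation Σ_i B_{iσ} = 0 for each σ. Write the array as ẋ = 𝐀x + 𝐁u with 𝐀 = I_q ⊗ A and 𝐁 the stacked matrix of the B_{iσ}, and let 𝐖 = [𝐁 𝐀𝐁 ⋯ 𝐀^{n-1}𝐁]. Then the array is controllable (every initial condition can be driven in finite time to the synchronization subspace S_n = range(1_q ⊗ I_n)) if and only if range 𝐖 ⊇ S_n^⊥. -/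
open Matrix Kronecker

/-- Controllability matrix `[B  MB  ⋯  M^{N-1}B]` with columns indexed by `Fin N × J`. -/
noncomputable def ctrb {ι J : Type*} [Fintype ι] [DecidableEq ι] (M : Matrix ι ι ℝ) (B : Matrix ι J ℝ)
    (N : ℕ) : Matrix ι (Fin N × J) ℝ :=
  Matrix.of fun x rσ => ((M ^ (rσ.1 : ℕ)) * B) x rσ.2


set_option linter.unusedSectionVars false

open NormedSpace MeasureTheory

noncomputable section

variable {ι κ J : Type*} [Fintype ι] [DecidableEq ι] [Fintype κ] [DecidableEq κ]


variable {ι κ J : Type*} [Fintype ι] [DecidableEq ι] [Fintype κ] [DecidableEq κ]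

/-- `X ↦ X.mulVec y` as a linear map. -/
def mulVecRight (y : κ → ℝ) : Matrix ι κ ℝ →ₗ[ℝ] (ι → ℝ) where
  toFun X := X.mulVec y
  map_add' X Y := Matrix.add_mulVec X Y y
  map_smul' c X := by simp [Matrix.smul_mulVec]

/-- `X ↦ X.mulVec y` as a continuous linear map. -/
def mulVecRightL (y : κ → ℝ) : Matrix ι κ ℝ →L[ℝ] (ι → ℝ) :=
  ⟨mulVecRight y, (mulVecRight y).continuous_of_finiteDimensional⟩

/-- `x ↦ μ ⬝ᵥ x` as a continuous linear map. -/
def dotLeftL (μ : ι → ℝ) : (ι → ℝ) →L[ℝ] ℝ :=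
  ⟨{ toFun := fun x => μ ⬝ᵥ x
     map_add' := fun a b => dotProduct_add μ a b
     map_smul' := fun c a => by simp [dotProduct_smul, smul_eq_mul] },
   LinearMap.continuous_of_finiteDimensional _⟩

@[simp] lemma mulVecRightL_apply (y : κ → ℝ) (X : Matrix ι κ ℝ) :
    mulVecRightL y X = X.mulVec y := rfl

@[simp] lemma dotLeftL_apply (μ x : ι → ℝ) : dotLeftL μ x = μ ⬝ᵥ x := rfl

lemma dot_transpose_mulVec (N : Matrix ι κ ℝ) (y : ι → ℝ) (v : κ → ℝ) :
    (Nᵀ.mulVec y) ⬝ᵥ v = y ⬝ᵥ (N.mulVec v) := by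
  rw [Matrix.mulVec_transpose, ← Matrix.dotProduct_mulVec]

lemma matExp_continuous (N : Matrix ι ι ℝ) (τ : ℝ) :
    Continuous fun t : ℝ => exp ((τ - t) • N) := by
  letI : NormedRing (Matrix ι ι ℝ) := Matrix.linftyOpNormedRing
  letI : NormedAlgebra ℝ (Matrix ι ι ℝ) := Matrix.linftyOpNormedAlgebra
  letI : NormedAlgebra ℚ (Matrix ι ι ℝ) := Matrix.linftyOpNormedAlgebra
  haveI : CompleteSpace (Matrix ι ι ℝ) := FiniteDimensional.complete ℝ _
  exact exp_continuous.comp ((continuous_const.sub continuous_id).smul continuous_const)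

lemma matExp_hasDerivAt (N : Matrix ι ι ℝ) (y : ι → ℝ) (s : ℝ) :
    HasDerivAt (fun t : ℝ => (exp (t • N)).mulVec y)
      ((exp (s • N)).mulVec (N.mulVec y)) s := by
  letI : NormedRing (Matrix ι ι ℝ) := Matrix.linftyOpNormedRing
  letI : NormedAlgebra ℝ (Matrix ι ι ℝ) := Matrix.linftyOpNormedAlgebra
  letI : NormedAlgebra ℚ (Matrix ι ι ℝ) := Matrix.linftyOpNormedAlgebra
  haveI : CompleteSpace (Matrix ι ι ℝ) := FiniteDimensional.complete ℝ _
  have h := hasDerivAt_exp_smul_const (𝕂 := ℝ) N s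
  have h2 := ((mulVecRightL (ι := ι) y).hasFDerivAt.comp_hasDerivAt s h)
  simp only [Matrix.mulVec_mulVec, Function.comp_def] at h2 ⊢
  exact h2

lemma matExp_transpose (N : Matrix ι ι ℝ) (s : ℝ) :
    (exp (s • N))ᵀ = exp (s • Nᵀ) := by
  rw [← Matrix.transpose_smul, Matrix.exp_transpose]

lemma matExp_cancel (N : Matrix ι ι ℝ) (a : ℝ) (w : ι → ℝ) :
    (exp (a • N)).mulVec ((exp (-a • N)).mulVec w) = w := by
  letI : NormedRing (Matrix ι ι ℝ) := Matrix.linftyOpNormedRing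
  letI : NormedAlgebra ℝ (Matrix ι ι ℝ) := Matrix.linftyOpNormedAlgebra
  letI : NormedAlgebra ℚ (Matrix ι ι ℝ) := Matrix.linftyOpNormedAlgebra
  haveI : CompleteSpace (Matrix ι ι ℝ) := FiniteDimensional.complete ℝ _
  have hc : Commute (a • N) (-a • N) :=
    (((Commute.refl N).smul_left a).smul_right (-a))
  rw [Matrix.mulVec_mulVec, ← Matrix.exp_add_of_commute _ _ hc]
  have : a • N + -a • N = 0 := by module
  rw [this, exp_zero, Matrix.one_mulVec]

lemma matExp_mulVec_tsum (N : Matrix ι ι ℝ) (s : ℝ) (v : ι → ℝ) :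
    (exp (s • N)).mulVec v = ∑' k : ℕ, ((k.factorial : ℝ)⁻¹ * s ^ k) • (N ^ k).mulVec v := by
  letI : NormedRing (Matrix ι ι ℝ) := Matrix.linftyOpNormedRing
  letI : NormedAlgebra ℝ (Matrix ι ι ℝ) := Matrix.linftyOpNormedAlgebra
  letI : NormedAlgebra ℚ (Matrix ι ι ℝ) := Matrix.linftyOpNormedAlgebra
  haveI : CompleteSpace (Matrix ι ι ℝ) := FiniteDimensional.complete ℝ _
  have hs : Summable fun k : ℕ => ((k.factorial : ℝ)⁻¹) • (s • N) ^ k :=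
    expSeries_summable' (𝕂 := ℝ) (s • N)
  have h1 := ((mulVecRightL (ι := ι) v).map_tsum hs).symm
  have h2 : (exp (s • N)).mulVec v
      = mulVecRightL v (∑' k : ℕ, ((k.factorial : ℝ)⁻¹) • (s • N) ^ k) := by
    rw [exp_eq_tsum (𝕂 := ℝ)]; rfl
  rw [h2, ← h1]
  refine tsum_congr fun k => ?_
  simp [smul_pow, Matrix.smul_mulVec, smul_smul, mul_comm]


lemma tsum_mem_closed {E : Type*} [NormedAddCommGroup E] [NormedSpace ℝ E]
    (U : Submodule ℝ E) (hc : IsClosed (U : Set E)) {f : ℕ → E} (hf : ∀ k, f k ∈ U) :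
    (∑' k, f k) ∈ U := by
  by_cases h : Summable f
  · refine hc.mem_of_tendsto h.hasSum.tendsto_sum_nat ?_
    exact Filter.Eventually.of_forall fun m => Submodule.sum_mem U fun k _ => hf k
  · rw [tsum_eq_zero_of_not_summable h]; exact U.zero_mem

lemma pow_mulVec_mem (N : Matrix ι ι ℝ) (U : Submodule ℝ (ι → ℝ))
    (hU : ∀ v ∈ U, N.mulVec v ∈ U) (k : ℕ) {v : ι → ℝ} (hv : v ∈ U) :
    (N ^ k).mulVec v ∈ U := by
  induction k with
  | zero => simpa [Matrix.one_mulVec] using hv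
  | succ m ih =>
    have : (N ^ (m + 1)).mulVec v = N.mulVec ((N ^ m).mulVec v) := by
      rw [Matrix.mulVec_mulVec, ← pow_succ']
    rw [this]; exact hU _ ih

lemma exp_mulVec_mem [FiniteDimensional ℝ (ι → ℝ)] (N : Matrix ι ι ℝ) (U : Submodule ℝ (ι → ℝ))
    (hU : ∀ v ∈ U, N.mulVec v ∈ U) (s : ℝ) {v : ι → ℝ} (hv : v ∈ U) :
    (exp (s • N)).mulVec v ∈ U := by
  rw [matExp_mulVec_tsum]
  exact tsum_mem_closed U U.closed_of_finiteDimensional fun k =>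
    U.smul_mem _ (pow_mulVec_mem N U hU k hv)

lemma intervalIntegral_mem {E : Type*} [NormedAddCommGroup E] [NormedSpace ℝ E]
    [CompleteSpace E] (U : Submodule ℝ E) (hc : IsClosed (U : Set E)) {f : ℝ → E} {a b : ℝ}
    (hi : IntervalIntegrable f volume a b) (hmem : ∀ t, f t ∈ U) :
    (∫ t in a..b, f t) ∈ U := by
  by_contra hx
  obtain ⟨φ, c, hsc, hxc⟩ := geometric_hahn_banach_closed_point U.convex hc hx
  have hzero : ∀ u ∈ U, φ u = 0 := by
    intro u hu
    by_contra hne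
    rcases lt_or_gt_of_ne hne with h | h
    · have := hsc ((c / φ u) • u) (U.smul_mem _ hu)
      rw [_root_.map_smul] at this
      simp only [smul_eq_mul] at this
      rw [div_mul_cancel₀ _ (ne_of_lt h)] at this
      exact lt_irrefl _ this
    · have h2 := hsc (((c + 1) / φ u) • u) (U.smul_mem _ hu)
      rw [_root_.map_smul] at h2
      simp only [smul_eq_mul] at h2
      rw [div_mul_cancel₀ _ (ne_of_gt h)] at h2
      linarith
  have h0 : (0 : ℝ) < c := by simpa using hsc 0 U.zero_mem
  have : φ (∫ t in a..b, f t) = ∫ t in a..b, φ (f t) := (φ.intervalIntegral_comp_comm hi).symm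
  rw [this] at hxc
  have : (∫ t in a..b, φ (f t)) = 0 := by
    simp only [fun t => hzero _ (hmem t)]
    simp
  rw [this] at hxc
  linarith


variable {n q p : ℕ}

lemma kron_one_apply (C : Matrix (Fin n) (Fin n) ℝ) (i i' : Fin q) (j j' : Fin n) :
    ((1 : Matrix (Fin q) (Fin q) ℝ) ⊗ₖ C) (i, j) (i', j') =
      (if i = i' then 1 else 0) * C j j' := by
  simp [Matrix.kroneckerMap_apply, Matrix.one_apply]

lemma kron_one_mulVec_apply (C : Matrix (Fin n) (Fin n) ℝ) (x : Fin q × Fin n → ℝ)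
    (i : Fin q) (j : Fin n) :
    (((1 : Matrix (Fin q) (Fin q) ℝ) ⊗ₖ C).mulVec x) (i, j) = ∑ j', C j j' * x (i, j') := by
  rw [Matrix.mulVec]
  show ∑ z : Fin q × Fin n, ((1 : Matrix (Fin q) (Fin q) ℝ) ⊗ₖ C) (i, j) z * x z = _
  rw [Fintype.sum_prod_type]
  rw [Finset.sum_eq_single i]
  · refine Finset.sum_congr rfl fun j' _ => ?_
    rw [kron_one_apply]; simp
  · intro i' _ hne
    refine Finset.sum_eq_zero fun j' _ => ?_
    rw [kron_one_apply]; simp [Ne.symm hne]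
  · simp

lemma kron_one_pow (A : Matrix (Fin n) (Fin n) ℝ) (k : ℕ) :
    ((1 : Matrix (Fin q) (Fin q) ℝ) ⊗ₖ A) ^ k = (1 : Matrix (Fin q) (Fin q) ℝ) ⊗ₖ (A ^ k) := by
  induction k with
  | zero => simp [Matrix.one_kronecker_one]
  | succ m ih => rw [pow_succ, pow_succ, ih, ← Matrix.mul_kronecker_mul, one_mul]

lemma kron_one_transpose (A : Matrix (Fin n) (Fin n) ℝ) :
    ((1 : Matrix (Fin q) (Fin q) ℝ) ⊗ₖ A)ᵀ = (1 : Matrix (Fin q) (Fin q) ℝ) ⊗ₖ Aᵀ := by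
  ext ⟨i, j⟩ ⟨i', j'⟩
  rw [Matrix.transpose_apply, kron_one_apply, kron_one_apply]
  simp [Matrix.transpose_apply, eq_comm]

/-- The linear map `X ↦ 1 ⊗ₖ X`. -/
def kronOneL : Matrix (Fin n) (Fin n) ℝ →ₗ[ℝ] Matrix (Fin q × Fin n) (Fin q × Fin n) ℝ where
  toFun X := (1 : Matrix (Fin q) (Fin q) ℝ) ⊗ₖ X
  map_add' X Y := by
    ext ⟨i, j⟩ ⟨i', j'⟩
    simp [Matrix.kroneckerMap_apply, mul_add]
  map_smul' c X := by
    ext ⟨i, j⟩ ⟨i', j'⟩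
    simp [Matrix.kroneckerMap_apply, mul_comm, mul_left_comm, mul_assoc]

lemma bigCH (A : Matrix (Fin n) (Fin n) ℝ) :
    ∃ c : Fin n → ℝ, ((1 : Matrix (Fin q) (Fin q) ℝ) ⊗ₖ A) ^ n =
      ∑ k : Fin n, c k • ((1 : Matrix (Fin q) (Fin q) ℝ) ⊗ₖ A) ^ (k : ℕ) := by
  have hdeg : A.charpoly.natDegree = n := by
    rw [Matrix.charpoly_natDegree_eq_dim, Fintype.card_fin]
  have hch : A ^ n = ∑ k : Fin n, (-(A.charpoly.coeff k)) • A ^ (k : ℕ) := by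
    have h0 := Matrix.aeval_self_charpoly A
    rw [Polynomial.aeval_eq_sum_range, hdeg, Finset.sum_range_succ] at h0
    have hlead : A.charpoly.coeff n = 1 := by
      have := A.charpoly_monic
      rw [Polynomial.Monic, Polynomial.leadingCoeff, hdeg] at this
      exact this
    rw [hlead, one_smul] at h0
    have : A ^ n = -∑ i ∈ Finset.range n, A.charpoly.coeff i • A ^ i := by
      linear_combination (norm := abel) h0
    rw [this, ← Finset.sum_neg_distrib, Fin.sum_univ_eq_sum_range
      (fun k => (-(A.charpoly.coeff k)) • A ^ k)]
    exact Finset.sum_congr rfl fun i _ => by rw [neg_smul]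
  refine ⟨fun k => -(A.charpoly.coeff k), ?_⟩
  rw [kron_one_pow]
  have := congrArg (kronOneL (q := q)) hch
  simp only [map_sum, _root_.map_smul] at this
  rw [show (kronOneL (q := q)) (A ^ n) = (1 : Matrix (Fin q) (Fin q) ℝ) ⊗ₖ (A ^ n) from rfl] at this
  rw [this]
  exact Finset.sum_congr rfl fun k _ => by rw [kron_one_pow]; rfl

section VTsub

variable (A : Matrix (Fin n) (Fin n) ℝ) (B : Matrix (Fin q × Fin n) (Fin p) ℝ)

/-- Shorthand for the big matrix. -/
def bigM : Matrix (Fin q × Fin n) (Fin q × Fin n) ℝ := (1 : Matrix (Fin q) (Fin q) ℝ) ⊗ₖ A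

/-- The range of the controllability matrix. -/
def Vsub : Submodule ℝ (Fin q × Fin n → ℝ) :=
  LinearMap.range (ctrb (bigM A) B n).mulVecLin

/-- The "zero column sums" subspace, i.e. `S_n^⊥`. -/
def Tsub (q n : ℕ) : Submodule ℝ (Fin q × Fin n → ℝ) where
  carrier := {x | ∀ j, ∑ i, x (i, j) = 0}
  add_mem' := by intro a b ha hb j; simp [Finset.sum_add_distrib, ha j, hb j]
  zero_mem' := by intro j; simp
  smul_mem' := by intro c a ha j; simp [← Finset.mul_sum, ha j]

/-- Dot-product orthogonal complement. -/
def perp (U : Submodule ℝ (Fin q × Fin n → ℝ)) : Submodule ℝ (Fin q × Fin n → ℝ) where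
  carrier := {x | ∀ u ∈ U, x ⬝ᵥ u = 0}
  add_mem' := by intro a b ha hb u hu; rw [add_dotProduct, ha u hu, hb u hu]; ring
  zero_mem' := by intro u hu; simp
  smul_mem' := by intro c a ha u hu; rw [smul_dotProduct, ha u hu]; simp

lemma ctrb_col (k : Fin n) (σ : Fin p) :
    (fun x => ctrb (bigM A) B n x (k, σ)) =
      ((bigM A) ^ (k : ℕ)).mulVec (fun x => B x σ) := by
  funext x
  simp only [ctrb, Matrix.of_apply, Matrix.mul_apply]
  rfl

lemma Vsub_eq_span : Vsub A B = Submodule.span ℝ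
    (Set.range fun kσ : Fin n × Fin p =>
      ((bigM A) ^ (kσ.1 : ℕ)).mulVec (fun x => B x kσ.2)) := by
  rw [Vsub, Matrix.range_mulVecLin]
  refine congrArg _ ?_
  have key : ∀ kσ : Fin n × Fin p, (ctrb (bigM A) B n)ᵀ kσ
      = ((bigM A) ^ (kσ.1 : ℕ)).mulVec (fun x => B x kσ.2) := by
    rintro ⟨k, σ⟩
    funext x
    rw [show (ctrb (bigM A) B n)ᵀ (k, σ) x = ctrb (bigM A) B n x (k, σ) from rfl]
    exact congrFun (ctrb_col A B k σ) x
  ext y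
  constructor
  · rintro ⟨kσ, rfl⟩
    exact ⟨kσ, (key kσ).symm⟩
  · rintro ⟨kσ, rfl⟩
    exact ⟨kσ, key kσ⟩

lemma gen_mem_Vsub (k : Fin n) (σ : Fin p) :
    ((bigM A) ^ (k : ℕ)).mulVec (fun x => B x σ) ∈ Vsub A B := by
  rw [Vsub_eq_span]
  exact Submodule.subset_span ⟨(k, σ), rfl⟩

lemma Vsub_inv : ∀ v ∈ Vsub A B, (bigM A).mulVec v ∈ Vsub A B := by
  obtain ⟨c, hc⟩ := bigCH (q := q) A
  intro v hv
  rw [Vsub_eq_span] at hv ⊢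
  induction hv using Submodule.span_induction with
  | mem y hy =>
    obtain ⟨⟨k, σ⟩, rfl⟩ := hy
    rw [Matrix.mulVec_mulVec, ← pow_succ']
    by_cases h : (k : ℕ) + 1 < n
    · exact Submodule.subset_span ⟨(⟨(k : ℕ) + 1, h⟩, σ), rfl⟩
    · have hk : (k : ℕ) + 1 = n := Nat.le_antisymm k.2 (not_lt.mp h)
      rw [hk]
      show (bigM A ^ n).mulVec _ ∈ _
      rw [bigM, hc, ← bigM]
      have : (∑ j : Fin n, c j • (bigM A) ^ (j : ℕ)).mulVec (fun x => B x σ)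
          = ∑ j : Fin n, c j • ((bigM A) ^ (j : ℕ)).mulVec (fun x => B x σ) := by
        rw [show (∑ j : Fin n, c j • (bigM A) ^ (j : ℕ)).mulVec (fun x => B x σ)
            = mulVecRight (fun x => B x σ) (∑ j : Fin n, c j • (bigM A) ^ (j : ℕ)) from rfl,
          map_sum]
        exact Finset.sum_congr rfl fun j _ => by rw [_root_.map_smul]; rfl
      rw [this]
      exact Submodule.sum_mem _ fun j _ =>
        Submodule.smul_mem _ _ (Submodule.subset_span ⟨(j, σ), rfl⟩)
  | zero => simp [Matrix.mulVec_zero]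
  | add y z hy hz ihy ihz => rw [Matrix.mulVec_add]; exact Submodule.add_mem _ ihy ihz
  | smul c y hy ihy => rw [Matrix.mulVec_smul]; exact Submodule.smul_mem _ _ ihy

lemma Bcol_mem_Vsub (hn : 0 < n) (σ : Fin p) : (fun x => B x σ) ∈ Vsub A B := by
  have := gen_mem_Vsub A B ⟨0, hn⟩ σ
  simpa [Matrix.one_mulVec] using this

lemma B_mulVec_mem_Vsub (hn : 0 < n) (c : Fin p → ℝ) : B.mulVec c ∈ Vsub A B := by
  have : B.mulVec c = ∑ σ : Fin p, c σ • (fun x => B x σ) := by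
    funext x
    rw [Matrix.mulVec]
    simp [dotProduct, Finset.sum_apply, mul_comm]
  rw [this]
  exact Submodule.sum_mem _ fun σ _ => Submodule.smul_mem _ _ (Bcol_mem_Vsub A B hn σ)

lemma Tsub_inv (C : Matrix (Fin n) (Fin n) ℝ) {x : Fin q × Fin n → ℝ} (hx : x ∈ Tsub q n) :
    ((1 : Matrix (Fin q) (Fin q) ℝ) ⊗ₖ C).mulVec x ∈ Tsub q n := by
  intro j
  have : ∀ i : Fin q, (((1 : Matrix (Fin q) (Fin q) ℝ) ⊗ₖ C).mulVec x) (i, j)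
      = ∑ j', C j j' * x (i, j') := fun i => kron_one_mulVec_apply C x i j
  rw [Finset.sum_congr rfl fun i _ => this i, Finset.sum_comm]
  refine Finset.sum_eq_zero fun j' _ => ?_
  rw [← Finset.mul_sum, hx j', mul_zero]

lemma Vsub_le_Tsub (hB : ∀ σ (j : Fin n), ∑ i : Fin q, B (i, j) σ = 0) :
    Vsub A B ≤ Tsub q n := by
  rw [Vsub_eq_span, Submodule.span_le]
  rintro y ⟨⟨k, σ⟩, rfl⟩
  have hbase : (fun x => B x σ) ∈ Tsub q n := fun j => hB σ j
  exact pow_mulVec_mem (bigM A) (Tsub q n) (fun v hv => Tsub_inv (C := A) hv) (k : ℕ) hbase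

lemma perp_inv (U : Submodule ℝ (Fin q × Fin n → ℝ)) (N : Matrix (Fin q × Fin n) (Fin q × Fin n) ℝ)
    (hU : ∀ v ∈ U, N.mulVec v ∈ U) {x : Fin q × Fin n → ℝ} (hx : x ∈ perp U) :
    Nᵀ.mulVec x ∈ perp U := by
  intro u hu
  rw [dot_transpose_mulVec]
  exact hx _ (hU u hu)

lemma mem_perp_Vsub_of_gen {x : Fin q × Fin n → ℝ}
    (h : ∀ (k : Fin n) (σ : Fin p), x ⬝ᵥ ((bigM A) ^ (k : ℕ)).mulVec (fun z => B z σ) = 0) :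
    x ∈ perp (Vsub A B) := by
  intro u hu
  rw [Vsub_eq_span] at hu
  induction hu using Submodule.span_induction with
  | mem y hy => obtain ⟨⟨k, σ⟩, rfl⟩ := hy; exact h k σ
  | zero => simp
  | add y z hy hz ihy ihz => rw [dotProduct_add, ihy, ihz]; ring
  | smul c y hy ihy => rw [dotProduct_smul, ihy]; simp

end VTsub


section analytic

variable {ι κ : Type*} [Fintype ι] [DecidableEq ι] [Fintype κ] [DecidableEq κ]

lemma continuous_mulVec' {f : ℝ → Matrix ι κ ℝ} {g : ℝ → κ → ℝ}
    (hf : Continuous f) (hg : Continuous g) : Continuous fun t => (f t).mulVec (g t) :=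
  hf.matrix_mulVec hg

lemma dot_exp_pow_zero (N : Matrix ι ι ℝ) (d z : ι → ℝ) {a b : ℝ}
    (h0 : ∀ s ∈ Set.Ioo a b, d ⬝ᵥ (NormedSpace.exp (s • N)).mulVec z = 0) (k : ℕ) :
    ∀ s ∈ Set.Ioo a b, d ⬝ᵥ (NormedSpace.exp (s • N)).mulVec ((N ^ k).mulVec z) = 0 := by
  induction k with
  | zero => simpa [Matrix.one_mulVec] using h0
  | succ m ih =>
    intro s hs
    have hd1 : HasDerivAt (fun t => d ⬝ᵥ (NormedSpace.exp (t • N)).mulVec ((N ^ m).mulVec z))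
        (d ⬝ᵥ (NormedSpace.exp (s • N)).mulVec (N.mulVec ((N ^ m).mulVec z))) s := by
      have h := (dotLeftL d).hasFDerivAt.comp_hasDerivAt s
        (matExp_hasDerivAt N ((N ^ m).mulVec z) s)
      simpa [Function.comp_def] using h
    have hz : HasDerivAt (fun t => d ⬝ᵥ (NormedSpace.exp (t • N)).mulVec ((N ^ m).mulVec z))
        0 s := by
      have heq : (fun t => d ⬝ᵥ (NormedSpace.exp (t • N)).mulVec ((N ^ m).mulVec z))
          =ᶠ[nhds s] (fun _ => (0 : ℝ)) := by
        filter_upwards [Ioo_mem_nhds hs.1 hs.2] with t ht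
        exact ih t ht
      exact (hasDerivAt_const s (0 : ℝ)).congr_of_eventuallyEq heq
    have huniq := hd1.unique hz
    have : N.mulVec ((N ^ m).mulVec z) = (N ^ (m + 1)).mulVec z := by
      rw [Matrix.mulVec_mulVec, ← pow_succ']
    rw [← this]
    exact huniq

lemma eqOn_zero_of_integral_zero {f : ℝ → ℝ} (hf : Continuous f) (hnn : ∀ t, 0 ≤ f t)
    (hint : ∫ t in (0:ℝ)..1, f t = 0) : ∀ t ∈ Set.Ioo (0:ℝ) 1, f t = 0 := by
  have hii : IntervalIntegrable f volume 0 1 := hf.intervalIntegrable 0 1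
  have hae := (intervalIntegral.integral_eq_zero_iff_of_le_of_nonneg_ae zero_le_one
    (Filter.Eventually.of_forall fun t => hnn t) hii).mp hint
  have heq := MeasureTheory.Measure.eqOn_Ioc_of_ae_eq (μ := volume) hae
    hf.continuousOn continuousOn_const
  intro t ht
  exact heq (Set.Ioo_subset_Ioc_self ht)

end analytic


end

/-- the relatively actuated array `ẋᵢ = Axᵢ + Σ_σ B_{iσ}u_σ` is controllable
(every initial state can be steered in finite time to the synchronization subspace
`S_n = range(1_q ⊗ I_n)`) iff `range 𝐖 ⊇ S_n^⊥`, where `𝐖 = [𝐁 𝐀𝐁 ⋯ 𝐀^{n-1}𝐁]`,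
`𝐀 = I_q ⊗ A`. -/
theorem stmt5 (n q p : ℕ) (hq : 2 ≤ q)
    (A : Matrix (Fin n) (Fin n) ℝ)
    (B : Matrix (Fin q × Fin n) (Fin p) ℝ)
    (hB : ∀ σ (j : Fin n), ∑ i : Fin q, B (i, j) σ = 0) :
    (∀ x0 : Fin q × Fin n → ℝ, ∃ τ > (0 : ℝ), ∃ u : ℝ → Fin p → ℝ, Continuous u ∧
      ∃ v : Fin n → ℝ, ∀ i j,
        ((NormedSpace.exp (τ • ((1 : Matrix (Fin q) (Fin q) ℝ) ⊗ₖ A))).mulVec x0 +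
          ∫ t in (0 : ℝ)..τ,
            (NormedSpace.exp ((τ - t) • ((1 : Matrix (Fin q) (Fin q) ℝ) ⊗ₖ A))).mulVec
              (B.mulVec (u t))) (i, j) = v j) ↔
    (∀ x : Fin q × Fin n → ℝ,
      (∀ y : Fin q × Fin n → ℝ, (∃ w : Fin n → ℝ, ∀ i j, y (i, j) = w j) →
        ∑ z : Fin q × Fin n, x z * y z = 0) →
      ∃ α : Fin n × Fin p → ℝ,
        (ctrb ((1 : Matrix (Fin q) (Fin q) ℝ) ⊗ₖ A) B n).mulVec α = x) := by
  rcases Nat.eq_zero_or_pos n with hn | hn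
  · subst hn
    constructor
    · intro _ x _
      exact ⟨0, funext fun z => z.2.elim0⟩
    · intro _ x0
      exact ⟨1, one_pos, fun _ _ => 0, continuous_const, Fin.elim0, fun i j => j.elim0⟩
  have hMrw : (1 : Matrix (Fin q) (Fin q) ℝ) ⊗ₖ A = bigM A := rfl
  constructor
  · -- controllable → range condition
    intro hL x hx
    have hxT : x ∈ Tsub q n := by
      intro j0
      have hy : ∃ w : Fin n → ℝ,
          ∀ i j, (fun z : Fin q × Fin n => if z.2 = j0 then (1:ℝ) else 0) (i, j) = w j :=
        ⟨fun j => if j = j0 then 1 else 0, fun i j => rfl⟩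
      have h := hx (fun z : Fin q × Fin n => if z.2 = j0 then (1:ℝ) else 0) hy
      rw [Fintype.sum_prod_type] at h
      simpa [mul_ite] using h
    classical
    let e : (Fin q × Fin n → ℝ) ≃ₗ[ℝ] EuclideanSpace ℝ (Fin q × Fin n) :=
      (WithLp.linearEquiv 2 ℝ (Fin q × Fin n → ℝ)).symm
    have hinner : ∀ a b : Fin q × Fin n → ℝ, (inner ℝ (e a) (e b) : ℝ) = a ⬝ᵥ b := by
      intro a b
      rw [PiLp.inner_apply]
      simp only [dotProduct]; refine Finset.sum_congr rfl fun i _ => ?_; simp [e, mul_comm]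
    let V' : Submodule ℝ (EuclideanSpace ℝ (Fin q × Fin n)) := (Vsub A B).map e.toLinearMap
    let v' := V'.orthogonalProjection (e x)
    let xv : Fin q × Fin n → ℝ := e.symm (v' : EuclideanSpace ℝ (Fin q × Fin n))
    have hxvV : xv ∈ Vsub A B := by
      obtain ⟨uu, hu1, hu2⟩ := v'.2
      have hxu : xv = uu := by
        show e.symm _ = uu
        rw [← hu2]
        exact e.symm_apply_apply uu
      rw [hxu]; exact hu1
    set w := x - xv with hw
    have hwperp : w ∈ perp (Vsub A B) := by
      intro uv huv
      have horth := V'.sub_starProjection_mem_orthogonal (e x)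
      have heu : e uv ∈ V' := Submodule.mem_map_of_mem huv
      have h0 := (Submodule.mem_orthogonal _ _).mp horth (e uv) heu
      have hew : e w = e x - (v' : EuclideanSpace ℝ (Fin q × Fin n)) := by
        rw [hw, map_sub, e.apply_symm_apply]
      rw [dotProduct_comm, ← hinner uv w, hew]
      exact h0
    have hwT : w ∈ Tsub q n := Submodule.sub_mem _ hxT (Vsub_le_Tsub A B hB hxvV)
    obtain ⟨τ, hτ, u, hu, v, hXv⟩ := hL w
    rw [hMrw] at hXv
    set M := bigM A with hM
    set μ := (NormedSpace.exp ((-τ) • Mᵀ)).mulVec w with hμ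
    have hMTinv : ∀ y ∈ Tsub q n, Mᵀ.mulVec y ∈ Tsub q n := by
      intro y hy
      rw [show Mᵀ = (1 : Matrix (Fin q) (Fin q) ℝ) ⊗ₖ Aᵀ from kron_one_transpose A]
      exact Tsub_inv Aᵀ hy
    have hMperpinv : ∀ y ∈ perp (Vsub A B), Mᵀ.mulVec y ∈ perp (Vsub A B) :=
      fun y hy => perp_inv _ M (Vsub_inv A B) hy
    have hμT : μ ∈ Tsub q n := exp_mulVec_mem Mᵀ _ hMTinv (-τ) hwT
    have hμperp : μ ∈ perp (Vsub A B) := exp_mulVec_mem Mᵀ _ hMperpinv (-τ) hwperp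
    set X := (NormedSpace.exp (τ • M)).mulVec w +
        ∫ t in (0:ℝ)..τ, (NormedSpace.exp ((τ - t) • M)).mulVec (B.mulVec (u t)) with hX
    have h1 : μ ⬝ᵥ X = 0 := by
      have hXz : ∀ z : Fin q × Fin n, X z = v z.2 := fun z => hXv z.1 z.2
      have h2 : μ ⬝ᵥ X = ∑ z : Fin q × Fin n, μ z * v z.2 := by
        simp only [dotProduct]
        exact Finset.sum_congr rfl fun z _ => by rw [hXz z]
      have h3 : ∑ z : Fin q × Fin n, μ z * v z.2 = ∑ j : Fin n, (∑ i : Fin q, μ (i, j)) * v j := by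
        rw [Fintype.sum_prod_type, Finset.sum_comm]
        exact Finset.sum_congr rfl fun j _ => by simp [Finset.sum_mul]
      rw [h2, h3]
      exact Finset.sum_eq_zero fun j _ => by rw [hμT j, zero_mul]
    have h2 : μ ⬝ᵥ X = w ⬝ᵥ w := by
      have hY : μ ⬝ᵥ ((NormedSpace.exp (τ • M)).mulVec w) = w ⬝ᵥ w := by
        rw [← dot_transpose_mulVec (NormedSpace.exp (τ • M)) μ w, matExp_transpose, hμ,
          matExp_cancel Mᵀ τ w]
      have hcont : Continuous fun t => (NormedSpace.exp ((τ - t) • M)).mulVec (B.mulVec (u t)) :=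
        (matExp_continuous M τ).matrix_mulVec (continuous_const.matrix_mulVec hu)
      have hii : IntervalIntegrable
          (fun t => (NormedSpace.exp ((τ - t) • M)).mulVec (B.mulVec (u t)))
          MeasureTheory.volume 0 τ := hcont.intervalIntegrable 0 τ
      have hswap := (dotLeftL μ).intervalIntegral_comp_comm hii
      have hZ : μ ⬝ᵥ (∫ t in (0:ℝ)..τ,
          (NormedSpace.exp ((τ - t) • M)).mulVec (B.mulVec (u t))) = 0 := by
        rw [show μ ⬝ᵥ (∫ t in (0:ℝ)..τ,
            (NormedSpace.exp ((τ - t) • M)).mulVec (B.mulVec (u t)))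
            = dotLeftL μ (∫ t in (0:ℝ)..τ,
              (NormedSpace.exp ((τ - t) • M)).mulVec (B.mulVec (u t))) from rfl, ← hswap]
        have hzero : ∀ t, dotLeftL μ
            ((NormedSpace.exp ((τ - t) • M)).mulVec (B.mulVec (u t))) = 0 := by
          intro t
          rw [dotLeftL_apply, ← dot_transpose_mulVec (NormedSpace.exp ((τ - t) • M)) μ
            (B.mulVec (u t)), matExp_transpose]
          exact (exp_mulVec_mem Mᵀ _ hMperpinv (τ - t) hμperp) _ (B_mulVec_mem_Vsub A B hn (u t))
        rw [intervalIntegral.integral_congr (g := fun _ => (0:ℝ)) (fun t _ => hzero t)]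
        simp
      rw [hX, dotProduct_add, hY, hZ, add_zero]
    have hw0 : w = 0 := dotProduct_self_eq_zero.mp (h2.symm.trans h1)
    have hxV : x ∈ Vsub A B := by
      have hxx : x = xv := by
        have := sub_eq_zero.mp (hw ▸ hw0 : x - xv = 0)
        exact this
      rw [hxx]; exact hxvV
    obtain ⟨α, hα⟩ := LinearMap.mem_range.mp hxV
    refine ⟨α, ?_⟩
    rw [← Matrix.mulVecLin_apply]
    exact hα
  · -- range condition → controllable
    intro hR x0
    have hTleV : ∀ y ∈ Tsub q n, y ∈ Vsub A B := by
      intro y hy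
      have hant : ∀ y' : Fin q × Fin n → ℝ, (∃ w' : Fin n → ℝ, ∀ i j, y' (i, j) = w' j) →
          ∑ z : Fin q × Fin n, y z * y' z = 0 := by
        rintro y' ⟨w', hw'⟩
        have hzz : ∀ z : Fin q × Fin n, y z * y' z = y z * w' z.2 := fun z => by
          rw [hw' z.1 z.2]
        have h3 : ∑ z : Fin q × Fin n, y z * w' z.2
            = ∑ j : Fin n, (∑ i : Fin q, y (i, j)) * w' j := by
          rw [Fintype.sum_prod_type, Finset.sum_comm]
          exact Finset.sum_congr rfl fun j _ => by simp [Finset.sum_mul]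
        rw [Finset.sum_congr rfl fun z _ => hzz z, h3]
        exact Finset.sum_eq_zero fun j _ => by rw [hy j, zero_mul]
      obtain ⟨α, hα⟩ := hR y hant
      exact LinearMap.mem_range.mpr ⟨α, by rw [Matrix.mulVecLin_apply]; exact hα⟩
    refine ⟨1, one_pos, ?_⟩
    simp only [hMrw]
    set M := bigM A with hM
    set y := (NormedSpace.exp ((1:ℝ) • M)).mulVec x0 with hy
    set vbar : Fin n → ℝ := fun j => (∑ i, y (i, j)) / q with hvbar
    set w : Fin q × Fin n → ℝ := fun z => y z - vbar z.2 with hwdef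
    have hq0 : (q:ℝ) ≠ 0 := Nat.cast_ne_zero.mpr (by omega)
    have hwT : w ∈ Tsub q n := by
      intro j
      have hwi : ∀ i : Fin q, w (i, j) = y (i, j) - vbar j := fun i => rfl
      rw [Finset.sum_congr rfl fun i _ => hwi i, Finset.sum_sub_distrib, Finset.sum_const,
        Finset.card_univ, Fintype.card_fin, nsmul_eq_mul]
      simp only [hvbar]
      rw [mul_div_cancel₀ _ hq0, sub_self]
    have hwV := hTleV w hwT
    set P : ℝ → Matrix (Fin q × Fin n) (Fin p) ℝ :=
      fun t => NormedSpace.exp ((1 - t) • M) * B with hP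
    have hPc : Continuous P := (matExp_continuous M 1).matrix_mul continuous_const
    set Φ : ℝ → Matrix (Fin q × Fin n) (Fin q × Fin n) ℝ := fun t => P t * (P t)ᵀ with hΦ
    have hΦc : Continuous Φ := hPc.matrix_mul hPc.matrix_transpose
    have hintg : ∀ z : Fin q × Fin n → ℝ,
        Continuous fun t => (Φ t).mulVec z := fun z => hΦc.matrix_mulVec continuous_const
    have hii : ∀ z : Fin q × Fin n → ℝ, IntervalIntegrable (fun t => (Φ t).mulVec z)
        MeasureTheory.volume 0 1 := fun z => (hintg z).intervalIntegrable 0 1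
    let g : (Fin q × Fin n → ℝ) →ₗ[ℝ] (Fin q × Fin n → ℝ) :=
      { toFun := fun z => ∫ t in (0:ℝ)..1, (Φ t).mulVec z
        map_add' := by
          intro a b
          rw [← intervalIntegral.integral_add (hii a) (hii b)]
          exact intervalIntegral.integral_congr fun t _ => by rw [Matrix.mulVec_add]
        map_smul' := by
          intro c a
          rw [RingHom.id_apply, ← intervalIntegral.integral_smul]
          exact intervalIntegral.integral_congr fun t _ => by rw [Matrix.mulVec_smul] }
    have hgdef : ∀ z : Fin q × Fin n → ℝ, g z = ∫ t in (0:ℝ)..1, (Φ t).mulVec z :=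
      fun z => rfl
    have hΦsplit : ∀ (z : Fin q × Fin n → ℝ) (t : ℝ), (Φ t).mulVec z
        = (NormedSpace.exp ((1 - t) • M)).mulVec (B.mulVec ((P t)ᵀ.mulVec z)) := by
      intro z t
      show (P t * (P t)ᵀ).mulVec z = _
      rw [← Matrix.mulVec_mulVec]
      have hPt : P t = NormedSpace.exp ((1 - t) • M) * B := rfl
      rw [hPt, ← Matrix.mulVec_mulVec]
    have hgmem : ∀ z : Fin q × Fin n → ℝ, g z ∈ Vsub A B := by
      intro z
      rw [hgdef]
      refine intervalIntegral_mem _ (Vsub A B).closed_of_finiteDimensional (hii z) fun t => ?_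
      rw [hΦsplit]
      exact exp_mulVec_mem M _ (Vsub_inv A B) _ (B_mulVec_mem_Vsub A B hn _)
    have hψ : ∀ (z : Fin q × Fin n → ℝ) (t : ℝ), (P t)ᵀ.mulVec z
        = Bᵀ.mulVec ((NormedSpace.exp ((1 - t) • Mᵀ)).mulVec z) := by
      intro z t
      have hPt : (P t)ᵀ = Bᵀ * (NormedSpace.exp ((1 - t) • M))ᵀ := Matrix.transpose_mul _ _
      rw [hPt, ← Matrix.mulVec_mulVec, matExp_transpose]
    have hdot : ∀ (z : Fin q × Fin n → ℝ) (t : ℝ), z ⬝ᵥ (Φ t).mulVec z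
        = ((P t)ᵀ.mulVec z) ⬝ᵥ ((P t)ᵀ.mulVec z) := by
      intro z t
      show z ⬝ᵥ (P t * (P t)ᵀ).mulVec z = _
      rw [← Matrix.mulVec_mulVec]
      exact (dot_transpose_mulVec (P t) z ((P t)ᵀ.mulVec z)).symm
    have hker : ∀ z ∈ Vsub A B, g z = 0 → z = 0 := by
      intro z hzV hg0
      have hψc : Continuous fun t => (P t)ᵀ.mulVec z :=
        hPc.matrix_transpose.matrix_mulVec continuous_const
      have hint0 : ∫ t in (0:ℝ)..1, ((P t)ᵀ.mulVec z) ⬝ᵥ ((P t)ᵀ.mulVec z) = 0 := by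
        have hswap := (dotLeftL z).intervalIntegral_comp_comm (hii z)
        have h6 : ∫ t in (0:ℝ)..1, z ⬝ᵥ (Φ t).mulVec z = z ⬝ᵥ g z := hswap
        rw [hg0, dotProduct_zero] at h6
        have h7 : ∫ t in (0:ℝ)..1, ((P t)ᵀ.mulVec z) ⬝ᵥ ((P t)ᵀ.mulVec z)
            = ∫ t in (0:ℝ)..1, z ⬝ᵥ (Φ t).mulVec z :=
          intervalIntegral.integral_congr fun t _ => (hdot z t).symm
        exact h7.trans h6
      have hcont2 : Continuous fun t => ((P t)ᵀ.mulVec z) ⬝ᵥ ((P t)ᵀ.mulVec z) := by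
        show Continuous fun t => ∑ zz : Fin p, ((P t)ᵀ.mulVec z) zz * ((P t)ᵀ.mulVec z) zz
        exact continuous_finset_sum _ fun zz _ =>
          ((continuous_apply zz).comp hψc).mul ((continuous_apply zz).comp hψc)
      have hzero := eqOn_zero_of_integral_zero hcont2
        (fun t => Finset.sum_nonneg fun zz _ => mul_self_nonneg _) hint0
      have hψ0 : ∀ s ∈ Set.Ioo (0:ℝ) 1,
          Bᵀ.mulVec ((NormedSpace.exp (s • Mᵀ)).mulVec z) = 0 := by
        intro s hs
        have ht : (1 - s) ∈ Set.Ioo (0:ℝ) 1 := ⟨by linarith [hs.2], by linarith [hs.1]⟩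
        have h5 := dotProduct_self_eq_zero.mp (hzero (1-s) ht)
        rw [hψ z (1-s)] at h5
        rw [show (1:ℝ) - (1 - s) = s by ring] at h5
        exact h5
      have hcomp : ∀ σ : Fin p, ∀ s ∈ Set.Ioo (0:ℝ) 1,
          (fun x => B x σ) ⬝ᵥ ((NormedSpace.exp (s • Mᵀ)).mulVec z) = 0 := by
        intro σ s hs
        exact congrFun (hψ0 s hs) σ
      set ζ := (NormedSpace.exp ((1/2 : ℝ) • Mᵀ)).mulVec z with hζ
      have hζperp : ζ ∈ perp (Vsub A B) := by
        apply mem_perp_Vsub_of_gen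
        intro k σ
        have hk2 := dot_exp_pow_zero Mᵀ (fun x => B x σ) z (hcomp σ) (k : ℕ)
          (1/2) ⟨by norm_num, by norm_num⟩
        have hcomm : NormedSpace.exp ((1/2 : ℝ) • Mᵀ) * Mᵀ ^ (k:ℕ)
            = Mᵀ ^ (k:ℕ) * NormedSpace.exp ((1/2 : ℝ) • Mᵀ) :=
          ((((Commute.refl Mᵀ).pow_left (k:ℕ)).smul_right (1/2 : ℝ)).exp_right).eq.symm
        calc ζ ⬝ᵥ (bigM A ^ (k:ℕ)).mulVec (fun x => B x σ)
            = ((bigM A ^ (k:ℕ))ᵀ.mulVec ζ) ⬝ᵥ (fun x => B x σ) :=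
              (dot_transpose_mulVec _ _ _).symm
          _ = (fun x => B x σ) ⬝ᵥ ((bigM A ^ (k:ℕ))ᵀ.mulVec ζ) := dotProduct_comm _ _
          _ = 0 := by
              rw [Matrix.transpose_pow, hζ, Matrix.mulVec_mulVec, ← hM, ← hcomm,
                ← Matrix.mulVec_mulVec]
              exact hk2
      have hzperp : z ∈ perp (Vsub A B) := by
        have hzz : z = (NormedSpace.exp ((-(1/2) : ℝ) • Mᵀ)).mulVec ζ := by
          rw [hζ]
          have hcc := matExp_cancel Mᵀ (-(1/2 : ℝ)) z
          rw [neg_neg] at hcc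
          exact hcc.symm
        rw [hzz]
        exact exp_mulVec_mem Mᵀ _ (fun yy hyy => perp_inv _ M (Vsub_inv A B) hyy) _ hζperp
      exact dotProduct_self_eq_zero.mp (hzperp z hzV)
    let gr : Vsub A B →ₗ[ℝ] Vsub A B := g.restrict fun x _ => hgmem x
    have hinj : Function.Injective gr := by
      rw [← LinearMap.ker_eq_bot, Submodule.eq_bot_iff]
      intro zz hzz
      have h8 : g (zz : Fin q × Fin n → ℝ) = 0 := by
        have h9 := congrArg Subtype.val (LinearMap.mem_ker.mp hzz)
        rwa [LinearMap.restrict_apply] at h9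
      exact Subtype.ext (hker zz zz.2 h8)
    obtain ⟨zs, hzs⟩ := LinearMap.injective_iff_surjective.mp hinj ⟨-w, Submodule.neg_mem _ hwV⟩
    set z := (zs : Fin q × Fin n → ℝ) with hz
    have hgz : g z = -w := by
      have h9 := congrArg Subtype.val hzs
      rwa [LinearMap.restrict_apply] at h9
    set ufun : ℝ → Fin p → ℝ :=
      fun t => Bᵀ.mulVec ((NormedSpace.exp ((1 - t) • Mᵀ)).mulVec z) with hufun
    refine ⟨ufun, ?_, vbar, ?_⟩
    · exact continuous_const.matrix_mulVec
        ((matExp_continuous Mᵀ 1).matrix_mulVec continuous_const)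
    · intro i j
      have hint : (∫ t in (0:ℝ)..1,
          (NormedSpace.exp ((1 - t) • M)).mulVec (B.mulVec (ufun t))) = g z := by
        rw [hgdef]
        refine intervalIntegral.integral_congr fun t _ => ?_
        rw [hΦsplit z t, hψ z t]
      rw [hint, hgz]
      have h10 : (y + -w) (i, j) = y (i, j) - w (i, j) := by
        simp [sub_eq_add_neg]
      rw [h10]
      show y (i, j) - (y (i, j) - vbar j) = vbar j
      ring
end

section
/- With 𝐀 = I_q ⊗ A, 𝐁 ∈ ℝ^{qn×p} satisfying [1_q^T/√q ⊗ I_n]𝐁 = 0, and D ∈ ℝ^{q×(q-1)} an orthonormal basis of the orthogonal complement of 1_q, define the reduced pair 𝐀_r = I_{q-1} ⊗ A and 𝐁_r = [D^T ⊗ I_n]𝐁. Then the pair (𝐀_r, 𝐁_r) is controllable if and only if range 𝐖 ⊇ S_n^⊥, where 𝐖 = [𝐁 𝐀𝐁 ⋯ 𝐀^{n-1}𝐁] and S_n = range(1_q ⊗ I_n). -/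
open Matrix Kronecker

lemma one_kron_pow {m n : ℕ} (A : Matrix (Fin n) (Fin n) ℝ) (k : ℕ) :
    ((1 : Matrix (Fin m) (Fin m) ℝ) ⊗ₖ A) ^ k
      = (1 : Matrix (Fin m) (Fin m) ℝ) ⊗ₖ (A ^ k) := by
  induction k with
  | zero => simp [Matrix.one_kronecker_one]
  | succ k ih => rw [pow_succ, ih, ← Matrix.mul_kronecker_mul, one_mul, pow_succ]

lemma DDt {q : ℕ} (hq : 2 ≤ q) (D : Matrix (Fin q) (Fin (q - 1)) ℝ)
    (hD1 : Dᵀ * D = 1) (hD2 : ∀ c, ∑ i : Fin q, D i c = 0) (i i' : Fin q) :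
    ∑ c, D i c * D i' c = (if i = i' then (1:ℝ) else 0) - (q:ℝ)⁻¹ := by
  have hq1 : 1 ≤ q := le_trans (by norm_num) hq
  have hq0 : (0:ℝ) < q := by exact_mod_cast lt_of_lt_of_le (by norm_num) hq
  set s : ℝ := (Real.sqrt q)⁻¹ with hs
  have hss : s * s = (q:ℝ)⁻¹ := by
    rw [hs, ← mul_inv, Real.mul_self_sqrt hq0.le]
  set S : Matrix (Fin q) Unit ℝ := Matrix.of (fun _ _ => s) with hS
  have e : Fin q ≃ Fin (q - 1) ⊕ Unit := by
    apply Fintype.equivOfCardEq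
    simp [Nat.sub_add_cancel hq1]
  have hMtM : fromRows Dᵀ Sᵀ * fromCols D S = 1 := by
    rw [fromRows_mul_fromCols, ← fromBlocks_one]
    have h1 : Dᵀ * S = 0 := by
      ext c u
      simp [hS, mul_apply, transpose_apply, ← Finset.sum_mul, hD2]
    have h2 : Sᵀ * D = 0 := by
      ext u c
      simp [hS, mul_apply, transpose_apply, ← Finset.mul_sum, hD2]
    have h3 : Sᵀ * S = 1 := by
      ext u u'
      simp [hS, mul_apply, transpose_apply, hss, one_apply,
        Finset.card_univ, mul_inv_cancel₀ (ne_of_gt hq0)]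
    rw [hD1, h1, h2, h3]
  have hMMt : fromCols D S * fromRows Dᵀ Sᵀ = 1 :=
    (fromCols_mul_fromRows_eq_one_comm e D S Dᵀ Sᵀ).mpr hMtM
  rw [fromCols_mul_fromRows] at hMMt
  have := congrFun (congrFun hMMt i) i'
  simp [mul_apply, transpose_apply, hS, hss, one_apply] at this
  linarith [this]

/-- the commutation identity giving `𝐖_r = (Dᵀ ⊗ I) 𝐖`. -/
lemma ctrb_reduced {n q p : ℕ}
    (A : Matrix (Fin n) (Fin n) ℝ)
    (B : Matrix (Fin q × Fin n) (Fin p) ℝ)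
    (D : Matrix (Fin q) (Fin (q - 1)) ℝ) :
    ctrb ((1 : Matrix (Fin (q - 1)) (Fin (q - 1)) ℝ) ⊗ₖ A)
        ((Dᵀ ⊗ₖ (1 : Matrix (Fin n) (Fin n) ℝ)) * B) n
      = (Dᵀ ⊗ₖ (1 : Matrix (Fin n) (Fin n) ℝ)) *
        ctrb ((1 : Matrix (Fin q) (Fin q) ℝ) ⊗ₖ A) B n := by
  have key : ∀ r : ℕ,
      ((1 : Matrix (Fin (q - 1)) (Fin (q - 1)) ℝ) ⊗ₖ A) ^ r *
        ((Dᵀ ⊗ₖ (1 : Matrix (Fin n) (Fin n) ℝ)) * B)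
      = (Dᵀ ⊗ₖ (1 : Matrix (Fin n) (Fin n) ℝ)) *
        (((1 : Matrix (Fin q) (Fin q) ℝ) ⊗ₖ A) ^ r * B) := by
    intro r
    rw [one_kron_pow, one_kron_pow, ← Matrix.mul_assoc, ← Matrix.mul_assoc,
      ← Matrix.mul_kronecker_mul, ← Matrix.mul_kronecker_mul]
    simp
  ext x rσ
  obtain ⟨r, σ⟩ := rσ
  have := congrFun (congrFun (key r) x) σ
  simp only [ctrb, Matrix.of_apply, Matrix.mul_apply] at this ⊢
  rw [this]

/-- zero block-column sums of `𝐖`. -/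
lemma W_rowsum {n q p : ℕ}
    (A : Matrix (Fin n) (Fin n) ℝ)
    (B : Matrix (Fin q × Fin n) (Fin p) ℝ)
    (hB : ∀ σ (j : Fin n), ∑ i : Fin q, B (i, j) σ = 0)
    (r : Fin n) (σ : Fin p) (j : Fin n) :
    ∑ i : Fin q, ctrb ((1 : Matrix (Fin q) (Fin q) ℝ) ⊗ₖ A) B n (i, j) (r, σ) = 0 := by
  simp only [ctrb, Matrix.of_apply, one_kron_pow, Matrix.mul_apply,
    Matrix.kroneckerMap_apply, Matrix.one_apply, Fintype.sum_prod_type]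
  simp only [ite_mul, one_mul, zero_mul]
  rw [Finset.sum_comm]
  refine (Finset.sum_congr rfl fun i' _ => Finset.sum_comm).trans ?_
  simp only [Finset.sum_ite_eq', Finset.mem_univ, if_true]
  rw [Finset.sum_comm]
  refine Finset.sum_eq_zero fun j' _ => ?_
  rw [← Finset.mul_sum, hB, mul_zero]

/-- vectors with zero block sums are recovered by `(D ⊗ I)(Dᵀ ⊗ I)`. -/
lemma reconstruct {n q : ℕ} (hq : 2 ≤ q)
    (D : Matrix (Fin q) (Fin (q - 1)) ℝ)
    (hD1 : Dᵀ * D = 1) (hD2 : ∀ c, ∑ i : Fin q, D i c = 0)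
    (v : Fin q × Fin n → ℝ) (hv : ∀ j, ∑ i : Fin q, v (i, j) = 0) :
    (D ⊗ₖ (1 : Matrix (Fin n) (Fin n) ℝ)).mulVec
      ((Dᵀ ⊗ₖ (1 : Matrix (Fin n) (Fin n) ℝ)).mulVec v) = v := by
  have hq0 : ((q:ℝ))⁻¹ ≠ 0 := by
    have : (0:ℝ) < q := by exact_mod_cast lt_of_lt_of_le (by norm_num) hq
    positivity
  funext z
  obtain ⟨i, j⟩ := z
  simp only [Matrix.mulVec, dotProduct, Matrix.kroneckerMap_apply, Matrix.one_apply,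
    Matrix.transpose_apply, Fintype.sum_prod_type, mul_ite, mul_one, mul_zero,
    ite_mul, zero_mul, Finset.sum_ite_eq, Finset.mem_univ, if_true]
  -- goal: ∑ c, D i c * ∑ i', D i' c * v (i', j) = v (i, j)
  have : ∀ c, D i c * ∑ i' : Fin q, D i' c * v (i', j)
      = ∑ i' : Fin q, (D i c * D i' c) * v (i', j) := by
    intro c; rw [Finset.mul_sum]; exact Finset.sum_congr rfl fun _ _ => by ring
  calc (∑ c, D i c * ∑ i' : Fin q, D i' c * v (i', j))
      = ∑ i' : Fin q, (∑ c, D i c * D i' c) * v (i', j) := by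
        simp only [this]
        rw [Finset.sum_comm]
        exact Finset.sum_congr rfl fun _ _ => (Finset.sum_mul _ _ _).symm
    _ = ∑ i' : Fin q, ((if i = i' then (1:ℝ) else 0) - (q:ℝ)⁻¹) * v (i', j) := by
        exact Finset.sum_congr rfl fun i' _ => by rw [DDt hq D hD1 hD2]
    _ = v (i, j) := by
        simp only [sub_mul, ite_mul, one_mul, zero_mul, Finset.sum_sub_distrib,
          Finset.sum_ite_eq, Finset.mem_univ, if_true, ← Finset.mul_sum, hv, mul_zero, sub_zero]

/-- the orthogonality hypothesis is equivalent to zero block sums. -/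
lemma orth_iff {n q : ℕ} (x : Fin q × Fin n → ℝ) :
    (∀ y : Fin q × Fin n → ℝ, (∃ w : Fin n → ℝ, ∀ i j, y (i, j) = w j) →
        ∑ z : Fin q × Fin n, x z * y z = 0) ↔ ∀ j, ∑ i : Fin q, x (i, j) = 0 := by
  constructor
  · intro h j
    have := h (fun z => if z.2 = j then 1 else 0)
      ⟨fun j' => if j' = j then 1 else 0, fun _ _ => rfl⟩
    simpa [Fintype.sum_prod_type, mul_ite, mul_one, mul_zero, Finset.sum_ite_eq,
      Finset.sum_comm (f := fun a b => if b = j then x (a,b) else 0)] using this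
  · intro h y ⟨w, hw⟩
    calc ∑ z : Fin q × Fin n, x z * y z
        = ∑ j : Fin n, (∑ i : Fin q, x (i, j)) * w j := by
          rw [Fintype.sum_prod_type, Finset.sum_comm]
          exact Finset.sum_congr rfl fun j _ => by
            rw [Finset.sum_mul]; exact Finset.sum_congr rfl fun i _ => by rw [hw]
      _ = 0 := by simp [h]

/-- with `𝐀 = I_q ⊗ A`, `𝐁` of class 𝒢ₙ (zero block-column sums, i.e.
`[Sᵀ ⊗ I_n]𝐁 = 0` with `S = 1_q/√q`), and `D` an orthonormal basis of `1_q^⊥`, the reduced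
pair `(𝐀_r, 𝐁_r) = (I_{q-1} ⊗ A, [Dᵀ ⊗ I_n]𝐁)` is controllable iff
`range 𝐖 ⊇ S_n^⊥`. -/
theorem stmt6 (n q p : ℕ) (hq : 2 ≤ q)
    (A : Matrix (Fin n) (Fin n) ℝ)
    (B : Matrix (Fin q × Fin n) (Fin p) ℝ)
    (hB : ∀ σ (j : Fin n), ∑ i : Fin q, B (i, j) σ = 0)
    (D : Matrix (Fin q) (Fin (q - 1)) ℝ)
    (hD1 : Dᵀ * D = 1)
    (hD2 : ∀ c, ∑ i : Fin q, D i c = 0) :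
    Function.Surjective
      (ctrb ((1 : Matrix (Fin (q - 1)) (Fin (q - 1)) ℝ) ⊗ₖ A)
        ((Dᵀ ⊗ₖ (1 : Matrix (Fin n) (Fin n) ℝ)) * B) n).mulVec ↔
    (∀ x : Fin q × Fin n → ℝ,
      (∀ y : Fin q × Fin n → ℝ, (∃ w : Fin n → ℝ, ∀ i j, y (i, j) = w j) →
        ∑ z : Fin q × Fin n, x z * y z = 0) →
      ∃ α : Fin n × Fin p → ℝ,
        (ctrb ((1 : Matrix (Fin q) (Fin q) ℝ) ⊗ₖ A) B n).mulVec α = x) := by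
  set W := ctrb ((1 : Matrix (Fin q) (Fin q) ℝ) ⊗ₖ A) B n with hW
  have hred := ctrb_reduced A B D
  constructor
  · intro hsurj x hx
    rw [orth_iff] at hx
    obtain ⟨α, hα⟩ := hsurj ((Dᵀ ⊗ₖ (1 : Matrix (Fin n) (Fin n) ℝ)).mulVec x)
    refine ⟨α, ?_⟩
    rw [hred, ← Matrix.mulVec_mulVec] at hα
    have hvsum : ∀ j, ∑ i : Fin q, (W.mulVec α) (i, j) = 0 := by
      intro j
      simp only [Matrix.mulVec, dotProduct]
      rw [Finset.sum_comm]
      refine Finset.sum_eq_zero fun c _ => ?_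
      rw [← Finset.sum_mul]
      obtain ⟨r, σ⟩ := c
      rw [hW]
      rw [W_rowsum A B hB r σ j, zero_mul]
    calc W.mulVec α
        = (D ⊗ₖ (1 : Matrix (Fin n) (Fin n) ℝ)).mulVec
            ((Dᵀ ⊗ₖ (1 : Matrix (Fin n) (Fin n) ℝ)).mulVec (W.mulVec α)) :=
          (reconstruct hq D hD1 hD2 _ hvsum).symm
      _ = (D ⊗ₖ (1 : Matrix (Fin n) (Fin n) ℝ)).mulVec
            ((Dᵀ ⊗ₖ (1 : Matrix (Fin n) (Fin n) ℝ)).mulVec x) := by rw [hα]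
      _ = x := reconstruct hq D hD1 hD2 x hx
  · intro h z
    have hx : ∀ j, ∑ i : Fin q,
        ((D ⊗ₖ (1 : Matrix (Fin n) (Fin n) ℝ)).mulVec z) (i, j) = 0 := by
      intro j
      simp only [Matrix.mulVec, dotProduct]
      rw [Finset.sum_comm]
      refine Finset.sum_eq_zero fun c _ => ?_
      rw [← Finset.sum_mul]
      obtain ⟨cc, jj⟩ := c
      by_cases hjj : j = jj <;>
        simp [Matrix.kroneckerMap_apply, Matrix.one_apply, hjj, hD2]
    obtain ⟨α, hα⟩ := h ((D ⊗ₖ (1 : Matrix (Fin n) (Fin n) ℝ)).mulVec z)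
      ((orth_iff _).mpr hx)
    refine ⟨α, ?_⟩
    rw [hred, ← Matrix.mulVec_mulVec, ← hW, hα, Matrix.mulVec_mulVec,
      ← Matrix.mul_kronecker_mul, hD1, Matrix.one_mul, Matrix.one_kronecker_one,
      Matrix.one_mulVec]
end

section
/- Let A ∈ ℝ^{n×n} and let μ_1,...,μ_m be the distinct eigenvalues of A* with V_κ a full-column-rank matrix whose columns span null(A* − μ_κ I_n). For an array 𝐀 = I_q ⊗ A, 𝐁 ∈ ℂ^{qn×p} with [1_q^T ⊗ I_n]𝐁 = 0 and 𝐖 = [𝐁 𝐀𝐁 ⋯ 𝐀^{n-1}𝐁], the following are equivalent: (i) range 𝐖 ⊇ S_n^⊥; (ii) for every κ = 1,...,m, range([I_q ⊗ V_κ*]𝐁) ⊇ S_{d_κ}^⊥, where d_κ is the geometric multiplicity of μ_κ. -/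
open Matrix Kronecker

/-- Controllability matrix `[B  MB  ⋯  M^{N-1}B]` over ℂ. -/
noncomputable def ctrbC {ι J : Type*} [Fintype ι] [DecidableEq ι]
    (M : Matrix ι ι ℂ) (B : Matrix ι J ℂ) (N : ℕ) : Matrix ι (Fin N × J) ℂ :=
  Matrix.of fun x rσ => ((M ^ (rσ.1 : ℕ)) * B) x rσ.2

namespace Stmt7Aux

lemma fredholm {ι J : Type*} [Fintype ι] [DecidableEq ι] [Fintype J] [DecidableEq J]
    (M : Matrix ι J ℂ) (x : ι → ℂ) :
    (∃ α, M.mulVec α = x) ↔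
      ∀ z : ι → ℂ, Mᴴ.mulVec z = 0 → ∑ i, star (z i) * x i = 0 := by
  constructor
  · rintro ⟨α, rfl⟩ z hz
    have h1 : ∑ i, star (z i) * (M.mulVec α) i = star z ⬝ᵥ M.mulVec α := rfl
    rw [h1, dotProduct_mulVec]
    have h2 : star z ᵥ* M = star (Mᴴ.mulVec z) := by
      rw [Matrix.star_mulVec, Matrix.conjTranspose_conjTranspose]
    rw [h2, hz]
    simp
  · intro h
    let f := Matrix.toEuclideanLin M
    have key : (WithLp.equiv 2 (ι → ℂ)).symm x ∈ LinearMap.range f := by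
      rw [← Submodule.orthogonal_orthogonal (LinearMap.range f)]
      rw [Submodule.mem_orthogonal]
      intro z hz
      have hMz : Mᴴ.mulVec ((WithLp.equiv 2 (ι → ℂ)) z) = 0 := by
        funext j
        have := hz (f ((WithLp.equiv 2 (J → ℂ)).symm (Pi.single j 1))) ⟨_, rfl⟩
        simp only [f, WithLp.equiv_symm_apply, Matrix.toEuclideanLin_apply_piLp_toLp] at this
        rw [PiLp.inner_apply] at this
        simp only [Matrix.mulVec_single, mul_one, RCLike.inner_apply] at this
        simp only [Matrix.mulVec, Matrix.conjTranspose_apply, dotProduct, Pi.zero_apply]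
        simpa [mul_comm] using this
      have := h ((WithLp.equiv 2 (ι → ℂ)) z) hMz
      rw [PiLp.inner_apply]
      simpa [mul_comm] using this
    obtain ⟨α, hα⟩ := key
    exact ⟨(WithLp.equiv 2 (J → ℂ)) α, congrArg (WithLp.equiv 2 (ι → ℂ)) hα⟩

lemma pow_mem_span {n : ℕ} (M : Matrix (Fin n) (Fin n) ℂ) (k : ℕ) :
    M ^ k ∈ Submodule.span ℂ (Set.range fun i : Fin n => M ^ (i : ℕ)) := by
  rcases Nat.eq_zero_or_pos n with hn | hn
  · subst hn
    have : M ^ k = 0 := Subsingleton.elim _ _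
    rw [this]; exact Submodule.zero_mem _
  set P := Submodule.span ℂ (Set.range fun i : Fin n => M ^ (i : ℕ)) with hP
  have hMn : M ^ n ∈ P := by
    have h := Matrix.aeval_self_charpoly M
    rw [Polynomial.aeval_eq_sum_range] at h
    rw [Matrix.charpoly_natDegree_eq_dim, Fintype.card_fin] at h
    rw [Finset.sum_range_succ] at h
    have hcoe : M.charpoly.coeff n = 1 := by
      have := (Matrix.charpoly_monic M).coeff_natDegree
      rwa [Matrix.charpoly_natDegree_eq_dim, Fintype.card_fin] at this
    rw [hcoe, one_smul] at h
    have : M ^ n = -∑ i ∈ Finset.range n, M.charpoly.coeff i • M ^ i := by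
      linear_combination (norm := abel) h
    rw [this]
    refine neg_mem (Submodule.sum_mem _ fun i hi => Submodule.smul_mem _ _ ?_)
    exact Submodule.subset_span ⟨⟨i, Finset.mem_range.mp hi⟩, rfl⟩
  have hmul : ∀ N ∈ P, M * N ∈ P := by
    intro N hN
    induction hN using Submodule.span_induction with
    | mem x hx =>
      obtain ⟨i, rfl⟩ := hx
      rcases Nat.lt_or_ge (i + 1) n with h | h
      · rw [← pow_succ']
        exact Submodule.subset_span ⟨⟨i + 1, h⟩, rfl⟩
      · have : (i : ℕ) + 1 = n := le_antisymm (Nat.succ_le_of_lt i.isLt) h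
        rw [← pow_succ', this]; exact hMn
    | zero => rw [mul_zero]; exact Submodule.zero_mem _
    | add x y _ _ hx hy => rw [mul_add]; exact Submodule.add_mem _ hx hy
    | smul c x _ hx => rw [mul_smul_comm]; exact Submodule.smul_mem _ _ hx
  induction k with
  | zero => exact Submodule.subset_span ⟨⟨0, hn⟩, rfl⟩
  | succ k ih => rw [pow_succ']; exact hmul _ ih

lemma kron_conjT {q n r : ℕ} (M : Matrix (Fin n) (Fin r) ℂ) :
    ((1 : Matrix (Fin q) (Fin q) ℂ) ⊗ₖ M)ᴴ = (1 : Matrix (Fin q) (Fin q) ℂ) ⊗ₖ Mᴴ := by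
  ext ⟨i, j⟩ ⟨i', j'⟩
  simp [Matrix.conjTranspose_apply, Matrix.kroneckerMap_apply, Matrix.one_apply, eq_comm]
  aesop

lemma kron_pow {q n : ℕ} (M : Matrix (Fin n) (Fin n) ℂ) (k : ℕ) :
    ((1 : Matrix (Fin q) (Fin q) ℂ) ⊗ₖ M) ^ k = (1 : Matrix (Fin q) (Fin q) ℂ) ⊗ₖ (M ^ k) := by
  induction k with
  | zero => simp [Matrix.one_kronecker_one]
  | succ k ih => rw [pow_succ, pow_succ, ih, ← Matrix.mul_kronecker_mul, one_mul]

lemma kron_mulVec {q n r : ℕ} (M : Matrix (Fin n) (Fin r) ℂ) (z : Fin q × Fin r → ℂ)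
    (i : Fin q) (j : Fin n) :
    ((1 : Matrix (Fin q) (Fin q) ℂ) ⊗ₖ M).mulVec z (i, j)
      = M.mulVec (fun l => z (i, l)) j := by
  simp only [Matrix.mulVec, dotProduct, Fintype.sum_prod_type,
    Matrix.kroneckerMap_apply, Matrix.one_apply]
  rw [Finset.sum_eq_single i]
  · simp
  · intro b _ hb; simp [hb.symm]
  · simp

lemma ctrb_ker {ι J : Type*} [Fintype ι] [DecidableEq ι] [Fintype J] [DecidableEq J]
    (M : Matrix ι ι ℂ) (B : Matrix ι J ℂ) (N : ℕ) (z : ι → ℂ) :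
    (ctrbC M B N)ᴴ.mulVec z = 0 ↔
      ∀ k : Fin N, Bᴴ.mulVec (((Mᴴ) ^ (k : ℕ)).mulVec z) = 0 := by
  have key : ∀ (k : Fin N) (σ : J),
      (ctrbC M B N)ᴴ.mulVec z (k, σ) = Bᴴ.mulVec (((Mᴴ) ^ (k : ℕ)).mulVec z) σ := by
    intro k σ
    rw [Matrix.mulVec_mulVec, ← Matrix.conjTranspose_pow, ← Matrix.conjTranspose_mul]
    simp [ctrbC, Matrix.mulVec, dotProduct, Matrix.conjTranspose_apply]
  constructor
  · intro h k
    funext σ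
    rw [← key k σ, h]; rfl
  · intro h
    funext ⟨k, σ⟩
    rw [Pi.zero_apply, key k σ, h k]; rfl

lemma perp1 {q n : ℕ} (x : Fin q × Fin n → ℂ) :
    (∀ y : Fin q × Fin n → ℂ, (∃ w : Fin n → ℂ, ∀ i j, y (i, j) = w j) →
        ∑ z : Fin q × Fin n, star (y z) * x z = 0) ↔ ∀ j, ∑ i, x (i, j) = 0 := by
  constructor
  · intro h j
    have := h (fun ij => if ij.2 = j then 1 else 0) ⟨fun j' => if j' = j then 1 else 0,
      fun i j' => rfl⟩
    simp only [Fintype.sum_prod_type] at this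
    rw [Finset.sum_comm] at this
    rw [Finset.sum_eq_single j] at this
    · simpa using this
    · intro b _ hb; simp [hb]
    · simp
  · intro h y ⟨w, hw⟩
    simp only [Fintype.sum_prod_type]
    rw [Finset.sum_comm]
    calc ∑ j, ∑ i, star (y (i, j)) * x (i, j)
        = ∑ j, star (w j) * ∑ i, x (i, j) := by
          congr 1; funext j; rw [Finset.mul_sum]; congr 1; funext i; rw [hw]
      _ = 0 := by simp [h]

lemma perp2 {q n : ℕ} (hq : 0 < q) (z : Fin q × Fin n → ℂ) :
    (∀ x : Fin q × Fin n → ℂ, (∀ j, ∑ i, x (i, j) = 0) →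
        ∑ u : Fin q × Fin n, star (z u) * x u = 0) ↔
      ∃ w : Fin n → ℂ, ∀ i j, z (i, j) = w j := by
  constructor
  · intro h
    refine ⟨fun j => z (⟨0, hq⟩, j), fun i j => ?_⟩
    set a : Fin q × Fin n := (i, j)
    set b : Fin q × Fin n := (⟨0, hq⟩, j)
    have key := h (fun u => (if u = a then 1 else 0) - (if u = b then 1 else 0)) ?_
    · have : star (z a) - star (z b) = 0 := by
        rw [← key]
        rw [Finset.sum_congr rfl (fun u _ => mul_sub (star (z u)) _ _)]
        rw [Finset.sum_sub_distrib]
        simp [Finset.sum_ite_eq']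
      exact star_injective (sub_eq_zero.mp this)
    · intro j'
      have e1 : ∀ (c : Fin q × Fin n), (∑ i' : Fin q, if (i', j') = c then (1:ℂ) else 0)
          = if j' = c.2 then 1 else 0 := by
        intro c
        by_cases hj : j' = c.2
        · subst hj
          rw [Finset.sum_eq_single c.1] <;> simp +contextual [Prod.ext_iff, eq_comm]
        · rw [Finset.sum_eq_zero] <;> simp +contextual [Prod.ext_iff, hj]
      simp only [Finset.sum_sub_distrib, e1]
      simp [a, b]
  · rintro ⟨w, hw⟩ x hx
    simp only [Fintype.sum_prod_type]
    rw [Finset.sum_comm]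
    calc ∑ j, ∑ i, star (z (i, j)) * x (i, j)
        = ∑ j, star (w j) * ∑ i, x (i, j) := by
          congr 1; funext j; rw [Finset.mul_sum]; congr 1; funext i; rw [hw]
      _ = 0 := by simp [hx]

lemma reduce {q n : ℕ} (hq : 0 < q) {ι : Type*} [Fintype ι] [DecidableEq ι]
    (M : Matrix (Fin q × Fin n) ι ℂ) :
    (∀ x : Fin q × Fin n → ℂ,
      (∀ y : Fin q × Fin n → ℂ, (∃ w : Fin n → ℂ, ∀ i j, y (i, j) = w j) →
        ∑ z : Fin q × Fin n, star (y z) * x z = 0) →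
      ∃ α : ι → ℂ, M.mulVec α = x) ↔
    (∀ z : Fin q × Fin n → ℂ, Mᴴ.mulVec z = 0 → ∃ w : Fin n → ℂ, ∀ i j, z (i, j) = w j) := by
  constructor
  · intro H z hz
    rw [← perp2 hq]
    intro x hx
    obtain ⟨α, rfl⟩ := H x ((perp1 x).mpr hx)
    exact (fredholm M _).mp ⟨α, rfl⟩ z hz
  · intro H x hx
    rw [perp1] at hx
    rw [fredholm]
    intro z hz
    exact (perp2 hq z).mpr (H z hz) x hx

lemma eig_pow {n : ℕ} {M : Matrix (Fin n) (Fin n) ℂ} {v : Fin n → ℂ} {c : ℂ}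
    (h : M.mulVec v = c • v) (k : ℕ) : (M ^ k).mulVec v = c ^ k • v := by
  induction k with
  | zero => simp [Matrix.one_mulVec]
  | succ k ih =>
    rw [pow_succ', ← Matrix.mulVec_mulVec, ih, Matrix.mulVec_smul, h, smul_smul, ← pow_succ]

lemma Bconst {q n p : ℕ} {B : Matrix (Fin q × Fin n) (Fin p) ℂ}
    (hB : ∀ σ (j : Fin n), ∑ i : Fin q, B (i, j) σ = 0) (wc : Fin n → ℂ) :
    Bᴴ.mulVec (fun ij => wc ij.2) = 0 := by
  funext σ
  simp only [Matrix.mulVec, dotProduct, Matrix.conjTranspose_apply,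
    Fintype.sum_prod_type, Pi.zero_apply]
  rw [Finset.sum_comm]
  refine Finset.sum_eq_zero fun j _ => ?_
  rw [← Finset.sum_mul, ← star_sum, hB σ j, star_zero, zero_mul]

/-- The invariant subspace `ker 𝐖ᴴ ∩ S^⊥`. -/
noncomputable def Ksub (q n p : ℕ) (Acs : Matrix (Fin n) (Fin n) ℂ)
    (B : Matrix (Fin q × Fin n) (Fin p) ℂ) : Submodule ℂ (Fin q × Fin n → ℂ) where
  carrier := {v | (∀ k : ℕ,
      Bᴴ.mulVec (((1 : Matrix (Fin q) (Fin q) ℂ) ⊗ₖ (Acs ^ k)).mulVec v) = 0) ∧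
      ∀ j, ∑ i, v (i, j) = 0}
  add_mem' := by
    rintro a b ⟨ha1, ha2⟩ ⟨hb1, hb2⟩
    constructor
    · intro k
      rw [Matrix.mulVec_add, Matrix.mulVec_add, ha1 k, hb1 k, add_zero]
    · intro j
      simpa [Finset.sum_add_distrib] using by rw [ha2 j, hb2 j, add_zero]
  zero_mem' := by
    constructor
    · intro k; rw [Matrix.mulVec_zero, Matrix.mulVec_zero]
    · intro j; simp
  smul_mem' := by
    rintro c a ⟨ha1, ha2⟩
    constructor
    · intro k
      rw [Matrix.mulVec_smul, Matrix.mulVec_smul, ha1 k, smul_zero]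
    · intro j
      simp only [Pi.smul_apply, smul_eq_mul, ← Finset.mul_sum]
      rw [ha2 j, mul_zero]

lemma mem_Ksub {q n p : ℕ} {Acs : Matrix (Fin n) (Fin n) ℂ}
    {B : Matrix (Fin q × Fin n) (Fin p) ℂ} {v : Fin q × Fin n → ℂ} :
    v ∈ Ksub q n p Acs B ↔
      (∀ k : ℕ,
        Bᴴ.mulVec (((1 : Matrix (Fin q) (Fin q) ℂ) ⊗ₖ (Acs ^ k)).mulVec v) = 0) ∧
      ∀ j, ∑ i, v (i, j) = 0 := Iff.rfl

lemma Kzero {q n p m : ℕ} (hq : 2 ≤ q)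
    (Acs : Matrix (Fin n) (Fin n) ℂ)
    (μ : Fin m → ℂ) (d : Fin m → ℕ)
    (V : ∀ κ : Fin m, Matrix (Fin n) (Fin (d κ)) ℂ)
    (hVrank : ∀ κ, Function.Injective (V κ).mulVec)
    (hVrange : ∀ κ (x : Fin n → ℂ), (∃ y, (V κ).mulVec y = x) ↔ Acs.mulVec x = μ κ • x)
    (heig : ∀ (c : ℂ) (x : Fin n → ℂ), x ≠ 0 → Acs.mulVec x = c • x → ∃ κ, μ κ = c)
    (B : Matrix (Fin q × Fin n) (Fin p) ℂ)
    (H : ∀ κ : Fin m, ∀ z : Fin q × Fin (d κ) → ℂ,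
      (((1 : Matrix (Fin q) (Fin q) ℂ) ⊗ₖ (V κ)ᴴ) * B)ᴴ.mulVec z = 0 →
      ∃ w : Fin (d κ) → ℂ, ∀ i l, z (i, l) = w l)
    (v : Fin q × Fin n → ℂ) (hv : v ∈ Ksub q n p Acs B) : v = 0 := by
  by_contra hv0
  haveI : Nontrivial (Ksub q n p Acs B) :=
    ⟨⟨⟨v, hv⟩, 0, fun hc => hv0 (by simpa using congrArg Subtype.val hc)⟩⟩
  have hinv : ∀ x ∈ Ksub q n p Acs B,
      (Matrix.mulVecLin ((1 : Matrix (Fin q) (Fin q) ℂ) ⊗ₖ Acs)) x ∈ Ksub q n p Acs B := by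
    rintro x ⟨hx1, hx2⟩
    constructor
    · intro k
      rw [Matrix.mulVecLin_apply,
        Matrix.mulVec_mulVec x ((1 : Matrix (Fin q) (Fin q) ℂ) ⊗ₖ (Acs ^ k))
          ((1 : Matrix (Fin q) (Fin q) ℂ) ⊗ₖ Acs),
        ← Matrix.mul_kronecker_mul, one_mul, ← pow_succ]
      exact hx1 (k + 1)
    · intro j
      rw [Matrix.mulVecLin_apply]
      have e1 : ∀ i : Fin q,
          ((1 : Matrix (Fin q) (Fin q) ℂ) ⊗ₖ Acs).mulVec x (i, j)
            = ∑ j', Acs j j' * x (i, j') := by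
        intro i
        rw [kron_mulVec]
        simp [Matrix.mulVec, dotProduct]
      rw [Finset.sum_congr rfl fun i _ => e1 i, Finset.sum_comm]
      refine Finset.sum_eq_zero fun j' _ => ?_
      rw [← Finset.mul_sum, hx2 j', mul_zero]
  set L := (Matrix.mulVecLin ((1 : Matrix (Fin q) (Fin q) ℂ) ⊗ₖ Acs)).restrict hinv with hL
  obtain ⟨c, hc⟩ := Module.End.exists_eigenvalue L
  obtain ⟨vv, hvv⟩ := hc.exists_hasEigenvector
  have hLv : ((1 : Matrix (Fin q) (Fin q) ℂ) ⊗ₖ Acs).mulVec vv.val = c • vv.val := by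
    have h1 := congrArg Subtype.val hvv.apply_eq_smul
    rw [hL, LinearMap.restrict_coe_apply] at h1
    simpa [Matrix.mulVecLin_apply] using h1
  have hblock : ∀ i, Acs.mulVec (fun j => vv.val (i, j)) = c • (fun j => vv.val (i, j)) := by
    intro i
    funext j
    have h2 := congrFun hLv (i, j)
    rw [kron_mulVec] at h2
    simpa using h2
  have hvne : ∃ i, (fun j => vv.val (i, j)) ≠ 0 := by
    by_contra hno
    push_neg at hno
    refine hvv.2 (Subtype.ext ?_)
    funext ⟨i, j⟩
    exact congrFun (hno i) j
  obtain ⟨i0, hi0⟩ := hvne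
  obtain ⟨κ, hκ⟩ := heig c _ hi0 (hblock i0)
  have hyex : ∀ i, ∃ y, (V κ).mulVec y = fun j => vv.val (i, j) := by
    intro i
    rw [hVrange κ, hκ]
    exact hblock i
  choose y hy using hyex
  have hKv : vv.val ∈ Ksub q n p Acs B := vv.2
  have hz' : (((1 : Matrix (Fin q) (Fin q) ℂ) ⊗ₖ (V κ)ᴴ) * B)ᴴ.mulVec
      (fun il => y il.1 il.2) = 0 := by
    rw [Matrix.conjTranspose_mul, kron_conjT, Matrix.conjTranspose_conjTranspose,
      ← Matrix.mulVec_mulVec]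
    have e2 : ((1 : Matrix (Fin q) (Fin q) ℂ) ⊗ₖ (V κ)).mulVec (fun il => y il.1 il.2)
        = vv.val := by
      funext ⟨i, j⟩
      rw [kron_mulVec]
      exact congrFun (hy i) j
    rw [e2]
    have h0 := hKv.1 0
    rw [pow_zero, Matrix.one_kronecker_one, Matrix.one_mulVec] at h0
    exact h0
  obtain ⟨w, hw⟩ := H κ _ hz'
  have hvw : ∀ i j, vv.val (i, j) = (V κ).mulVec w j := by
    intro i j
    rw [← congrFun (hy i) j]
    have : y i = w := funext (hw i)
    rw [this]
  have hqne : (q : ℂ) ≠ 0 := Nat.cast_ne_zero.mpr (by omega)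
  have hVw : (V κ).mulVec w = 0 := by
    funext j
    have h2 := hKv.2 j
    rw [Finset.sum_congr rfl fun i _ => hvw i j] at h2
    rw [Finset.sum_const, Finset.card_univ, Fintype.card_fin, nsmul_eq_mul] at h2
    exact (mul_eq_zero.mp h2).resolve_left hqne
  have hw0 : w = 0 := hVrank κ (by rw [hVw, Matrix.mulVec_zero])
  refine hvv.2 (Subtype.ext ?_)
  funext ⟨i, j⟩
  rw [hvw i j, hw0, Matrix.mulVec_zero]
  rfl

end Stmt7Aux

open Stmt7Aux in
/-- PBH-type test, Theorem on controllability. -/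
theorem stmt7 (n q p m : ℕ) (hq : 2 ≤ q)
    (A : Matrix (Fin n) (Fin n) ℝ)
    (μ : Fin m → ℂ) (hμ : Function.Injective μ)
    (d : Fin m → ℕ) (hd : ∀ κ, 0 < d κ)
    (V : ∀ κ : Fin m, Matrix (Fin n) (Fin (d κ)) ℂ)
    (hVrank : ∀ κ, Function.Injective (V κ).mulVec)
    (hVrange : ∀ κ (x : Fin n → ℂ),
      (∃ y, (V κ).mulVec y = x) ↔ ((A.map (Complex.ofReal))ᴴ).mulVec x = μ κ • x)
    (heig : ∀ (c : ℂ) (x : Fin n → ℂ), x ≠ 0 →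
      ((A.map (Complex.ofReal))ᴴ).mulVec x = c • x → ∃ κ, μ κ = c)
    (B : Matrix (Fin q × Fin n) (Fin p) ℂ)
    (hB : ∀ σ (j : Fin n), ∑ i : Fin q, B (i, j) σ = 0) :
    (∀ x : Fin q × Fin n → ℂ,
      (∀ y : Fin q × Fin n → ℂ, (∃ w : Fin n → ℂ, ∀ i j, y (i, j) = w j) →
        ∑ z : Fin q × Fin n, star (y z) * x z = 0) →
      ∃ α : Fin n × Fin p → ℂ,
        (ctrbC ((1 : Matrix (Fin q) (Fin q) ℂ) ⊗ₖ (A.map (Complex.ofReal))) B n).mulVec α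
          = x) ↔
    (∀ κ : Fin m, ∀ x : Fin q × Fin (d κ) → ℂ,
      (∀ y : Fin q × Fin (d κ) → ℂ, (∃ w : Fin (d κ) → ℂ, ∀ i j, y (i, j) = w j) →
        ∑ z : Fin q × Fin (d κ), star (y z) * x z = 0) →
      ∃ α : Fin p → ℂ,
        (((1 : Matrix (Fin q) (Fin q) ℂ) ⊗ₖ (V κ)ᴴ) * B).mulVec α = x) := by
  have hq0 : 0 < q := by omega
  set Ac : Matrix (Fin n) (Fin n) ℂ := A.map Complex.ofReal with hAc
  rw [reduce hq0]
  have hR : (∀ κ : Fin m, ∀ x : Fin q × Fin (d κ) → ℂ,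
      (∀ y : Fin q × Fin (d κ) → ℂ, (∃ w : Fin (d κ) → ℂ, ∀ i j, y (i, j) = w j) →
        ∑ z : Fin q × Fin (d κ), star (y z) * x z = 0) →
      ∃ α : Fin p → ℂ,
        (((1 : Matrix (Fin q) (Fin q) ℂ) ⊗ₖ (V κ)ᴴ) * B).mulVec α = x) ↔
      (∀ κ : Fin m, ∀ z : Fin q × Fin (d κ) → ℂ,
        (((1 : Matrix (Fin q) (Fin q) ℂ) ⊗ₖ (V κ)ᴴ) * B)ᴴ.mulVec z = 0 →
        ∃ w : Fin (d κ) → ℂ, ∀ i l, z (i, l) = w l) :=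
    forall_congr' fun κ => reduce hq0 _
  rw [hR]
  constructor
  · -- forward: controllability implies the projected conditions
    intro H κ z hz
    set u : Fin q × Fin n → ℂ := fun ij => (V κ).mulVec (fun l => z (ij.1, l)) ij.2 with hu
    have hMz : Bᴴ.mulVec u = 0 := by
      rw [Matrix.conjTranspose_mul, kron_conjT, Matrix.conjTranspose_conjTranspose,
        ← Matrix.mulVec_mulVec] at hz
      have e2 : ((1 : Matrix (Fin q) (Fin q) ℂ) ⊗ₖ (V κ)).mulVec z = u := by
        funext ⟨i, j⟩
        rw [kron_mulVec]
      rwa [e2] at hz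
    have heigu : ∀ i, Acᴴ.mulVec (fun j => u (i, j)) = μ κ • (fun j => u (i, j)) :=
      fun i => (hVrange κ _).mp ⟨fun l => z (i, l), rfl⟩
    have hWu : (ctrbC ((1 : Matrix (Fin q) (Fin q) ℂ) ⊗ₖ Ac) B n)ᴴ.mulVec u = 0 := by
      rw [ctrb_ker]
      intro k
      have hpow : ((((1 : Matrix (Fin q) (Fin q) ℂ) ⊗ₖ Ac)ᴴ) ^ (k : ℕ)).mulVec u
          = (μ κ) ^ (k : ℕ) • u := by
        rw [kron_conjT, kron_pow]
        funext ⟨i, j⟩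
        rw [kron_mulVec]
        have e3 := congrFun (eig_pow (heigu i) (k : ℕ)) j
        simpa using e3
      rw [hpow, Matrix.mulVec_smul, hMz, smul_zero]
    obtain ⟨w, hw⟩ := H u hWu
    refine ⟨fun l => z (⟨0, hq0⟩, l), fun i l => ?_⟩
    have e4 : (V κ).mulVec (fun l => z (i, l)) = (V κ).mulVec (fun l => z (⟨0, hq0⟩, l)) := by
      funext j
      have := (hw i j).trans (hw ⟨0, hq0⟩ j).symm
      exact this
    exact congrFun (hVrank κ e4) l
  · -- backward
    intro H z hz
    rcases Nat.eq_zero_or_pos n with hn | hn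
    · exact ⟨fun _ => 0, fun i j => absurd j.isLt (by omega)⟩
    rw [ctrb_ker] at hz
    have hz' : ∀ k : Fin n,
        Bᴴ.mulVec (((1 : Matrix (Fin q) (Fin q) ℂ) ⊗ₖ (Acᴴ ^ (k : ℕ))).mulVec z) = 0 := by
      intro k
      have := hz k
      rwa [kron_conjT, kron_pow] at this
    have hzk : ∀ k : ℕ,
        Bᴴ.mulVec (((1 : Matrix (Fin q) (Fin q) ℂ) ⊗ₖ (Acᴴ ^ k)).mulVec z) = 0 := by
      intro k
      have hall : ∀ N ∈ Submodule.span ℂ (Set.range fun i : Fin n => Acᴴ ^ (i : ℕ)),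
          Bᴴ.mulVec (((1 : Matrix (Fin q) (Fin q) ℂ) ⊗ₖ N).mulVec z) = 0 := by
        intro N hN
        induction hN using Submodule.span_induction with
        | mem x hx =>
          obtain ⟨i, rfl⟩ := hx
          exact hz' i
        | zero =>
          rw [Matrix.kronecker_zero, Matrix.zero_mulVec, Matrix.mulVec_zero]
        | add x y _ _ hx hy =>
          rw [Matrix.kronecker_add, Matrix.add_mulVec, Matrix.mulVec_add, hx, hy, add_zero]
        | smul c x _ hx =>
          rw [Matrix.kronecker_smul, Matrix.smul_mulVec, Matrix.mulVec_smul, hx,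
            smul_zero]
      exact hall _ (pow_mem_span Acᴴ k)
    have hqne : (q : ℂ) ≠ 0 := Nat.cast_ne_zero.mpr (by omega)
    set sc : Fin n → ℂ := fun j => (q : ℂ)⁻¹ * ∑ i, z (i, j) with hsc
    set t : Fin q × Fin n → ℂ := fun ij => z ij - sc ij.2 with ht
    have htzs : t = z - (fun ij => sc ij.2) := rfl
    have htK : t ∈ Ksub q n p Acᴴ B := by
      rw [mem_Ksub]
      constructor
      · intro k
        have hconst : ((1 : Matrix (Fin q) (Fin q) ℂ) ⊗ₖ (Acᴴ ^ k)).mulVec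
            (fun ij => sc ij.2) = fun ij => (Acᴴ ^ k).mulVec sc ij.2 := by
          funext ⟨i, j⟩
          rw [kron_mulVec]
        rw [htzs, Matrix.mulVec_sub, Matrix.mulVec_sub, hzk k, hconst,
          Bconst hB ((Acᴴ ^ k).mulVec sc), zero_sub, neg_zero]
      · intro j
        rw [Finset.sum_sub_distrib]
        have e : ∀ i : Fin q, sc ((i, j) : Fin q × Fin n).2 = sc j := fun i => rfl
        rw [Finset.sum_congr rfl fun i _ => e i, Finset.sum_const, Finset.card_univ,
          Fintype.card_fin, nsmul_eq_mul, hsc]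
        rw [← mul_assoc, mul_inv_cancel₀ hqne, one_mul, sub_self]
    have ht0 := Kzero hq Acᴴ μ d V hVrank hVrange heig B H t htK
    refine ⟨sc, fun i j => ?_⟩
    have := congrFun ht0 (i, j)
    exact sub_eq_zero.mp this
end

section
/- Let μ_κ be a real eigenvalue of A* with real eigenvector matrix V_κ ∈ ℝ^{n×d_κ} (full column rank, A* V_κ = μ_κ V_κ). Let 𝐁 ∈ ℝ^{qn×p} satisfy [1_q^T ⊗ I_n]𝐁 = 0, let D ∈ ℝ^{q×(q-1)} be an orthonormal basis of 1_q^⊥, and let 𝐁_r = [D^T ⊗ I_n]𝐁. Then cone([I_{q-1} ⊗ V_κ^T]𝐁_r) = ℝ^{(q-1)d_κ} if and only if cone([I_q ⊗ V_κ^T]𝐁) ⊇ S_{d_κ}^⊥. -/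
open Matrix Kronecker

lemma ddt' (m : ℕ) (D : Matrix (Fin (m+1)) (Fin m) ℝ)
    (hD1 : Dᵀ * D = 1) (hD2 : ∀ c, ∑ i, D i c = 0) (i k : Fin (m+1)) :
    ∑ c, D i c * D k c = (if i = k then 1 else 0) - 1/(↑(m+1) : ℝ) := by
  set E : Matrix (Fin (m+1)) (Fin (m+1)) ℝ :=
    fun i j => if h : (j : ℕ) < m then D i ⟨j, h⟩ else (Real.sqrt (m+1))⁻¹ with hE
  have hsq : (Real.sqrt (m+1))⁻¹ * (Real.sqrt (m+1))⁻¹ = (↑(m+1) : ℝ)⁻¹ := by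
    rw [← mul_inv, Real.mul_self_sqrt (by positivity)]
    push_cast; ring_nf
  have hETE : Eᵀ * E = 1 := by
    ext a b
    simp only [Matrix.mul_apply, transpose_apply, Matrix.one_apply]
    simp only [hE]
    by_cases ha : (a : ℕ) < m <;> by_cases hb : (b : ℕ) < m
    · have := congrFun (congrFun hD1 ⟨a, ha⟩) ⟨b, hb⟩
      simp only [Matrix.mul_apply, transpose_apply, Matrix.one_apply] at this
      simp only [ha, hb, dif_pos]
      rw [this]
      by_cases hab : a = b
      · simp [hab]
      · rw [if_neg hab, if_neg (fun h => hab (by simpa [Fin.ext_iff] using h))]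
    · have hab : ¬ a = b := fun h => by rw [Fin.ext_iff] at h; omega
      simp only [ha, hb, dif_pos, dif_neg, not_false_iff, if_neg hab]
      rw [← Finset.sum_mul, hD2, zero_mul]
    · have hab : ¬ a = b := fun h => by rw [Fin.ext_iff] at h; omega
      simp only [ha, hb, dif_pos, dif_neg, not_false_iff, if_neg hab]
      rw [← Finset.mul_sum, hD2, mul_zero]
    · have hab : a = b := by
        have := a.isLt; have := b.isLt
        apply Fin.ext; omega
      simp only [ha, hb, dif_neg, not_false_iff, if_pos hab]
      rw [Finset.sum_const, Finset.card_univ, Fintype.card_fin, nsmul_eq_mul, hsq]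
      have : (↑(m+1) : ℝ) ≠ 0 := by positivity
      field_simp
  have hEET : E * Eᵀ = 1 := mul_eq_one_comm.mp hETE
  have hthis := congrFun (congrFun hEET i) k
  simp only [Matrix.mul_apply, transpose_apply, Matrix.one_apply] at hthis
  simp only [hE] at hthis
  rw [Fin.sum_univ_castSucc] at hthis
  have h2 : ∀ c : Fin m, (if h : ((Fin.castSucc c : Fin (m+1)) : ℕ) < m then D i ⟨(Fin.castSucc c : Fin (m+1)), h⟩ else (Real.sqrt (m+1))⁻¹)
      * (if h : ((Fin.castSucc c : Fin (m+1)) : ℕ) < m then D k ⟨(Fin.castSucc c : Fin (m+1)), h⟩ else (Real.sqrt (m+1))⁻¹)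
      = D i c * D k c := by
    intro c
    simp only [Fin.coe_castSucc]
    rw [dif_pos c.isLt, dif_pos c.isLt]
  rw [Finset.sum_congr rfl (fun c _ => h2 c)] at hthis
  have h3 : ¬ ((Fin.last m : Fin (m+1)) : ℕ) < m := by simp
  rw [dif_neg h3, dif_neg h3, hsq] at hthis
  rw [eq_sub_of_add_eq hthis, one_div]

lemma ddt {q : ℕ} (hq : 2 ≤ q) (D : Matrix (Fin q) (Fin (q-1)) ℝ)
    (hD1 : Dᵀ * D = 1) (hD2 : ∀ c, ∑ i, D i c = 0) (i k : Fin q) :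
    ∑ c, D i c * D k c = (if i = k then 1 else 0) - 1/q := by
  obtain ⟨m, rfl⟩ : ∃ m, q = m + 1 := ⟨q - 1, (Nat.succ_pred_eq_of_pos (by omega)).symm⟩
  exact ddt' m D hD1 hD2 i k

lemma kmv {q q' n : ℕ} (D : Matrix (Fin q') (Fin q) ℝ)
    (x : Fin q × Fin n → ℝ) (c : Fin q') (j : Fin n) :
    ((D ⊗ₖ (1 : Matrix (Fin n) (Fin n) ℝ)).mulVec x) (c, j)
      = ∑ i : Fin q, D c i * x (i, j) := by
  simp only [Matrix.mulVec, dotProduct, Fintype.sum_prod_type, kroneckerMap_apply,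
    Matrix.one_apply, mul_ite, ite_mul, mul_one, mul_zero, zero_mul,
    Finset.sum_ite_eq, Finset.mem_univ, if_true]

lemma ment {q n dκ p : ℕ} (V : Matrix (Fin n) (Fin dκ) ℝ)
    (B : Matrix (Fin q × Fin n) (Fin p) ℝ) (i : Fin q) (j : Fin dκ) (σ : Fin p) :
    (((1 : Matrix (Fin q) (Fin q) ℝ) ⊗ₖ Vᵀ) * B) (i, j) σ
      = ∑ l : Fin n, V l j * B (i, l) σ := by
  simp only [Matrix.mul_apply, Fintype.sum_prod_type, kroneckerMap_apply,
    Matrix.one_apply, transpose_apply, ite_mul, one_mul, zero_mul, mul_ite, mul_zero]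
  rw [Finset.sum_comm]
  simp

lemma inj_aux {q : ℕ} (hq : 2 ≤ q) (D : Matrix (Fin q) (Fin (q-1)) ℝ)
    (hD1 : Dᵀ * D = 1) (hD2 : ∀ c, ∑ i, D i c = 0)
    (v : Fin q → ℝ) (h1 : ∀ c, ∑ k, D k c * v k = 0) (h2 : ∑ k, v k = 0) (i : Fin q) :
    v i = 0 := by
  have e1 : ∑ c : Fin (q-1), D i c * (∑ k, D k c * v k) = 0 :=
    Finset.sum_eq_zero (fun c _ => by rw [h1 c, mul_zero])
  have e2 : ∑ c : Fin (q-1), D i c * (∑ k, D k c * v k)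
      = ∑ k, (∑ c, D i c * D k c) * v k := by
    simp only [Finset.mul_sum, Finset.sum_mul]
    rw [Finset.sum_comm]
    exact Finset.sum_congr rfl (fun k _ => Finset.sum_congr rfl (fun c _ => by ring))
  have e3 : ∑ k, (∑ c, D i c * D k c) * v k
      = ∑ k, ((if i = k then 1 else 0) - 1/(q:ℝ)) * v k :=
    Finset.sum_congr rfl (fun k _ => by rw [ddt hq D hD1 hD2 i k])
  have e4 : ∑ k, ((if i = k then 1 else 0) - (1:ℝ)/q) * v k
      = v i - (1/(q:ℝ)) * ∑ k, v k := by
    simp only [sub_mul, ite_mul, one_mul, zero_mul, Finset.sum_sub_distrib,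
      Finset.sum_ite_eq, Finset.mem_univ, if_true, Finset.mul_sum]
  rw [e2, e3, e4, h2, mul_zero, sub_zero] at e1
  exact e1

/-- for a real eigenvalue `μ_κ` of `A*` with real eigenvector matrix `V_κ`,
`cone([I_{q-1} ⊗ V_κᵀ]𝐁_r) = ℝ^{(q-1)d_κ}` iff `cone([I_q ⊗ V_κᵀ]𝐁) ⊇ S_{d_κ}^⊥`,
where `𝐁_r = [Dᵀ ⊗ I_n]𝐁`. -/
theorem stmt8 (n q p dκ : ℕ) (hq : 2 ≤ q)
    (A : Matrix (Fin n) (Fin n) ℝ) (μ : ℝ)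
    (V : Matrix (Fin n) (Fin dκ) ℝ)
    (hVrank : Function.Injective V.mulVec)
    (hAV : Aᵀ * V = μ • V)
    (B : Matrix (Fin q × Fin n) (Fin p) ℝ)
    (hB : ∀ σ (j : Fin n), ∑ i : Fin q, B (i, j) σ = 0)
    (D : Matrix (Fin q) (Fin (q - 1)) ℝ)
    (hD1 : Dᵀ * D = 1)
    (hD2 : ∀ c, ∑ i : Fin q, D i c = 0) :
    (∀ x : Fin (q - 1) × Fin dκ → ℝ,
      ∃ α : Fin p → ℝ, (∀ σ, 0 ≤ α σ) ∧
        (((1 : Matrix (Fin (q - 1)) (Fin (q - 1)) ℝ) ⊗ₖ Vᵀ) *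
          ((Dᵀ ⊗ₖ (1 : Matrix (Fin n) (Fin n) ℝ)) * B)).mulVec α = x) ↔
    (∀ x : Fin q × Fin dκ → ℝ,
      (∀ y : Fin q × Fin dκ → ℝ, (∃ w : Fin dκ → ℝ, ∀ i j, y (i, j) = w j) →
        ∑ z : Fin q × Fin dκ, x z * y z = 0) →
      ∃ α : Fin p → ℝ, (∀ σ, 0 ≤ α σ) ∧
        (((1 : Matrix (Fin q) (Fin q) ℝ) ⊗ₖ Vᵀ) * B).mulVec α = x) := by
  set M := ((1 : Matrix (Fin q) (Fin q) ℝ) ⊗ₖ Vᵀ) * B with hM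
  set N := ((1 : Matrix (Fin (q-1)) (Fin (q-1)) ℝ) ⊗ₖ Vᵀ) *
    ((Dᵀ ⊗ₖ (1 : Matrix (Fin n) (Fin n) ℝ)) * B) with hN
  have hMsum : ∀ (α : Fin p → ℝ) (j : Fin dκ), ∑ i : Fin q, M.mulVec α (i, j) = 0 := by
    intro α j
    simp only [Matrix.mulVec, dotProduct]
    rw [Finset.sum_comm]
    apply Finset.sum_eq_zero
    intro σ _
    have h0 : ∑ i : Fin q, M (i,j) σ = 0 := by
      simp only [hM, ment]
      rw [Finset.sum_comm]
      apply Finset.sum_eq_zero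
      intro l _
      rw [← Finset.mul_sum, hB σ l, mul_zero]
    rw [← Finset.sum_mul, h0, zero_mul]
  have hNM : ∀ (α : Fin p → ℝ) (c : Fin (q-1)) (j : Fin dκ),
      N.mulVec α (c, j) = ∑ i : Fin q, D i c * M.mulVec α (i, j) := by
    intro α c j
    have h1 : N = (Dᵀ ⊗ₖ (1 : Matrix (Fin dκ) (Fin dκ) ℝ)) * M := by
      rw [hN, hM, ← Matrix.mul_assoc, ← Matrix.mul_assoc]
      congr 1
      rw [← Matrix.mul_kronecker_mul, ← Matrix.mul_kronecker_mul]
      simp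
    rw [h1, ← Matrix.mulVec_mulVec, kmv]
    simp only [transpose_apply]
  have hSperp : ∀ x : Fin q × Fin dκ → ℝ,
      (∀ y : Fin q × Fin dκ → ℝ, (∃ w : Fin dκ → ℝ, ∀ i j, y (i, j) = w j) →
        ∑ z : Fin q × Fin dκ, x z * y z = 0) ↔ (∀ j, ∑ i : Fin q, x (i, j) = 0) := by
    intro x
    constructor
    · intro h j
      have := h (fun z => if z.2 = j then 1 else 0)
        ⟨fun j' => if j' = j then 1 else 0, fun i j' => rfl⟩
      rw [Fintype.sum_prod_type] at this
      simpa using this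
    · rintro h y ⟨w, hw⟩
      rw [Fintype.sum_prod_type, Finset.sum_comm]
      apply Finset.sum_eq_zero
      intro j _
      calc ∑ i, x (i,j) * y (i,j) = ∑ i, x (i,j) * w j :=
            Finset.sum_congr rfl (fun i _ => by rw [hw])
        _ = (∑ i, x (i,j)) * w j := by rw [Finset.sum_mul]
        _ = 0 := by rw [h j, zero_mul]
  constructor
  · intro hsur x hx
    rw [hSperp] at hx
    obtain ⟨α, hα, hNα⟩ := hsur (fun cj => ∑ i : Fin q, D i cj.1 * x (i, cj.2))
    refine ⟨α, hα, ?_⟩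
    funext z
    obtain ⟨i, j⟩ := z
    have key : ∀ c : Fin (q-1),
        ∑ k : Fin q, D k c * (M.mulVec α (k,j) - x (k,j)) = 0 := by
      intro c
      have h1 := congrFun hNα (c, j)
      rw [hNM] at h1
      simp only [mul_sub]
      rw [Finset.sum_sub_distrib, h1]
      exact sub_self _
    have hsub : ∑ k : Fin q, (M.mulVec α (k,j) - x (k,j)) = 0 := by
      rw [Finset.sum_sub_distrib, hMsum, hx j, sub_zero]
    have := inj_aux hq D hD1 hD2 (fun k => M.mulVec α (k,j) - x (k,j)) key hsub i
    have := sub_eq_zero.mp this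
    exact this
  · intro hsup x
    set x'' : Fin q × Fin dκ → ℝ :=
      fun ij => ∑ c : Fin (q-1), D ij.1 c * x (c, ij.2) with hx''
    have hperp : ∀ j, ∑ i : Fin q, x'' (i,j) = 0 := by
      intro j
      simp only [hx'']
      rw [Finset.sum_comm]
      apply Finset.sum_eq_zero
      intro c _
      rw [← Finset.sum_mul, hD2 c, zero_mul]
    obtain ⟨α, hα, hMα⟩ := hsup x'' ((hSperp x'').mpr hperp)
    refine ⟨α, hα, ?_⟩
    funext z
    obtain ⟨c, j⟩ := z
    rw [hNM]
    have hcomp : ∀ i, M.mulVec α (i,j) = x'' (i,j) := fun i => congrFun hMα (i,j)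
    simp only [hcomp, hx'']
    have e2 : ∑ i : Fin q, D i c * (∑ c' : Fin (q-1), D i c' * x (c',j))
        = ∑ c' : Fin (q-1), (∑ i, D i c * D i c') * x (c',j) := by
      simp only [Finset.mul_sum, Finset.sum_mul]
      rw [Finset.sum_comm]
      exact Finset.sum_congr rfl (fun a _ => Finset.sum_congr rfl (fun b _ => by ring))
    rw [e2]
    have e3 : ∀ c' : Fin (q-1), (∑ i : Fin q, D i c * D i c') = if c = c' then 1 else 0 := by
      intro c'
      have := congrFun (congrFun hD1 c) c'
      simpa [Matrix.mul_apply, Matrix.one_apply] using this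
    simp only [e3, ite_mul, one_mul, zero_mul, Finset.sum_ite_eq, Finset.mem_univ, if_true]
end

section
/- Consider the array ẋ_i = A x_i + Σ_σ B_{iσ} u_σ with Σ_i B_{iσ} = 0, written as ẋ = 𝐀x + 𝐁u with 𝐀 = I_q ⊗ A, and let 𝐖 be its controllability matrix. For distinct indices k, ℓ ∈ {1,...,q}, the array is (k,ℓ)-controllable if and only if range 𝐖 ⊇ range[(e_k − e_ℓ) ⊗ I_n]. -/
open Matrix Kronecker

namespace Stmt9Aux

open NormedSpace MeasureTheory intervalIntegral Polynomial

variable {n q p : ℕ}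

/-- `X ↦ X *ᵥ z` as a linear map. -/
noncomputable def appLM {N J : Type*} [Fintype N] [Fintype J] (z : J → ℝ) :
    Matrix N J ℝ →ₗ[ℝ] (N → ℝ) where
  toFun X := X *ᵥ z
  map_add' X Y := Matrix.add_mulVec X Y z
  map_smul' c X := Matrix.smul_mulVec c X z

@[simp] lemma appLM_apply {N J : Type*} [Fintype N] [Fintype J] (z : J → ℝ)
    (X : Matrix N J ℝ) : appLM z X = X *ᵥ z := rfl

/-- `X ↦ X *ᵥ z` as a continuous linear map. -/
noncomputable def appCLM {N J : Type*} [Fintype N] [Fintype J] [DecidableEq N] [DecidableEq J]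
    (z : J → ℝ) : Matrix N J ℝ →L[ℝ] (N → ℝ) :=
  LinearMap.toContinuousLinearMap (appLM z)

/-- dot with η as a continuous linear map. -/
noncomputable def dotCLM {N : Type*} [Fintype N] [DecidableEq N] (η : N → ℝ) :
    (N → ℝ) →L[ℝ] ℝ :=
  LinearMap.toContinuousLinearMap
    { toFun := fun z => η ⬝ᵥ z
      map_add' := fun x y => dotProduct_add η x y
      map_smul' := fun c x => dotProduct_smul c η x }

@[simp] lemma appCLM_apply {N J : Type*} [Fintype N] [Fintype J] [DecidableEq N] [DecidableEq J]
    (z : J → ℝ) (X : Matrix N J ℝ) : appCLM z X = X *ᵥ z := rfl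

@[simp] lemma dotCLM_apply {N : Type*} [Fintype N] [DecidableEq N] (η : N → ℝ) (z : N → ℝ) :
    dotCLM η z = η ⬝ᵥ z := rfl

/-- `C ↦ 1 ⊗ₖ C` as an `ℝ`-algebra hom. -/
noncomputable def kronAH (q n : ℕ) :
    Matrix (Fin n) (Fin n) ℝ →ₐ[ℝ] Matrix (Fin q × Fin n) (Fin q × Fin n) ℝ where
  toFun C := (1 : Matrix (Fin q) (Fin q) ℝ) ⊗ₖ C
  map_one' := Matrix.one_kronecker_one
  map_mul' C D := by rw [← Matrix.mul_kronecker_mul, Matrix.one_mul]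
  map_zero' := Matrix.kronecker_zero _
  map_add' C D := Matrix.kroneckerMap_add_right _ (fun a b c => mul_add a b c) _ _ _
  commutes' r := by
    show (1 : Matrix (Fin q) (Fin q) ℝ) ⊗ₖ (algebraMap ℝ _ r) = _
    rw [Algebra.algebraMap_eq_smul_one, Algebra.algebraMap_eq_smul_one,
      Matrix.kronecker_smul, Matrix.one_kronecker_one]

lemma kronAH_apply (C : Matrix (Fin n) (Fin n) ℝ) :
    kronAH q n C = (1 : Matrix (Fin q) (Fin q) ℝ) ⊗ₖ C := rfl

lemma exp_one_kron (C : Matrix (Fin n) (Fin n) ℝ) :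
    exp ((1 : Matrix (Fin q) (Fin q) ℝ) ⊗ₖ C) =
      (1 : Matrix (Fin q) (Fin q) ℝ) ⊗ₖ exp C := by
  letI : SeminormedRing (Matrix (Fin n) (Fin n) ℝ) := Matrix.linftyOpSemiNormedRing
  letI : NormedRing (Matrix (Fin n) (Fin n) ℝ) := Matrix.linftyOpNormedRing
  letI : NormedAlgebra ℝ (Matrix (Fin n) (Fin n) ℝ) := Matrix.linftyOpNormedAlgebra
  letI : SeminormedRing (Matrix (Fin q × Fin n) (Fin q × Fin n) ℝ) :=
    Matrix.linftyOpSemiNormedRing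
  letI : NormedRing (Matrix (Fin q × Fin n) (Fin q × Fin n) ℝ) := Matrix.linftyOpNormedRing
  letI : NormedAlgebra ℝ (Matrix (Fin q × Fin n) (Fin q × Fin n) ℝ) :=
    Matrix.linftyOpNormedAlgebra
  letI : NormedAlgebra ℚ (Matrix (Fin n) (Fin n) ℝ) := NormedAlgebra.restrictScalars ℚ ℝ _
  letI : NormedAlgebra ℚ (Matrix (Fin q × Fin n) (Fin q × Fin n) ℝ) :=
    NormedAlgebra.restrictScalars ℚ ℝ _
  have hc : Continuous (kronAH q n) :=
    (kronAH q n).toLinearMap.continuous_of_finiteDimensional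
  exact (map_exp (kronAH q n) hc C).symm

lemma smul_one_kron (s : ℝ) (C : Matrix (Fin n) (Fin n) ℝ) :
    s • ((1 : Matrix (Fin q) (Fin q) ℝ) ⊗ₖ C) =
      (1 : Matrix (Fin q) (Fin q) ℝ) ⊗ₖ (s • C) :=
  (Matrix.kronecker_smul s (1 : Matrix (Fin q) (Fin q) ℝ) C).symm

lemma one_kron_mulVec (C : Matrix (Fin n) (Fin n) ℝ) (z : Fin q × Fin n → ℝ)
    (i : Fin q) (j : Fin n) :
    (((1 : Matrix (Fin q) (Fin q) ℝ) ⊗ₖ C) *ᵥ z) (i, j) = (C *ᵥ fun j' => z (i, j')) j := by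
  classical
  simp only [Matrix.mulVec, dotProduct, Fintype.sum_prod_type,
    Matrix.kroneckerMap_apply, Matrix.one_apply]
  rw [Finset.sum_eq_single i]
  · simp
  · intro b _ hb
    simp [Ne.symm hb]
  · simp

lemma one_kron_pow (A : Matrix (Fin n) (Fin n) ℝ) (r : ℕ) :
    ((1 : Matrix (Fin q) (Fin q) ℝ) ⊗ₖ A) ^ r =
      (1 : Matrix (Fin q) (Fin q) ℝ) ⊗ₖ (A ^ r) := by
  rw [← kronAH_apply, ← map_pow, kronAH_apply]

section Ctrb

variable (A : Matrix (Fin n) (Fin n) ℝ) (B : Matrix (Fin q × Fin n) (Fin p) ℝ)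

local notation "𝕄" => ((1 : Matrix (Fin q) (Fin q) ℝ) ⊗ₖ A)

/-- The controllable subspace. -/
noncomputable def RS : Submodule ℝ (Fin q × Fin n → ℝ) :=
  LinearMap.range (Matrix.mulVecLin (ctrb 𝕄 B n))

lemma ctrb_mulVec (Mm : Matrix (Fin q × Fin n) (Fin q × Fin n) ℝ)
    (α : Fin n × Fin p → ℝ) :
    (ctrb Mm B n) *ᵥ α = ∑ r : Fin n, (Mm ^ (r : ℕ) * B) *ᵥ (fun σ => α (r, σ)) := by
  ext x
  simp only [Matrix.mulVec, dotProduct, ctrb, Matrix.of_apply, Fintype.sum_prod_type,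
    Finset.sum_apply]

lemma col_mem (r : Fin n) (c : Fin p → ℝ) : ((𝕄 ^ (r : ℕ) * B) *ᵥ c) ∈ RS A B := by
  classical
  refine ⟨fun rσ => if rσ.1 = r then c rσ.2 else 0, ?_⟩
  rw [Matrix.mulVecLin_apply, ctrb_mulVec]
  rw [Finset.sum_eq_single r]
  · simp
  · intro b _ hb
    have : (fun σ => if b = r then c σ else 0) = (0 : Fin p → ℝ) := by
      funext σ; simp [hb]
    rw [this, Matrix.mulVec_zero]
  · simp

lemma pow_smul_rep (r : ℕ) : ∃ c : Fin n → ℝ, A ^ r = ∑ i : Fin n, c i • A ^ (i : ℕ) := by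
  classical
  rcases Nat.eq_zero_or_pos n with hn | hn
  · subst hn
    exact ⟨0, Subsingleton.elim _ _⟩
  · have hmonic : A.charpoly.Monic := A.charpoly_monic
    have hdeg : A.charpoly.natDegree = n := by
      simpa using A.charpoly_natDegree_eq_dim
    have hne1 : A.charpoly ≠ 1 := by
      intro h
      rw [h, Polynomial.natDegree_one] at hdeg
      omega
    have hlt : ((Polynomial.X ^ r) %ₘ A.charpoly).natDegree < n :=
      lt_of_lt_of_le (Polynomial.natDegree_modByMonic_lt _ hmonic hne1) (le_of_eq hdeg)
    refine ⟨fun i => ((Polynomial.X ^ r) %ₘ A.charpoly).coeff (i : ℕ), ?_⟩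
    rw [Matrix.pow_eq_aeval_mod_charpoly, Polynomial.aeval_eq_sum_range' hlt]
    exact Finset.sum_range _

lemma pow_col_mem (r : ℕ) (c : Fin p → ℝ) : ((𝕄 ^ r * B) *ᵥ c) ∈ RS A B := by
  obtain ⟨co, hco⟩ := pow_smul_rep A r
  have hM : 𝕄 ^ r = ∑ i : Fin n, co i • 𝕄 ^ (i : ℕ) := by
    rw [one_kron_pow, hco, ← kronAH_apply, map_sum]
    simp only [kronAH_apply, Matrix.kronecker_smul, one_kron_pow]
  rw [hM, Matrix.sum_mul]
  have : (∑ i : Fin n, (co i • 𝕄 ^ (i : ℕ)) * B) *ᵥ c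
      = ∑ i : Fin n, ((co i • (𝕄 ^ (i : ℕ) * B)) *ᵥ c) := by
    have := map_sum (appLM (N := Fin q × Fin n) c)
      (fun i : Fin n => (co i • 𝕄 ^ (i : ℕ)) * B) Finset.univ
    simp only [appLM_apply] at this
    rw [this]
    simp only [Matrix.smul_mul]
  rw [this]
  refine Submodule.sum_mem _ fun i _ => ?_
  rw [Matrix.smul_mulVec]
  exact Submodule.smul_mem _ _ (col_mem A B i c)

lemma mulVec_pow_mem (r : ℕ) {z : Fin q × Fin n → ℝ} (hz : z ∈ RS A B) :
    (𝕄 ^ r) *ᵥ z ∈ RS A B := by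
  obtain ⟨α, rfl⟩ := hz
  rw [Matrix.mulVecLin_apply, ctrb_mulVec]
  rw [← Matrix.mulVecLin_apply, map_sum]
  refine Submodule.sum_mem _ fun r' _ => ?_
  rw [Matrix.mulVecLin_apply, Matrix.mulVec_mulVec, ← Matrix.mul_assoc, ← pow_add]
  exact pow_col_mem A B _ _

lemma RS_closed : IsClosed (RS A B : Set (Fin q × Fin n → ℝ)) :=
  Submodule.closed_of_finiteDimensional _

lemma exp_mulVec_mem (s : ℝ) {z : Fin q × Fin n → ℝ} (hz : z ∈ RS A B) :
    (NormedSpace.exp (s • 𝕄)) *ᵥ z ∈ RS A B := by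
  letI : SeminormedRing (Matrix (Fin q × Fin n) (Fin q × Fin n) ℝ) :=
    Matrix.linftyOpSemiNormedRing
  letI : NormedRing (Matrix (Fin q × Fin n) (Fin q × Fin n) ℝ) := Matrix.linftyOpNormedRing
  letI : NormedAlgebra ℝ (Matrix (Fin q × Fin n) (Fin q × Fin n) ℝ) :=
    Matrix.linftyOpNormedAlgebra
  have hsum : Summable (fun r : ℕ => (r.factorial : ℝ)⁻¹ • (s • 𝕄) ^ r) :=
    NormedSpace.expSeries_summable' (𝕂 := ℝ) (s • 𝕄)
  have hexp : (NormedSpace.exp (s • 𝕄)) *ᵥ z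
      = ∑' r : ℕ, ((r.factorial : ℝ)⁻¹ • (s • 𝕄) ^ r) *ᵥ z := by
    rw [NormedSpace.exp_eq_tsum ℝ]
    exact ((appCLM z).map_tsum hsum)
  rw [hexp]
  have hsum2 : Summable (fun r : ℕ => ((r.factorial : ℝ)⁻¹ • (s • 𝕄) ^ r) *ᵥ z) :=
    hsum.map (appCLM z) (appCLM z).continuous
  refine (RS_closed A B).mem_of_tendsto hsum2.hasSum.tendsto_sum_nat
    (Filter.Eventually.of_forall fun m => ?_)
  refine Submodule.sum_mem _ fun r _ => ?_
  rw [Matrix.smul_mulVec, _root_.smul_pow, Matrix.smul_mulVec]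
  exact Submodule.smul_mem _ _ (Submodule.smul_mem _ _ (mulVec_pow_mem A B r hz))

end Ctrb


lemma intervalIntegral_apply {ι : Type*} [Fintype ι] {f : ℝ → ι → ℝ} (hf : Continuous f)
    (a b : ℝ) (i : ι) : (∫ t in a..b, f t) i = ∫ t in a..b, f t i := by
  have h := (ContinuousLinearMap.proj (R := ℝ) (φ := fun _ : ι => ℝ) i).intervalIntegral_comp_comm (μ := MeasureTheory.volume)
    (hf.intervalIntegrable a b)
  exact h.symm

/-- A continuous nonnegative function with vanishing integral on `[0,1]`
  vanishes on `(0,1)`. -/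
lemma zero_of_integral_zero {h : ℝ → ℝ} (hc : Continuous h) (hnn : ∀ t, 0 ≤ h t)
    (hint : ∫ t in (0:ℝ)..1, h t = 0) : ∀ t ∈ Set.Ioo (0:ℝ) 1, h t = 0 := by
  intro t ht
  by_contra hne
  have hpos : 0 < h t := (hnn t).lt_of_ne (Ne.symm hne)
  have hU : IsOpen ({s | 0 < h s} ∩ Set.Ioo (0:ℝ) 1) :=
    (isOpen_lt continuous_const hc).inter isOpen_Ioo
  have htU : t ∈ {s | 0 < h s} ∩ Set.Ioo (0:ℝ) 1 := ⟨hpos, ht⟩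
  obtain ⟨ε, hε, hball⟩ := Metric.isOpen_iff.mp hU t htU
  set a := t - ε / 2
  set b := t + ε / 2
  have hab : a < b := by simp only [a, b]; linarith
  have hsub : Set.Ioo a b ⊆ {s | 0 < h s} ∩ Set.Ioo (0:ℝ) 1 := by
    intro s hs
    apply hball
    rw [Real.ball_eq_Ioo]
    exact ⟨by simp only [a] at hs; linarith [hs.1], by simp only [b] at hs; linarith [hs.2]⟩
  have h01 : Set.Ioo a b ⊆ Set.Ioo (0:ℝ) 1 := fun s hs => (hsub hs).2
  have ha : (0:ℝ) ≤ a := by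
    by_contra hlt
    push_neg at hlt
    obtain ⟨s, hs⟩ := Set.nonempty_Ioo.2 (show a < min b 0 by
      simp only [lt_min_iff]; exact ⟨hab, hlt⟩)
    exact absurd (h01 ⟨hs.1, lt_of_lt_of_le hs.2 (min_le_left _ _)⟩).1
      (not_lt.2 (le_of_lt (lt_of_lt_of_le hs.2 (min_le_right _ _))))
  have hb : b ≤ 1 := by
    by_contra hlt
    push_neg at hlt
    obtain ⟨s, hs⟩ := Set.nonempty_Ioo.2 (show max a 1 < b by
      simp only [max_lt_iff]; exact ⟨hab, hlt⟩)
    exact absurd (h01 ⟨lt_of_le_of_lt (le_max_left _ _) hs.1, hs.2⟩).2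
      (not_lt.2 (le_of_lt (lt_of_le_of_lt (le_max_right _ _) hs.1)))
  have hpos' : (0:ℝ) < ∫ s in a..b, h s :=
    intervalIntegral_pos_of_pos_on (hc.intervalIntegrable a b)
      (fun s hs => (hsub hs).1) hab
  have hsplit : ∫ s in (0:ℝ)..1, h s
      = (∫ s in (0:ℝ)..a, h s) + (∫ s in a..b, h s) + (∫ s in b..(1:ℝ), h s) := by
    rw [intervalIntegral.integral_add_adjacent_intervals (hc.intervalIntegrable 0 a)
      (hc.intervalIntegrable a b),
      intervalIntegral.integral_add_adjacent_intervals (hc.intervalIntegrable 0 b)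
      (hc.intervalIntegrable b 1)]
  have h1 : (0:ℝ) ≤ ∫ s in (0:ℝ)..a, h s :=
    intervalIntegral.integral_nonneg ha (fun u _ => hnn u)
  have h2 : (0:ℝ) ≤ ∫ s in b..(1:ℝ), h s :=
    intervalIntegral.integral_nonneg hb (fun u _ => hnn u)
  rw [hsplit] at hint
  linarith


lemma integral_mem_submodule {ι : Type*} [Fintype ι] (S : Submodule ℝ (ι → ℝ))
    {f : ℝ → ι → ℝ} (hf : Continuous f) (hmem : ∀ t, f t ∈ S) (a b : ℝ) :
    (∫ t in a..b, f t) ∈ S := by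
  by_contra hx
  obtain ⟨g, hg0, hgbot⟩ := Submodule.exists_dual_map_eq_bot_of_notMem hx inferInstance
  have hker : ∀ y ∈ S, g y = 0 := by
    intro y hy
    have : g y ∈ S.map g := Submodule.mem_map_of_mem hy
    rwa [hgbot, Submodule.mem_bot] at this
  set G := LinearMap.toContinuousLinearMap g with hG
  have h1 : (∫ t in a..b, G (f t)) = G (∫ t in a..b, f t) :=
    G.intervalIntegral_comp_comm (μ := MeasureTheory.volume) (hf.intervalIntegrable a b)
  have h2 : (∫ t in a..b, G (f t)) = 0 := by
    have : ∀ t, G (f t) = 0 := fun t => hker _ (hmem t)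
    simp only [this, intervalIntegral.integral_zero]
  have : g (∫ t in a..b, f t) = 0 := by
    have : G (∫ t in a..b, f t) = 0 := by rw [← h1, h2]
    simpa [hG] using this
  exact hg0 this

/-- The vector `(e_k - e_ℓ) ⊗ v`. -/
def dvec (k ℓ : Fin q) (v : Fin n → ℝ) : Fin q × Fin n → ℝ :=
  fun ij => ((if ij.1 = k then (1 : ℝ) else 0) - (if ij.1 = ℓ then 1 else 0)) * v ij.2

lemma one_kron_mulVec_dvec (C : Matrix (Fin n) (Fin n) ℝ) (k ℓ : Fin q) (v : Fin n → ℝ) :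
    (((1 : Matrix (Fin q) (Fin q) ℝ) ⊗ₖ C) *ᵥ dvec k ℓ v) = dvec k ℓ (C *ᵥ v) := by
  funext ij
  obtain ⟨i, j⟩ := ij
  rw [one_kron_mulVec]
  simp only [dvec, Matrix.mulVec, dotProduct]
  rw [Finset.mul_sum]
  refine Finset.sum_congr rfl fun j' _ => ?_
  ring


section Gram

variable (A : Matrix (Fin n) (Fin n) ℝ) (B : Matrix (Fin q × Fin n) (Fin p) ℝ)

local notation "𝕄" => ((1 : Matrix (Fin q) (Fin q) ℝ) ⊗ₖ A)

/-- `t ↦ e^{(1-t)𝕄} B`. -/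
noncomputable def Fm (t : ℝ) : Matrix (Fin q × Fin n) (Fin p) ℝ :=
  NormedSpace.exp ((1 - t) • 𝕄) * B

lemma cont_exp_smul (c d : ℝ) :
    Continuous fun t : ℝ => NormedSpace.exp ((c - d * t) • 𝕄) := by
  letI : SeminormedRing (Matrix (Fin q × Fin n) (Fin q × Fin n) ℝ) :=
    Matrix.linftyOpSemiNormedRing
  letI : NormedRing (Matrix (Fin q × Fin n) (Fin q × Fin n) ℝ) := Matrix.linftyOpNormedRing
  letI : NormedAlgebra ℝ (Matrix (Fin q × Fin n) (Fin q × Fin n) ℝ) :=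
    Matrix.linftyOpNormedAlgebra
  letI : NormedAlgebra ℚ (Matrix (Fin q × Fin n) (Fin q × Fin n) ℝ) :=
    NormedAlgebra.restrictScalars ℚ ℝ _
  exact NormedSpace.exp_continuous.comp
    ((continuous_const.sub (continuous_const.mul continuous_id)).smul continuous_const)

lemma contF : Continuous fun t => Fm A B t := by
  have h1 : Continuous fun t : ℝ => NormedSpace.exp ((1 - t) • 𝕄) := by
    have := cont_exp_smul (q := q) A 1 1
    simpa using this
  exact h1.matrix_mul continuous_const

lemma contFFT : Continuous fun t => Fm A B t * (Fm A B t)ᵀ :=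
  (contF A B).matrix_mul (contF A B).matrix_transpose

/-- The controllability Gramian. -/
noncomputable def Gm : Matrix (Fin q × Fin n) (Fin q × Fin n) ℝ :=
  Matrix.of fun a b => ∫ t in (0:ℝ)..1, (Fm A B t * (Fm A B t)ᵀ) a b

lemma Gm_mulVec (η : Fin q × Fin n → ℝ) :
    Gm A B *ᵥ η = ∫ t in (0:ℝ)..1, (Fm A B t * (Fm A B t)ᵀ) *ᵥ η := by
  funext a
  rw [intervalIntegral_apply ((contFFT A B).matrix_mulVec continuous_const) 0 1 a]
  simp only [Matrix.mulVec, dotProduct, Gm, Matrix.of_apply]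
  have hmc : ∀ b, (∫ t in (0:ℝ)..1, (Fm A B t * (Fm A B t)ᵀ) a b) * η b
      = ∫ t in (0:ℝ)..1, (Fm A B t * (Fm A B t)ᵀ) a b * η b := fun b =>
    (intervalIntegral.integral_mul_const _ _).symm
  simp only [hmc]
  rw [← intervalIntegral.integral_finset_sum]
  intro b _
  exact (((contFFT A B).matrix_elem a b).mul continuous_const).intervalIntegrable 0 1

lemma Gm_maps (η : Fin q × Fin n → ℝ) : Gm A B *ᵥ η ∈ RS A B := by
  rw [Gm_mulVec]
  refine integral_mem_submodule _ ((contFFT A B).matrix_mulVec continuous_const)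
    (fun t => ?_) 0 1
  rw [← Matrix.mulVec_mulVec]
  have hB : ∀ w : Fin p → ℝ, B *ᵥ w ∈ RS A B := by
    intro w
    have := pow_col_mem A B 0 w
    rwa [pow_zero, Matrix.one_mul] at this
  have : Fm A B t *ᵥ ((Fm A B t)ᵀ *ᵥ η)
      = NormedSpace.exp ((1 - t) • 𝕄) *ᵥ (B *ᵥ ((Fm A B t)ᵀ *ᵥ η)) := by
    rw [Fm, ← Matrix.mulVec_mulVec]
  rw [this]
  exact exp_mulVec_mem A B _ (hB _)

end Gram


section Inj

variable (A : Matrix (Fin n) (Fin n) ℝ) (B : Matrix (Fin q × Fin n) (Fin p) ℝ)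

local notation "𝕄" => ((1 : Matrix (Fin q) (Fin q) ℝ) ⊗ₖ A)

/-- The component functional `X ↦ ((X * C)ᵀ *ᵥ η) σ` as a continuous linear map. -/
noncomputable def colCLM (C : Matrix (Fin q × Fin n) (Fin p) ℝ)
    (η : Fin q × Fin n → ℝ) (σ : Fin p) :
    Matrix (Fin q × Fin n) (Fin q × Fin n) ℝ →L[ℝ] ℝ :=
  LinearMap.toContinuousLinearMap
    { toFun := fun X => ((X * C)ᵀ *ᵥ η) σ
      map_add' := fun X Y => by
        simp [Matrix.add_mul, Matrix.transpose_add, Matrix.add_mulVec]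
      map_smul' := fun c X => by
        simp [Matrix.smul_mul, Matrix.transpose_smul, Matrix.smul_mulVec] }

@[simp] lemma colCLM_apply (C : Matrix (Fin q × Fin n) (Fin p) ℝ)
    (η : Fin q × Fin n → ℝ) (σ : Fin p)
    (X : Matrix (Fin q × Fin n) (Fin q × Fin n) ℝ) :
    colCLM C η σ X = ((X * C)ᵀ *ᵥ η) σ := rfl

lemma Gm_inj {η : Fin q × Fin n → ℝ} (hη : η ∈ RS A B) (h0 : Gm A B *ᵥ η = 0) :
    η = 0 := by
  classical
  -- quadratic form identity
  have hquad : ∀ X : Matrix (Fin q × Fin n) (Fin p) ℝ,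
      η ⬝ᵥ ((X * Xᵀ) *ᵥ η) = ∑ σ, ((Xᵀ *ᵥ η) σ) ^ 2 := by
    intro X
    rw [← Matrix.mulVec_mulVec, Matrix.dotProduct_mulVec, ← Matrix.mulVec_transpose]
    simp [dotProduct, sq]
  -- the quadratic form integrates to zero
  have hcontXt : Continuous fun t => (Fm A B t)ᵀ *ᵥ η :=
    (contF A B).matrix_transpose.matrix_mulVec continuous_const
  have hcont2 : Continuous fun t => ∑ σ, (((Fm A B t)ᵀ *ᵥ η) σ) ^ 2 :=
    continuous_finset_sum _ fun σ _ =>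
      ((continuous_apply σ).comp hcontXt).pow 2
  have hzero : (∫ t in (0:ℝ)..1, ∑ σ, (((Fm A B t)ᵀ *ᵥ η) σ) ^ 2) = 0 := by
    have hdot : (∫ t in (0:ℝ)..1, η ⬝ᵥ ((Fm A B t * (Fm A B t)ᵀ) *ᵥ η))
        = η ⬝ᵥ (Gm A B *ᵥ η) := by
      rw [Gm_mulVec]
      have := (dotCLM η).intervalIntegral_comp_comm (μ := MeasureTheory.volume)
        (f := fun t => (Fm A B t * (Fm A B t)ᵀ) *ᵥ η)
        (((contFFT A B).matrix_mulVec (continuous_const (y := η))).intervalIntegrable 0 1)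
      simpa using this
    have h1 : (∫ t in (0:ℝ)..1, η ⬝ᵥ ((Fm A B t * (Fm A B t)ᵀ) *ᵥ η)) = 0 := by
      rw [hdot, h0, dotProduct_zero]
    exact (intervalIntegral.integral_congr fun t _ => (hquad (Fm A B t)).symm).trans h1
  -- hence the integrand vanishes on (0,1)
  have hvan : ∀ t ∈ Set.Ioo (0:ℝ) 1, (Fm A B t)ᵀ *ᵥ η = 0 := by
    intro t ht
    have hsum0 : ∑ σ, (((Fm A B t)ᵀ *ᵥ η) σ) ^ 2 = 0 :=
      zero_of_integral_zero hcont2 (fun s => Finset.sum_nonneg fun σ _ => sq_nonneg _)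
        hzero t ht
    funext σ
    have := (Finset.sum_eq_zero_iff_of_nonneg fun σ _ => sq_nonneg
      (((Fm A B t)ᵀ *ᵥ η) σ)).mp hsum0 σ (Finset.mem_univ σ)
    exact (pow_eq_zero_iff (by norm_num : (2:ℕ) ≠ 0)).mp this
  -- inductively, all `ψ r` vanish on `(0,1)`
  have hpsi : ∀ r : ℕ, ∀ s ∈ Set.Ioo (0:ℝ) 1,
      (NormedSpace.exp (s • 𝕄) * (𝕄 ^ r * B))ᵀ *ᵥ η = 0 := by
    intro r
    induction r with
    | zero =>
      intro s hs
      have h1 : Fm A B (1 - s) = NormedSpace.exp (s • 𝕄) * B := by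
        rw [Fm]; norm_num
      have := hvan (1 - s) ⟨by linarith [hs.2], by linarith [hs.1]⟩
      rw [h1] at this
      rw [pow_zero, Matrix.one_mul]
      exact this
    | succ r ih =>
      intro s hs
      funext σ
      letI : SeminormedRing (Matrix (Fin q × Fin n) (Fin q × Fin n) ℝ) :=
        Matrix.linftyOpSemiNormedRing
      letI : NormedRing (Matrix (Fin q × Fin n) (Fin q × Fin n) ℝ) :=
        Matrix.linftyOpNormedRing
      letI : NormedAlgebra ℝ (Matrix (Fin q × Fin n) (Fin q × Fin n) ℝ) :=
        Matrix.linftyOpNormedAlgebra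
      set L := colCLM (𝕄 ^ r * B) η σ with hL
      have hg : HasDerivAt (fun u : ℝ => NormedSpace.exp (u • 𝕄))
          (NormedSpace.exp (s • 𝕄) * 𝕄) s := hasDerivAt_exp_smul_const 𝕄 s
      have hcomp : HasDerivAt (fun u : ℝ => L (NormedSpace.exp (u • 𝕄)))
          (L (NormedSpace.exp (s • 𝕄) * 𝕄)) s :=
        L.hasFDerivAt.comp_hasDerivAt s hg
      have heq : (fun u : ℝ => L (NormedSpace.exp (u • 𝕄))) =ᶠ[nhds s]
          (fun _ => (0:ℝ)) := by
        filter_upwards [isOpen_Ioo.mem_nhds hs] with x hx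
        have := ih x hx
        rw [colCLM_apply, this]
        rfl
      have hzero' : HasDerivAt (fun u : ℝ => L (NormedSpace.exp (u • 𝕄))) 0 s :=
        (hasDerivAt_const s (0:ℝ)).congr_of_eventuallyEq heq
      have hder0 : L (NormedSpace.exp (s • 𝕄) * 𝕄) = 0 := hcomp.unique hzero'
      have hassoc : NormedSpace.exp (s • 𝕄) * 𝕄 * (𝕄 ^ r * B)
          = NormedSpace.exp (s • 𝕄) * (𝕄 ^ (r + 1) * B) := by
        rw [Matrix.mul_assoc, ← Matrix.mul_assoc 𝕄, ← pow_succ']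
      rw [colCLM_apply, hassoc] at hder0
      exact hder0
  -- take the limit `s → 0⁺`
  have hlim : ∀ r : ℕ, (𝕄 ^ r * B)ᵀ *ᵥ η = 0 := by
    intro r
    funext σ
    have hcont : Continuous fun s : ℝ =>
        ((NormedSpace.exp (s • 𝕄) * (𝕄 ^ r * B))ᵀ *ᵥ η) σ := by
      have h1 : Continuous fun s : ℝ => NormedSpace.exp (s • 𝕄) := by
        have := cont_exp_smul (q := q) A 0 (-1)
        simpa using this
      exact (continuous_apply σ).comp
        ((h1.matrix_mul continuous_const).matrix_transpose.matrix_mulVec continuous_const)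
    have hne : (nhdsWithin (0:ℝ) (Set.Ioo (0:ℝ) 1)).NeBot := by
      rw [← mem_closure_iff_nhdsWithin_neBot, closure_Ioo (by norm_num : (0:ℝ) ≠ 1)]
      exact Set.left_mem_Icc.mpr zero_le_one
    have ht1 : Filter.Tendsto (fun s : ℝ =>
        ((NormedSpace.exp (s • 𝕄) * (𝕄 ^ r * B))ᵀ *ᵥ η) σ)
        (nhdsWithin (0:ℝ) (Set.Ioo (0:ℝ) 1))
        (nhds (((NormedSpace.exp ((0:ℝ) • 𝕄) * (𝕄 ^ r * B))ᵀ *ᵥ η) σ)) :=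
      (hcont.tendsto 0).mono_left nhdsWithin_le_nhds
    have ht2 : Filter.Tendsto (fun s : ℝ =>
        ((NormedSpace.exp (s • 𝕄) * (𝕄 ^ r * B))ᵀ *ᵥ η) σ)
        (nhdsWithin (0:ℝ) (Set.Ioo (0:ℝ) 1)) (nhds 0) := by
      refine Filter.Tendsto.congr' ?_ tendsto_const_nhds
      filter_upwards [self_mem_nhdsWithin] with x hx
      rw [hpsi r x hx]
      rfl
    have h00 : ((NormedSpace.exp ((0:ℝ) • 𝕄) * (𝕄 ^ r * B))ᵀ *ᵥ η) σ = 0 :=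
      tendsto_nhds_unique ht1 ht2
    rw [zero_smul, NormedSpace.exp_zero, Matrix.one_mul] at h00
    exact h00
  -- conclude `η = 0`
  have horth : ∀ y ∈ RS A B, η ⬝ᵥ y = 0 := by
    rintro y ⟨α, rfl⟩
    rw [Matrix.mulVecLin_apply, ctrb_mulVec, ← dotCLM_apply, map_sum]
    refine Finset.sum_eq_zero fun r _ => ?_
    rw [dotCLM_apply, Matrix.dotProduct_mulVec, ← Matrix.mulVec_transpose, hlim,
      zero_dotProduct]
  exact dotProduct_self_eq_zero.mp (horth η hη)

end Inj


section Surj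

variable (A : Matrix (Fin n) (Fin n) ℝ) (B : Matrix (Fin q × Fin n) (Fin p) ℝ)

local notation "𝕄" => ((1 : Matrix (Fin q) (Fin q) ℝ) ⊗ₖ A)

lemma exp_smul_mulVec_apply (s : ℝ) (z : Fin q × Fin n → ℝ) (i : Fin q) (j : Fin n) :
    ((NormedSpace.exp (s • 𝕄)) *ᵥ z) (i, j)
      = (NormedSpace.exp (s • A) *ᵥ fun j' => z (i, j')) j := by
  rw [smul_one_kron, exp_one_kron, one_kron_mulVec]

lemma Gm_surj (d : Fin q × Fin n → ℝ) (hd : d ∈ RS A B) :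
    ∃ η ∈ RS A B, Gm A B *ᵥ η = d := by
  have hmaps : ∀ x ∈ RS A B, (Gm A B).mulVecLin x ∈ RS A B := fun x _ => by
    rw [Matrix.mulVecLin_apply]; exact Gm_maps A B x
  let T : RS A B →ₗ[ℝ] RS A B := LinearMap.restrict ((Gm A B).mulVecLin) hmaps
  have hinj : Function.Injective T := by
    rw [injective_iff_map_eq_zero]
    rintro ⟨x, hx⟩ hTx
    have hx0 : Gm A B *ᵥ x = 0 := by
      have := congrArg Subtype.val hTx
      simpa [T, LinearMap.restrict_apply, Matrix.mulVecLin_apply] using this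
    exact Subtype.ext (Gm_inj A B hx hx0)
  have hsurj : Function.Surjective T := LinearMap.injective_iff_surjective.mp hinj
  obtain ⟨⟨η, hηR⟩, hT⟩ := hsurj ⟨d, hd⟩
  refine ⟨η, hηR, ?_⟩
  have := congrArg Subtype.val hT
  simpa [T, LinearMap.restrict_apply, Matrix.mulVecLin_apply] using this

end Surj

end Stmt9Aux

open Stmt9Aux in
/-- the relatively actuated array is (k,ℓ)-controllable
(`x_k(τ) = x_ℓ(τ)` while `x_i(τ) = e^{Aτ}x_i(0)` for `i ≠ k, ℓ`) iff
`range 𝐖 ⊇ range[(e_k − e_ℓ) ⊗ I_n]`. -/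
theorem stmt9 (n q p : ℕ) (hq : 2 ≤ q)
    (A : Matrix (Fin n) (Fin n) ℝ)
    (B : Matrix (Fin q × Fin n) (Fin p) ℝ)
    (hB : ∀ σ (j : Fin n), ∑ i : Fin q, B (i, j) σ = 0)
    (k ℓ : Fin q) (hkl : k ≠ ℓ) :
    (∀ x0 : Fin q × Fin n → ℝ, ∃ τ > (0 : ℝ), ∃ u : ℝ → Fin p → ℝ, Continuous u ∧
      ∃ xτ : Fin q × Fin n → ℝ,
        xτ = (NormedSpace.exp (τ • ((1 : Matrix (Fin q) (Fin q) ℝ) ⊗ₖ A))).mulVec x0 +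
          ∫ t in (0 : ℝ)..τ,
            (NormedSpace.exp ((τ - t) • ((1 : Matrix (Fin q) (Fin q) ℝ) ⊗ₖ A))).mulVec
              (B.mulVec (u t)) ∧
        (∀ j, xτ (k, j) = xτ (ℓ, j)) ∧
        (∀ i, i ≠ k → i ≠ ℓ → ∀ j,
          xτ (i, j) = (NormedSpace.exp (τ • A)).mulVec (fun j' => x0 (i, j')) j)) ↔
    (∀ x : Fin q × Fin n → ℝ,
      (∃ v : Fin n → ℝ, ∀ i j, x (i, j) =
        ((if i = k then (1 : ℝ) else 0) - (if i = ℓ then 1 else 0)) * v j) →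
      ∃ α : Fin n × Fin p → ℝ,
        (ctrb ((1 : Matrix (Fin q) (Fin q) ℝ) ⊗ₖ A) B n).mulVec α = x) := by
  classical
  have hBmem : ∀ w : Fin p → ℝ, B *ᵥ w ∈ RS A B := by
    intro w
    have := pow_col_mem A B 0 w
    rwa [pow_zero, Matrix.one_mul] at this
  constructor
  · -- controllability implies range inclusion
    intro hctl x hx
    obtain ⟨v, hv⟩ := hx
    have hxd : x = dvec k ℓ v := funext fun ij => hv ij.1 ij.2
    obtain ⟨τ, hτ, u, hu, xτ, hxeq, hkl2, hoth⟩ :=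
      hctl (fun ij => if ij.1 = ℓ then 2 * v ij.2 else 0)
    set x0 : Fin q × Fin n → ℝ := fun ij => if ij.1 = ℓ then 2 * v ij.2 else 0 with hx0
    set g : ℝ → (Fin q × Fin n → ℝ) := fun t =>
      (NormedSpace.exp ((τ - t) • ((1 : Matrix (Fin q) (Fin q) ℝ) ⊗ₖ A))).mulVec
        (B.mulVec (u t)) with hg
    have hgcont : Continuous g := by
      have h1 : Continuous fun t : ℝ =>
          NormedSpace.exp ((τ - t) • ((1 : Matrix (Fin q) (Fin q) ℝ) ⊗ₖ A)) := by
        have := cont_exp_smul (q := q) A τ 1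
        simpa using this
      exact h1.matrix_mulVec (continuous_const.matrix_mulVec hu)
    set d : Fin q × Fin n → ℝ := ∫ t in (0:ℝ)..τ, g t with hd
    have hdmem : d ∈ RS A B := by
      refine integral_mem_submodule _ hgcont (fun t => ?_) 0 τ
      exact exp_mulVec_mem A B _ (hBmem (u t))
    have hrow : ∀ i j, xτ (i, j) =
        ((NormedSpace.exp (τ • ((1 : Matrix (Fin q) (Fin q) ℝ) ⊗ₖ A))) *ᵥ x0) (i, j)
          + d (i, j) := by
      intro i j
      rw [hxeq]
      rfl
    have hzero_other : ∀ i, i ≠ k → i ≠ ℓ → ∀ j, d (i, j) = 0 := by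
      intro i hik hil j
      have h1 := hoth i hik hil j
      have h2 := hrow i j
      rw [exp_smul_mulVec_apply A τ x0 i j] at h2
      have h3 : (fun j' => x0 (i, j')) = fun j' => x0 (i, j') := rfl
      rw [h1] at h2
      linarith
    have hsumd : ∀ j, ∑ i, d (i, j) = 0 := by
      intro j
      have happ : ∀ ij : Fin q × Fin n, d ij = ∫ t in (0:ℝ)..τ, g t ij := fun ij =>
        intervalIntegral_apply hgcont 0 τ ij
      have hint : ∀ ij : Fin q × Fin n, IntervalIntegrable (fun t => g t ij)
          MeasureTheory.volume 0 τ := fun ij =>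
        ((continuous_apply ij).comp hgcont).intervalIntegrable 0 τ
      calc ∑ i, d (i, j) = ∑ i, ∫ t in (0:ℝ)..τ, g t (i, j) := by
            refine Finset.sum_congr rfl fun i _ => happ (i, j)
        _ = ∫ t in (0:ℝ)..τ, ∑ i, g t (i, j) :=
            (intervalIntegral.integral_finset_sum (fun i _ => hint (i, j))).symm
        _ = 0 := by
            have hzero : ∀ t, ∑ i, g t (i, j) = 0 := by
              intro t
              have hBr : ∀ j', ∑ i, (B *ᵥ u t) (i, j') = 0 := by
                intro j'
                simp only [Matrix.mulVec, dotProduct]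
                rw [Finset.sum_comm]
                refine Finset.sum_eq_zero fun σ _ => ?_
                rw [← Finset.sum_mul, hB σ j', zero_mul]
              have : ∀ i, g t (i, j)
                  = (NormedSpace.exp ((τ - t) • A) *ᵥ fun j' => (B *ᵥ u t) (i, j')) j :=
                fun i => exp_smul_mulVec_apply A (τ - t) (B *ᵥ u t) i j
              have hexpand : ∀ i, (NormedSpace.exp ((τ - t) • A) *ᵥ
                  fun j' => (B *ᵥ u t) (i, j')) j
                  = ∑ j', NormedSpace.exp ((τ - t) • A) j j' * (B *ᵥ u t) (i, j') :=
                fun i => rfl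
              simp only [this, hexpand]
              rw [Finset.sum_comm]
              refine Finset.sum_eq_zero fun j' _ => ?_
              rw [← Finset.mul_sum, hBr j', mul_zero]
            simp only [hzero]
            exact intervalIntegral.integral_zero
    have hdk : ∀ j, d (k, j) + d (ℓ, j) = 0 := by
      intro j
      have h := hsumd j
      rw [← Finset.sum_subset (Finset.subset_univ ({k, ℓ} : Finset (Fin q)))
        (fun i _ hi => by
          simp only [Finset.mem_insert, Finset.mem_singleton] at hi
          push_neg at hi
          exact hzero_other i hi.1 hi.2 j)] at h
      rwa [Finset.sum_pair hkl] at h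
    have hEx0k : ∀ j, ((NormedSpace.exp (τ • ((1 : Matrix (Fin q) (Fin q) ℝ) ⊗ₖ A)))
        *ᵥ x0) (k, j) = 0 := by
      intro j
      rw [exp_smul_mulVec_apply]
      have : (fun j' => x0 (k, j')) = (0 : Fin n → ℝ) := by
        funext j'
        simp [hx0, hkl]
      rw [this, Matrix.mulVec_zero]
      rfl
    have hEx0l : ∀ j, ((NormedSpace.exp (τ • ((1 : Matrix (Fin q) (Fin q) ℝ) ⊗ₖ A)))
        *ᵥ x0) (ℓ, j) = 2 * (NormedSpace.exp (τ • A) *ᵥ v) j := by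
      intro j
      rw [exp_smul_mulVec_apply]
      have : (fun j' => x0 (ℓ, j')) = (2:ℝ) • v := by
        funext j'
        simp [hx0, smul_eq_mul]
      rw [this, Matrix.mulVec_smul]
      simp [smul_eq_mul]
    have hdkval : ∀ j, d (k, j) = (NormedSpace.exp (τ • A) *ᵥ v) j := by
      intro j
      have h1 := hkl2 j
      have h2 := hrow k j
      have h3 := hrow ℓ j
      have h4 := hdk j
      rw [hEx0k j] at h2
      rw [hEx0l j] at h3
      rw [h2, h3] at h1
      linarith
    have hdval : d = dvec k ℓ (NormedSpace.exp (τ • A) *ᵥ v) := by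
      funext ij
      obtain ⟨i, j⟩ := ij
      by_cases hik : i = k
      · subst hik
        rw [hdkval j]
        simp [dvec, hkl]
      · by_cases hil : i = ℓ
        · subst hil
          have := hdk j
          have h5 := hdkval j
          simp [dvec, hik]
          linarith
        · rw [hzero_other i hik hil j]
          simp [dvec, hik, hil]
    have hz : (NormedSpace.exp ((-τ) • ((1 : Matrix (Fin q) (Fin q) ℝ) ⊗ₖ A))) *ᵥ d
        ∈ RS A B := exp_mulVec_mem A B _ hdmem
    have hzval : (NormedSpace.exp ((-τ) • ((1 : Matrix (Fin q) (Fin q) ℝ) ⊗ₖ A))) *ᵥ d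
        = dvec k ℓ v := by
      rw [hdval, smul_one_kron, exp_one_kron, one_kron_mulVec_dvec]
      congr 1
      rw [Matrix.mulVec_mulVec]
      have hco : NormedSpace.exp ((-τ) • A) * NormedSpace.exp (τ • A)
          = (1 : Matrix (Fin n) (Fin n) ℝ) := by
        rw [← Matrix.exp_add_of_commute _ _
          (((Commute.refl A).smul_left (-τ)).smul_right τ)]
        rw [← add_smul, neg_add_cancel, zero_smul, NormedSpace.exp_zero]
      rw [hco, Matrix.one_mulVec]
    rw [hzval] at hz
    obtain ⟨α, hα⟩ := hz
    refine ⟨α, ?_⟩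
    rw [hxd, ← hα, Matrix.mulVecLin_apply]
  · -- range inclusion implies controllability
    intro hR x0
    refine ⟨1, one_pos, ?_⟩
    set v : Fin n → ℝ := fun j =>
      (NormedSpace.exp ((1:ℝ) • A) *ᵥ fun j' => x0 (ℓ, j') - x0 (k, j')) j / 2 with hv
    have hdR : dvec k ℓ v ∈ RS A B := by
      obtain ⟨α, hα⟩ := hR (dvec k ℓ v) ⟨v, fun i j => rfl⟩
      exact ⟨α, by rw [Matrix.mulVecLin_apply, hα]⟩
    obtain ⟨η, hηR, hGη⟩ := Gm_surj A B _ hdR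
    refine ⟨fun t => (Fm A B t)ᵀ *ᵥ η,
      (contF A B).matrix_transpose.matrix_mulVec continuous_const, ?_⟩
    have hint : (∫ t in (0:ℝ)..1,
        (NormedSpace.exp (((1:ℝ) - t) • ((1 : Matrix (Fin q) (Fin q) ℝ) ⊗ₖ A))).mulVec
          (B.mulVec ((Fm A B t)ᵀ *ᵥ η))) = dvec k ℓ v := by
      rw [← hGη, Gm_mulVec]
      refine intervalIntegral.integral_congr fun t _ => ?_
      rw [Matrix.mulVec_mulVec, Matrix.mulVec_mulVec]
      rfl
    refine ⟨_, rfl, ?_, ?_⟩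
    · intro j
      have hk1 : ((NormedSpace.exp ((1:ℝ) • ((1 : Matrix (Fin q) (Fin q) ℝ) ⊗ₖ A))).mulVec x0
          + ∫ t in (0:ℝ)..1,
            (NormedSpace.exp (((1:ℝ) - t) • ((1 : Matrix (Fin q) (Fin q) ℝ) ⊗ₖ A))).mulVec
              (B.mulVec ((Fm A B t)ᵀ *ᵥ η))) (k, j)
          = (NormedSpace.exp ((1:ℝ) • A) *ᵥ fun j' => x0 (k, j')) j + v j := by
        rw [Pi.add_apply, hint, exp_smul_mulVec_apply]
        congr 1
        simp [dvec, hkl]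
      have hl1 : ((NormedSpace.exp ((1:ℝ) • ((1 : Matrix (Fin q) (Fin q) ℝ) ⊗ₖ A))).mulVec x0
          + ∫ t in (0:ℝ)..1,
            (NormedSpace.exp (((1:ℝ) - t) • ((1 : Matrix (Fin q) (Fin q) ℝ) ⊗ₖ A))).mulVec
              (B.mulVec ((Fm A B t)ᵀ *ᵥ η))) (ℓ, j)
          = (NormedSpace.exp ((1:ℝ) • A) *ᵥ fun j' => x0 (ℓ, j')) j - v j := by
        rw [Pi.add_apply, hint, exp_smul_mulVec_apply]
        have : dvec k ℓ v (ℓ, j) = -v j := by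
          simp [dvec, Ne.symm hkl]
        rw [this]
        ring
      rw [hk1, hl1]
      have hsub : (NormedSpace.exp ((1:ℝ) • A) *ᵥ fun j' => x0 (ℓ, j') - x0 (k, j')) j
          = (NormedSpace.exp ((1:ℝ) • A) *ᵥ fun j' => x0 (ℓ, j')) j
            - (NormedSpace.exp ((1:ℝ) • A) *ᵥ fun j' => x0 (k, j')) j := by
        rw [show (fun j' => x0 (ℓ, j') - x0 (k, j'))
            = (fun j' => x0 (ℓ, j')) - (fun j' => x0 (k, j')) from rfl,
          Matrix.mulVec_sub]
        rfl
      have hvj : v j = (NormedSpace.exp ((1:ℝ) • A) *ᵥ fun j' => x0 (ℓ, j') - x0 (k, j')) j / 2 := rfl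
      rw [hsub] at hvj
      linarith
    · intro i hik hil j
      rw [Pi.add_apply, hint, exp_smul_mulVec_apply]
      have : dvec k ℓ v (i, j) = 0 := by
        simp [dvec, hik, hil]
      rw [this, add_zero]
end

section
/- Let A ∈ ℝ^{n×n} have distinct eigenvalues μ_1,...,μ_m of A* with algebraic multiplicities n_1,...,n_m, and let U_κ ∈ ℂ^{n×n_κ} be full column rank with range U_κ = null(A* − μ_κ I_n)^{n_κ}, so A* U_κ = U_κ A_κ* for some A_κ ∈ ℂ^{n_κ×n_κ}. Let 𝐀 = I_q ⊗ A, 𝐁 ∈ ℝ^{qn×p}, 𝐖 = [𝐁 𝐀𝐁 ⋯ 𝐀^{n-1}𝐁], 𝐁_κ = [I_q ⊗ U_κ*]𝐁, and 𝐖_κ = [𝐁_κ (I_q⊗A_κ)𝐁_κ ⋯ (I_q⊗A_κ)^{n_κ−1}𝐁_κ]. Then null 𝐖_κ* = null(𝐖*[I_q ⊗ U_κ]). -/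
open Matrix Kronecker Polynomial

private lemma kron_pow_one {q k : ℕ} (A : Matrix (Fin k) (Fin k) ℂ) (r : ℕ) :
    ((1 : Matrix (Fin q) (Fin q) ℂ) ⊗ₖ A) ^ r
      = (1 : Matrix (Fin q) (Fin q) ℂ) ⊗ₖ (A ^ r) := by
  induction r with
  | zero => simp [Matrix.one_kronecker_one]
  | succ r ih => rw [pow_succ, ih, pow_succ, ← Matrix.mul_kronecker_mul, Matrix.one_mul]

private lemma kron_conjT {q a b : ℕ} (V : Matrix (Fin a) (Fin b) ℂ) :
    ((1 : Matrix (Fin q) (Fin q) ℂ) ⊗ₖ V)ᴴ = (1 : Matrix (Fin q) (Fin q) ℂ) ⊗ₖ Vᴴ := by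
  ext ⟨i, j⟩ ⟨k, l⟩
  simp [Matrix.conjTranspose_apply, Matrix.kroneckerMap_apply, Matrix.one_apply,
    apply_ite (star : ℂ → ℂ), eq_comm, mul_comm]

private lemma kron_sum {q k : ℕ} {ι : Type*} (t : Finset ι)
    (g : ι → Matrix (Fin k) (Fin k) ℂ) :
    (1 : Matrix (Fin q) (Fin q) ℂ) ⊗ₖ (∑ s ∈ t, g s)
      = ∑ s ∈ t, (1 : Matrix (Fin q) (Fin q) ℂ) ⊗ₖ g s := by
  ext ⟨i, j⟩ ⟨a, b⟩
  simp [Matrix.kroneckerMap_apply, Matrix.sum_apply, Finset.mul_sum]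

private lemma sum_mulVec' {ι m n' : Type*} [Fintype n'] (t : Finset ι)
    (g : ι → Matrix m n' ℂ) (x : n' → ℂ) :
    (∑ s ∈ t, g s).mulVec x = ∑ s ∈ t, (g s).mulVec x := by
  funext i
  simp [Matrix.mulVec, dotProduct, Matrix.sum_apply, Finset.sum_mul,
    Finset.sum_apply]
  rw [Finset.sum_comm]

private lemma ctrb_null {ι J : Type*} [Fintype ι] [DecidableEq ι] [Fintype J]
    (M : Matrix ι ι ℂ) (B : Matrix ι J ℂ) (N : ℕ) (x : ι → ℂ) :
    (ctrbC M B N)ᴴ.mulVec x = 0 ↔ ∀ r : Fin N, ((M ^ (r : ℕ)) * B)ᴴ.mulVec x = 0 := by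
  constructor
  · intro h r
    funext σ
    have h1 := congrFun h (r, σ)
    simpa [ctrbC, Matrix.mulVec, Matrix.conjTranspose_apply, dotProduct] using h1
  · intro h
    funext rσ
    have h1 := congrFun (h rσ.1) rσ.2
    simpa [ctrbC, Matrix.mulVec, Matrix.conjTranspose_apply, dotProduct] using h1

/-- Lemma on generalized eigenspace projections:
`null 𝐖_κ* = null(𝐖*[I_q ⊗ U_κ])`, where `U_κ` is a full-column-rank basis of the
generalized eigenspace `null(A* − μ_κ I)^{n_κ}`, `A*U_κ = U_κ A_κ*`, `A_κ*` has
characteristic polynomial `(s − μ_κ)^{n_κ}`, `𝐁_κ = [I_q ⊗ U_κ*]𝐁`, and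
`𝐖_κ` is the controllability matrix of `(I_q ⊗ A_κ, 𝐁_κ)` truncated at power `n_κ − 1`. -/
theorem stmt10 (n q p nκ : ℕ) (hq : 2 ≤ q)
    (A : Matrix (Fin n) (Fin n) ℝ) (μ : ℂ)
    (U : Matrix (Fin n) (Fin nκ) ℂ)
    (hUrank : Function.Injective U.mulVec)
    (hUrange : ∀ x : Fin n → ℂ,
      (∃ y, U.mulVec y = x) ↔
        ((((A.map (Complex.ofReal))ᴴ - μ • 1) ^ nκ).mulVec x = 0))
    (Aκ : Matrix (Fin nκ) (Fin nκ) ℂ)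
    (hcomm : (A.map (Complex.ofReal))ᴴ * U = U * Aκᴴ)
    (hchar : (Aκᴴ).charpoly = (X - C μ) ^ nκ)
    (B : Matrix (Fin q × Fin n) (Fin p) ℝ)
    (hB : ∀ σ (j : Fin n), ∑ i : Fin q, B (i, j) σ = 0) :
    {x : Fin q × Fin nκ → ℂ |
        (ctrbC ((1 : Matrix (Fin q) (Fin q) ℂ) ⊗ₖ Aκ)
          (((1 : Matrix (Fin q) (Fin q) ℂ) ⊗ₖ Uᴴ) * (B.map (Complex.ofReal))) nκ)ᴴ.mulVec x
          = 0} =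
    {x : Fin q × Fin nκ → ℂ |
        ((ctrbC ((1 : Matrix (Fin q) (Fin q) ℂ) ⊗ₖ (A.map (Complex.ofReal)))
            (B.map (Complex.ofReal)) n)ᴴ *
          ((1 : Matrix (Fin q) (Fin q) ℂ) ⊗ₖ U)).mulVec x = 0} := by
  classical
  set A' : Matrix (Fin n) (Fin n) ℂ := A.map (Complex.ofReal) with hA'
  set B' : Matrix (Fin q × Fin n) (Fin p) ℂ := B.map (Complex.ofReal) with hB'
  set Iq : Matrix (Fin q) (Fin q) ℂ := 1 with hIq
  set M : Matrix (Fin q × Fin nκ) (Fin q × Fin nκ) ℂ := Iq ⊗ₖ Aκ with hM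
  set 𝔸 : Matrix (Fin q × Fin n) (Fin q × Fin n) ℂ := Iq ⊗ₖ A' with h𝔸
  set Z : Matrix (Fin q × Fin n) (Fin q × Fin nκ) ℂ := Iq ⊗ₖ U with hZ
  set Zh : Matrix (Fin q × Fin nκ) (Fin q × Fin n) ℂ := Iq ⊗ₖ Uᴴ with hZh
  set Bκ : Matrix (Fin q × Fin nκ) (Fin p) ℂ := Zh * B' with hBκ
  -- nκ ≤ n from injectivity of U.mulVec
  have hle : nκ ≤ n := by
    have hinj : Function.Injective U.mulVecLin := by
      intro a b hab
      exact hUrank (by simpa using hab)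
    have := LinearMap.finrank_le_finrank_of_injective hinj
    simpa using this
  -- intertwining for powers
  have hcommr : ∀ r : ℕ, (A'ᴴ) ^ r * U = U * (Aκᴴ) ^ r := by
    intro r
    induction r with
    | zero => simp
    | succ r ih =>
        calc (A'ᴴ) ^ (r + 1) * U = (A'ᴴ) ^ r * (A'ᴴ * U) := by
              rw [pow_succ, Matrix.mul_assoc]
          _ = ((A'ᴴ) ^ r * U) * Aκᴴ := by rw [hcomm, Matrix.mul_assoc]
          _ = U * (Aκᴴ) ^ (r + 1) := by rw [ih, Matrix.mul_assoc, ← pow_succ]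
  have hcommr' : ∀ r : ℕ, Uᴴ * (A' ^ r) = (Aκ ^ r) * Uᴴ := by
    intro r
    have h := congrArg Matrix.conjTranspose (hcommr r)
    simpa [Matrix.conjTranspose_mul, Matrix.conjTranspose_pow] using h
  have hint : ∀ r : ℕ, Zh * (𝔸 ^ r) = (M ^ r) * Zh := by
    intro r
    rw [hZh, h𝔸, hM, hIq, kron_pow_one, kron_pow_one, ← Matrix.mul_kronecker_mul,
      ← Matrix.mul_kronecker_mul, Matrix.one_mul, hcommr' r]
  have hZconj : Zᴴ = Zh := by rw [hZ, hZh, hIq, kron_conjT]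
  ext x
  simp only [Set.mem_setOf_eq]
  rw [← Matrix.mulVec_mulVec, ctrb_null, ctrb_null]
  -- the two row conditions coincide
  have hstep : ∀ r : ℕ,
      ((𝔸 ^ r * B')ᴴ).mulVec (Z.mulVec x) = ((M ^ r * Bκ)ᴴ).mulVec x := by
    intro r
    have heq : (𝔸 ^ r * B')ᴴ * Z = (M ^ r * Bκ)ᴴ := by
      have h1 : (𝔸 ^ r * B')ᴴ * Z = (Zᴴ * (𝔸 ^ r * B'))ᴴ := by
        conv_rhs => rw [Matrix.conjTranspose_mul, Matrix.conjTranspose_conjTranspose]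
      rw [h1, hZconj, ← Matrix.mul_assoc, hint r, Matrix.mul_assoc, ← hBκ]
    rw [Matrix.mulVec_mulVec, heq]
  -- express each condition via powers of Aκᴴ
  have hkey : ∀ r : ℕ,
      ((M ^ r * Bκ)ᴴ).mulVec x = Bκᴴ.mulVec ((Iq ⊗ₖ ((Aκᴴ) ^ r)).mulVec x) := by
    intro r
    rw [Matrix.conjTranspose_mul, ← Matrix.mulVec_mulVec]
    congr 2
    rw [hM, hIq, kron_pow_one, kron_conjT, Matrix.conjTranspose_pow]
  -- all powers vanish once the first nκ do
  have hall : (∀ r : Fin nκ, ((M ^ (r : ℕ) * Bκ)ᴴ).mulVec x = 0) →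
      ∀ r : ℕ, ((M ^ r * Bκ)ᴴ).mulVec x = 0 := by
    intro h r
    rcases Nat.eq_zero_or_pos nκ with h0 | hpos
    · subst h0
      funext σ
      simp [Matrix.mulVec, dotProduct]
    · have hmon := (Aκᴴ).charpoly_monic
      have hdeg : (Aκᴴ).charpoly.natDegree = nκ := by
        simpa using (Aκᴴ).charpoly_natDegree_eq_dim
      have hne1 : (Aκᴴ).charpoly ≠ 1 := by
        intro hc
        rw [hc] at hdeg
        simp at hdeg
        omega
      set f : ℂ[X] := ((X : ℂ[X]) ^ r) %ₘ (Aκᴴ).charpoly with hf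
      have hfdeg : f.natDegree < nκ := by
        exact lt_of_lt_of_eq (Polynomial.natDegree_modByMonic_lt ((X : ℂ[X]) ^ r) hmon hne1) hdeg
      have hpow : (Aκᴴ) ^ r = ∑ s ∈ Finset.range nκ, f.coeff s • (Aκᴴ) ^ s := by
        have h1 := (Aκᴴ).pow_eq_aeval_mod_charpoly r
        rw [h1, ← hf]
        exact Polynomial.aeval_eq_sum_range' hfdeg _
      rw [hkey r, hpow, kron_sum]
      have h2 : (∑ s ∈ Finset.range nκ, Iq ⊗ₖ (f.coeff s • (Aκᴴ) ^ s)).mulVec x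
          = ∑ s ∈ Finset.range nκ, f.coeff s • ((Iq ⊗ₖ ((Aκᴴ) ^ s)).mulVec x) := by
        rw [sum_mulVec']
        refine Finset.sum_congr rfl fun s _ => ?_
        rw [Matrix.kronecker_smul, Matrix.smul_mulVec]
      rw [h2]
      have h3 : ∀ s ∈ Finset.range nκ,
          f.coeff s • Bκᴴ.mulVec ((Iq ⊗ₖ ((Aκᴴ) ^ s)).mulVec x) = 0 := by
        intro s hs
        have hs' : s < nκ := Finset.mem_range.mp hs
        have hz := h ⟨s, hs'⟩
        rw [hkey s] at hz
        rw [hz, smul_zero]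
      calc Bκᴴ.mulVec (∑ s ∈ Finset.range nκ,
              f.coeff s • ((Iq ⊗ₖ ((Aκᴴ) ^ s)).mulVec x))
          = ∑ s ∈ Finset.range nκ,
              f.coeff s • Bκᴴ.mulVec ((Iq ⊗ₖ ((Aκᴴ) ^ s)).mulVec x) := by
            simp only [← Matrix.mulVecLin_apply, map_sum, LinearMap.map_smul]
        _ = 0 := Finset.sum_eq_zero h3
  constructor
  · intro h r
    rw [hstep]
    exact hall h (r : ℕ)
  · intro h r
    have hz := h ⟨(r : ℕ), lt_of_lt_of_le r.2 hle⟩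
    rw [hstep] at hz
    exact hz
end

section
/- Let A ∈ ℝ^{n×n}, 𝐀 = I_q ⊗ A, and 𝐁 ∈ ℝ^{qn×p}. For distinct eigenvalues μ_1,...,μ_m of A* with generalized eigenspace bases U_κ (range U_κ = null(A*−μ_κ I)^{n_κ}, A*U_κ = U_κ A_κ*), and controllability matrix 𝐖 = [𝐁 𝐀𝐁 ⋯ 𝐀^{n-1}𝐁], the following are equivalent: (i) range 𝐖 ⊇ range[(e_k−e_ℓ)⊗I_n]; (ii) for every κ, range 𝐖_κ ⊇ range[(e_k−e_ℓ)⊗I_{n_κ}], where 𝐖_κ is the controllability matrix of the pair (I_q⊗A_κ, [I_q⊗U_κ*]𝐁). -/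
open Matrix Kronecker Polynomial

section helpers
set_option linter.unusedSectionVars false
variable {ι κι J' : Type*} [Fintype ι] [DecidableEq ι] [Fintype κι] [DecidableEq κι] [Fintype J']

lemma mem_range_iff {J : Type*} [Fintype J] [DecidableEq J]
    (M : Matrix ι J ℂ) (x : ι → ℂ) :
    (∃ α, M.mulVec α = x) ↔ ∀ z, Mᴴ.mulVec z = 0 → star z ⬝ᵥ x = 0 := by
  constructor
  · rintro ⟨α, rfl⟩ z hz
    have h1 : star z ⬝ᵥ M *ᵥ α = (star z ᵥ* M) ⬝ᵥ α := Matrix.dotProduct_mulVec _ _ _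
    have h2 : star z ᵥ* M = star (Mᴴ *ᵥ z) := by
      rw [Matrix.star_mulVec, Matrix.conjTranspose_conjTranspose]
    rw [h1, h2, hz]
    simp
  · intro h
    set E := EuclideanSpace ℂ ι
    set K : Submodule ℂ E := LinearMap.range (Matrix.toEuclideanLin M)
    obtain ⟨u, hu, w, hw, hx⟩ := K.exists_add_mem_mem_orthogonal (WithLp.toLp 2 x : E)
    have hwz : Mᴴ.mulVec w = 0 := by
      funext σ
      have hcol : Matrix.toEuclideanLin M (EuclideanSpace.single σ 1) ∈ K :=
        LinearMap.mem_range_self _ _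
      have h0 := hw _ hcol
      rw [EuclideanSpace.inner_eq_star_dotProduct] at h0
      have hform : Matrix.toEuclideanLin M (EuclideanSpace.single σ 1) = (fun i => M i σ : ι → ℂ) := by
        show M *ᵥ (Pi.single σ 1) = _
        funext i
        simp [Matrix.mulVec_single]
      rw [hform] at h0
      simpa [Matrix.mulVec, dotProduct, Matrix.conjTranspose_apply, mul_comm] using h0
    have hw0 : star w ⬝ᵥ x = 0 := h w hwz
    have hx' : x = u + w := congrArg WithLp.ofLp hx
    have hwu : star w ⬝ᵥ u = 0 := by
      obtain ⟨a, ha⟩ := hu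
      have h1 : star w ⬝ᵥ M *ᵥ a = (star w ᵥ* M) ⬝ᵥ a := Matrix.dotProduct_mulVec _ _ _
      have h2 : star w ᵥ* M = star (Mᴴ *ᵥ w) := by
        rw [Matrix.star_mulVec, Matrix.conjTranspose_conjTranspose]
      have hau : M *ᵥ a = u := congrArg WithLp.ofLp ha
      rw [← hau, h1, h2, hwz]
      simp
    have hww : star w ⬝ᵥ w = 0 := by
      have := hw0
      rw [hx', dotProduct_add, hwu, zero_add] at this
      exact this
    have hw0' : w = 0 := by
      ext i
      have hs : ∑ i, star (w i) * w i = 0 := hww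
      have hnn : ∀ j ∈ Finset.univ, (0:ℝ) ≤ Complex.normSq (w j) := fun _ _ => Complex.normSq_nonneg _
      have hz : ∀ j ∈ Finset.univ, Complex.normSq (w j) = 0 := by
        have h2 : ∑ j, Complex.normSq (w j) = 0 := by
          have := congrArg Complex.re hs
          simpa [Complex.normSq, Complex.mul_re] using this
        exact fun j hj => (Finset.sum_eq_zero_iff_of_nonneg hnn).mp h2 j hj
      exact Complex.normSq_eq_zero.mp (hz i (Finset.mem_univ i))
    have hxu : x = u := by rw [hx', hw0', WithLp.ofLp_zero, add_zero]
    obtain ⟨a, ha⟩ := hu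
    exact ⟨a, by rw [show M *ᵥ a = Matrix.toEuclideanLin M a from rfl, ha, hxu]⟩

lemma sum_mulVec'_s11 {σ : Type*} (s : Finset σ) (P : σ → Matrix ι κι ℂ) (z : κι → ℂ) :
    (∑ i ∈ s, P i) *ᵥ z = ∑ i ∈ s, P i *ᵥ z := by
  ext x
  simp [Matrix.mulVec, dotProduct, Matrix.sum_apply, Finset.sum_mul]
  rw [Finset.sum_comm]

lemma mulVec_sum_vec {σ : Type*} (s : Finset σ) (M : Matrix ι κι ℂ) (v : σ → κι → ℂ) :
    M *ᵥ (∑ i ∈ s, v i) = ∑ i ∈ s, M *ᵥ v i := by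
  ext x
  simp [Matrix.mulVec, dotProduct, Finset.sum_apply, Finset.mul_sum]
  rw [Finset.sum_comm]

lemma kron_one_mulVec {q' : ℕ} (M : Matrix ι κι ℂ) (x : Fin q' × κι → ℂ) (i : Fin q') (j : ι) :
    (((1 : Matrix (Fin q') (Fin q') ℂ) ⊗ₖ M) *ᵥ x) (i, j)
      = (M *ᵥ fun j' => x (i, j')) j := by
  simp [Matrix.mulVec, dotProduct, Fintype.sum_prod_type, Matrix.one_apply,
    ite_mul, zero_mul]

lemma kron_one_pow_s11 {q' : ℕ} (M : Matrix ι ι ℂ) (r : ℕ) :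
    ((1 : Matrix (Fin q') (Fin q') ℂ) ⊗ₖ M) ^ r = 1 ⊗ₖ (M ^ r) := by
  induction r with
  | zero => rw [pow_zero, pow_zero, Matrix.one_kronecker_one]
  | succ r ih => rw [pow_succ, pow_succ, ih, ← Matrix.mul_kronecker_mul, Matrix.one_mul]

lemma kron_one_mul_kron_one {q' : ℕ} {ρ : Type*} [Fintype ρ] [DecidableEq ρ]
    (X : Matrix ι κι ℂ) (Y : Matrix κι ρ ℂ) :
    ((1 : Matrix (Fin q') (Fin q') ℂ) ⊗ₖ X) * ((1 : Matrix (Fin q') (Fin q') ℂ) ⊗ₖ Y)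
      = (1 : Matrix (Fin q') (Fin q') ℂ) ⊗ₖ (X * Y) := by
  rw [← Matrix.mul_kronecker_mul, Matrix.one_mul]

lemma kron_one_conjTranspose {q' : ℕ} (M : Matrix ι κι ℂ) :
    (((1 : Matrix (Fin q') (Fin q') ℂ)) ⊗ₖ M)ᴴ = 1 ⊗ₖ Mᴴ := by
  ext ⟨i, j⟩ ⟨i', j'⟩
  simp [Matrix.conjTranspose_apply, Matrix.kroneckerMap_apply, Matrix.one_apply,
    apply_ite (starRingEnd ℂ)]
  by_cases h : i' = i <;> by_cases h2 : i = i' <;> simp_all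

lemma aeval_kron_one {q' : ℕ} (M : Matrix ι ι ℂ) (s : ℂ[X]) :
    aeval ((1 : Matrix (Fin q') (Fin q') ℂ) ⊗ₖ M) s = 1 ⊗ₖ aeval M s := by
  induction s using Polynomial.induction_on' with
  | add f g hf hg => rw [map_add, map_add, hf, hg, Matrix.kronecker_add]
  | monomial d a =>
    rw [aeval_monomial, aeval_monomial, Algebra.algebraMap_eq_smul_one,
      Algebra.algebraMap_eq_smul_one, smul_one_mul, smul_one_mul, kron_one_pow_s11,
      Matrix.kronecker_smul]

lemma pow_intertwine (P : Matrix ι ι ℂ) (Q : Matrix κι κι ℂ) (V : Matrix ι κι ℂ)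
    (h : P * V = V * Q) (r : ℕ) : P ^ r * V = V * Q ^ r := by
  induction r with
  | zero => rw [pow_zero, pow_zero, Matrix.one_mul, Matrix.mul_one]
  | succ r ih => rw [pow_succ, pow_succ, Matrix.mul_assoc, h, ← Matrix.mul_assoc, ih,
      Matrix.mul_assoc]

lemma aeval_intertwine (P : Matrix ι ι ℂ) (Q : Matrix κι κι ℂ) (V : Matrix ι κι ℂ)
    (h : P * V = V * Q) (s : ℂ[X]) : aeval P s * V = V * aeval Q s := by
  induction s using Polynomial.induction_on' with
  | add f g hf hg => rw [map_add, map_add, Matrix.add_mul, Matrix.mul_add, hf, hg]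
  | monomial d a =>
    rw [aeval_monomial, aeval_monomial, Algebra.algebraMap_eq_smul_one,
      Algebra.algebraMap_eq_smul_one, smul_one_mul, smul_one_mul, Matrix.smul_mul,
      Matrix.mul_smul, pow_intertwine P Q V h d]

lemma mulVec_aeval_eq_zero (M : Matrix ι ι ℂ) (G : Matrix J' ι ℂ) (z : ι → ℂ) (pch : ℂ[X])
    (hm : pch.Monic) (hann : aeval M pch = 0)
    (h : ∀ r < pch.natDegree, G *ᵥ (M ^ r *ᵥ z) = 0) (s : ℂ[X]) :
    G *ᵥ (aeval M s *ᵥ z) = 0 := by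
  have hred : aeval M s = aeval M (s %ₘ pch) :=
    (aeval_modByMonic_eq_self_of_root hann).symm
  rw [hred, aeval_eq_sum_range, sum_mulVec'_s11]
  have hG := map_sum (Matrix.mulVecLin G) (fun i => ((s %ₘ pch).coeff i • M ^ i) *ᵥ z)
      (Finset.range ((s %ₘ pch).natDegree + 1))
  simp only [Matrix.mulVecLin_apply] at hG
  rw [hG]
  apply Finset.sum_eq_zero
  intro i _
  rw [Matrix.smul_mulVec, Matrix.mulVec_smul]
  by_cases hi : i < pch.natDegree
  · rw [h i hi, smul_zero]
  · have hc : (s %ₘ pch).coeff i = 0 := by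
      apply coeff_eq_zero_of_degree_lt
      have h1 : (s %ₘ pch).degree < pch.degree := degree_modByMonic_lt s hm
      have h2 : pch.degree ≤ (i : ℕ) := by
        rw [Polynomial.degree_eq_natDegree hm.ne_zero]
        exact_mod_cast Nat.le_of_not_lt hi
      exact lt_of_lt_of_le h1 h2
    rw [hc, zero_smul]

lemma eq_zero_of_isUnit_mulVec (P : Matrix ι ι ℂ) (h : IsUnit P) {v : ι → ℂ}
    (hv : P *ᵥ v = 0) : v = 0 := by
  obtain ⟨u, rfl⟩ := h
  calc v = ((↑u⁻¹ * ↑u : Matrix ι ι ℂ)) *ᵥ v := by rw [u.inv_mul, Matrix.one_mulVec]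
  _ = (↑u⁻¹ : Matrix ι ι ℂ) *ᵥ ((↑u : Matrix ι ι ℂ) *ᵥ v) := (Matrix.mulVec_mulVec _ _ _).symm
  _ = 0 := by rw [hv, Matrix.mulVec_zero]

lemma isUnit_aeval_of_eval_ne_zero {d : ℕ} (M : Matrix ι ι ℂ) (μ0 : ℂ)
    (hnil : (M - μ0 • 1) ^ d = 0) (s : ℂ[X]) (hs : s.eval μ0 ≠ 0) :
    IsUnit (aeval M s) := by
  obtain ⟨t, ht⟩ := X_sub_C_dvd_sub_C_eval (a := μ0) (p := s)
  have hsplit : aeval M s = s.eval μ0 • 1 + (M - μ0 • 1) * aeval M t := by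
    have := congrArg (aeval M) ht
    rw [map_sub, _root_.map_mul, map_sub, aeval_X, aeval_C, Algebra.algebraMap_eq_smul_one] at this
    rw [sub_eq_iff_eq_add] at this
    rw [this, aeval_C, Algebra.algebraMap_eq_smul_one, add_comm]
  have hcommM : Commute M (aeval M t) := by
    simpa using ((Commute.all (X : ℂ[X]) t).map (aeval M))
  have hcomm : Commute (M - μ0 • 1) (aeval M t) :=
    hcommM.sub_left ((Commute.one_left (aeval M t)).smul_left μ0)
  have hnilN : IsNilpotent ((M - μ0 • 1) * aeval M t) :=
    ⟨d, by rw [hcomm.mul_pow, hnil, zero_mul]⟩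
  have hunit : IsUnit ((s.eval μ0) • (1 : Matrix ι ι ℂ)) := by
    have := hs.isUnit.map (algebraMap ℂ (Matrix ι ι ℂ))
    rwa [Algebra.algebraMap_eq_smul_one] at this
  have hcomm2 : Commute ((M - μ0 • 1) * aeval M t) ((s.eval μ0) • (1 : Matrix ι ι ℂ)) :=
    (Commute.one_right _).smul_right _
  rw [hsplit]
  exact hnilN.isUnit_add_left_of_commute hunit hcomm2

end helpers

lemma ctrbC_kernel_iff {ι J : Type*} [Fintype ι] [DecidableEq ι] [Fintype J]
    (M : Matrix ι ι ℂ) (B : Matrix ι J ℂ) (N : ℕ) (z : ι → ℂ) :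
    (ctrbC M B N)ᴴ *ᵥ z = 0 ↔ ∀ r < N, Bᴴ *ᵥ ((Mᴴ) ^ r *ᵥ z) = 0 := by
  have key : ∀ (r : Fin N) (σ : J),
      ((ctrbC M B N)ᴴ *ᵥ z) (r, σ) = (Bᴴ *ᵥ ((Mᴴ) ^ (r : ℕ) *ᵥ z)) σ := by
    intro r σ
    rw [Matrix.mulVec_mulVec]
    have hmat : Bᴴ * (Mᴴ) ^ (r : ℕ) = (M ^ (r : ℕ) * B)ᴴ := by
      rw [Matrix.conjTranspose_mul, Matrix.conjTranspose_pow]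
    rw [hmat]
    simp [ctrbC, Matrix.mulVec, dotProduct, Matrix.conjTranspose_apply]
  constructor
  · intro h r hr
    funext σ
    rw [← key ⟨r, hr⟩ σ, h]
    rfl
  · intro h
    funext rσ
    obtain ⟨r, σ⟩ := rσ
    rw [key r σ, h r r.2]
    rfl

/-- One side of the equivalence, reformulated through the kernel of `Wᴴ`. -/
lemma side_iff {q' n' : ℕ} {J : Type*} [Fintype J] [DecidableEq J] (k ℓ : Fin q')
    (W : Matrix (Fin q' × Fin n') J ℂ) :
    (∀ x : Fin q' × Fin n' → ℂ,
      (∃ v : Fin n' → ℂ, ∀ i j, x (i, j) =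
        ((if i = k then (1 : ℂ) else 0) - (if i = ℓ then 1 else 0)) * v j) →
      ∃ α, W *ᵥ α = x)
    ↔ (∀ z : Fin q' × Fin n' → ℂ, Wᴴ *ᵥ z = 0 → ∀ j, z (k, j) = z (ℓ, j)) := by
  have hdot : ∀ (z : Fin q' × Fin n' → ℂ) (v : Fin n' → ℂ),
      star z ⬝ᵥ (fun ij : Fin q' × Fin n' =>
        ((if ij.1 = k then (1 : ℂ) else 0) - (if ij.1 = ℓ then 1 else 0)) * v ij.2)
      = ∑ j, (star (z (k, j)) - star (z (ℓ, j))) * v j := by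
    intro z v
    simp only [dotProduct, Fintype.sum_prod_type, Pi.star_apply, sub_mul, mul_sub,
      ite_mul, one_mul, zero_mul, mul_ite, mul_zero, Finset.sum_sub_distrib]
    rw [Finset.sum_comm (γ := Fin q'), Finset.sum_comm (γ := Fin q')]
    congr 1 <;> apply Finset.sum_congr rfl <;> intro j _ <;>
      simp [Finset.sum_ite_eq', sub_mul]
  constructor
  · intro H z hz j
    have hall : ∀ v : Fin n' → ℂ,
        ∑ j, (star (z (k, j)) - star (z (ℓ, j))) * v j = 0 := by
      intro v
      rw [← hdot z v]
      refine (mem_range_iff W _).mp ?_ z hz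
      exact H _ ⟨v, fun i j => rfl⟩
    have hj := hall (Pi.single j 1)
    simp only [Pi.single_apply, mul_ite, mul_one, mul_zero, Finset.sum_ite_eq',
      Finset.mem_univ, if_true] at hj
    have : star (z (k, j) - z (ℓ, j)) = 0 := by rw [star_sub]; exact hj
    have h2 : z (k, j) - z (ℓ, j) = 0 := by
      rwa [star_eq_zero] at this
    exact sub_eq_zero.mp h2
  · intro H x hx
    obtain ⟨v, hv⟩ := hx
    rw [mem_range_iff]
    intro z hz
    have hxeq : x = fun ij : Fin q' × Fin n' =>
        ((if ij.1 = k then (1 : ℂ) else 0) - (if ij.1 = ℓ then 1 else 0)) * v ij.2 := by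
      funext ij
      obtain ⟨i, j⟩ := ij
      exact hv i j
    rw [hxeq, hdot]
    apply Finset.sum_eq_zero
    intro j _
    rw [H z hz j, sub_self, zero_mul]

/-- (k,ℓ)-controllability via generalized-eigenspace projections:
`range 𝐖 ⊇ range[(e_k−e_ℓ)⊗I_n]` iff for every κ,
`range 𝐖_κ ⊇ range[(e_k−e_ℓ)⊗I_{n_κ}]`. -/
theorem stmt11 (n q p m : ℕ) (hq : 2 ≤ q)
    (A : Matrix (Fin n) (Fin n) ℝ)
    (μ : Fin m → ℂ) (hμ : Function.Injective μ)
    (nmul : Fin m → ℕ) (hsum : ∑ κ, nmul κ = n)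
    (U : ∀ κ : Fin m, Matrix (Fin n) (Fin (nmul κ)) ℂ)
    (hUrank : ∀ κ, Function.Injective (U κ).mulVec)
    (hUrange : ∀ κ (x : Fin n → ℂ),
      (∃ y, (U κ).mulVec y = x) ↔
        ((((A.map (Complex.ofReal))ᴴ - μ κ • 1) ^ nmul κ).mulVec x = 0))
    (Aκ : ∀ κ : Fin m, Matrix (Fin (nmul κ)) (Fin (nmul κ)) ℂ)
    (hcomm : ∀ κ, (A.map (Complex.ofReal))ᴴ * U κ = U κ * (Aκ κ)ᴴ)
    (hchar : ∀ κ, ((Aκ κ)ᴴ).charpoly = (X - C (μ κ)) ^ nmul κ)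
    (hspan : ∀ x : Fin n → ℂ, ∃ f : (κ : Fin m) → Fin (nmul κ) → ℂ,
      x = ∑ κ, (U κ).mulVec (f κ))
    (B : Matrix (Fin q × Fin n) (Fin p) ℝ)
    (hB : ∀ σ (j : Fin n), ∑ i : Fin q, B (i, j) σ = 0)
    (k ℓ : Fin q) (hkl : k ≠ ℓ) :
    (∀ x : Fin q × Fin n → ℂ,
      (∃ v : Fin n → ℂ, ∀ i j, x (i, j) =
        ((if i = k then (1 : ℂ) else 0) - (if i = ℓ then 1 else 0)) * v j) →
      ∃ α : Fin n × Fin p → ℂ,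
        (ctrbC ((1 : Matrix (Fin q) (Fin q) ℂ) ⊗ₖ (A.map (Complex.ofReal)))
          (B.map (Complex.ofReal)) n).mulVec α = x) ↔
    (∀ κ : Fin m, ∀ x : Fin q × Fin (nmul κ) → ℂ,
      (∃ v : Fin (nmul κ) → ℂ, ∀ i j, x (i, j) =
        ((if i = k then (1 : ℂ) else 0) - (if i = ℓ then 1 else 0)) * v j) →
      ∃ α : Fin (nmul κ) × Fin p → ℂ,
        (ctrbC ((1 : Matrix (Fin q) (Fin q) ℂ) ⊗ₖ Aκ κ)
          (((1 : Matrix (Fin q) (Fin q) ℂ) ⊗ₖ (U κ)ᴴ) * (B.map (Complex.ofReal)))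
          (nmul κ)).mulVec α = x) := by
  classical
  simp only [side_iff, ctrbC_kernel_iff, kron_one_conjTranspose, kron_one_pow_s11,
    Matrix.conjTranspose_mul, Matrix.conjTranspose_conjTranspose]
  set AH : Matrix (Fin n) (Fin n) ℂ := (A.map Complex.ofReal)ᴴ with hAHdef
  set BH : Matrix (Fin p) (Fin q × Fin n) ℂ := (B.map Complex.ofReal)ᴴ with hBHdef
  constructor
  · -- (i) → (ii)
    intro hL κ z hz
    -- extend the kernel condition to all powers
    have hz' : ∀ r : ℕ,
        (BH * ((1 : Matrix (Fin q) (Fin q) ℂ) ⊗ₖ U κ)) *ᵥ (((1 : Matrix (Fin q) (Fin q) ℂ) ⊗ₖ ((Aκ κ)ᴴ ^ r)) *ᵥ z) = 0 := by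
      intro r
      have hanns : aeval ((1 : Matrix (Fin q) (Fin q) ℂ) ⊗ₖ (Aκ κ)ᴴ) ((Aκ κ)ᴴ).charpoly = 0 := by
        rw [aeval_kron_one, aeval_self_charpoly, Matrix.kronecker_zero]
      have hlow : ∀ r' < ((Aκ κ)ᴴ).charpoly.natDegree,
          (BH * ((1 : Matrix (Fin q) (Fin q) ℂ) ⊗ₖ U κ)) *ᵥ (((1 : Matrix (Fin q) (Fin q) ℂ) ⊗ₖ (Aκ κ)ᴴ) ^ r' *ᵥ z) = 0 := by
        intro r' hr'
        rw [kron_one_pow_s11]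
        refine hz r' ?_
        have := Matrix.charpoly_natDegree_eq_dim ((Aκ κ)ᴴ)
        simp only [Fintype.card_fin] at this
        omega
      have := mulVec_aeval_eq_zero _ (BH * ((1 : Matrix (Fin q) (Fin q) ℂ) ⊗ₖ U κ)) z _ (Matrix.charpoly_monic _)
        hanns hlow (X ^ r)
      rwa [map_pow, aeval_X, kron_one_pow_s11] at this
    have hwk : ∀ r < n, BH *ᵥ (((1 : Matrix (Fin q) (Fin q) ℂ) ⊗ₖ (AH ^ r)) *ᵥ (((1 : Matrix (Fin q) (Fin q) ℂ) ⊗ₖ U κ) *ᵥ z)) = 0 := by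
      intro r _
      have hmm : ((1 : Matrix (Fin q) (Fin q) ℂ) ⊗ₖ (AH ^ r)) * ((1 : Matrix (Fin q) (Fin q) ℂ) ⊗ₖ U κ)
          = ((1 : Matrix (Fin q) (Fin q) ℂ) ⊗ₖ U κ) * ((1 : Matrix (Fin q) (Fin q) ℂ) ⊗ₖ ((Aκ κ)ᴴ ^ r)) := by
        rw [kron_one_mul_kron_one, kron_one_mul_kron_one, pow_intertwine _ _ _ (hcomm κ) r]
      have h3 := hz' r
      simp only [Matrix.mulVec_mulVec] at h3 ⊢
      rw [hmm, ← Matrix.mul_assoc]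
      exact h3
    have hkl2 := hL (((1 : Matrix (Fin q) (Fin q) ℂ) ⊗ₖ U κ) *ᵥ z) hwk
    intro j
    have hfun : (U κ) *ᵥ (fun j' => z (k, j')) = (U κ) *ᵥ (fun j' => z (ℓ, j')) := by
      funext j'
      have h1 := kron_one_mulVec (U κ) z k j'
      have h2 := kron_one_mulVec (U κ) z ℓ j'
      exact h1.symm.trans ((hkl2 j').trans h2)
    have := hUrank κ hfun
    exact congrFun this j
  · -- (ii) → (i)
    intro hR z hz j
    have hz' : ∀ s : ℂ[X], BH *ᵥ (((1 : Matrix (Fin q) (Fin q) ℂ) ⊗ₖ aeval AH s) *ᵥ z) = 0 := by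
      intro s
      have hanns : aeval ((1 : Matrix (Fin q) (Fin q) ℂ) ⊗ₖ AH) AH.charpoly = 0 := by
        rw [aeval_kron_one, aeval_self_charpoly, Matrix.kronecker_zero]
      have hlow : ∀ r < AH.charpoly.natDegree,
          BH *ᵥ (((1 : Matrix (Fin q) (Fin q) ℂ) ⊗ₖ AH) ^ r *ᵥ z) = 0 := by
        intro r hr
        rw [kron_one_pow_s11]
        refine hz r ?_
        have := Matrix.charpoly_natDegree_eq_dim AH
        simp only [Fintype.card_fin] at this
        omega
      have := mulVec_aeval_eq_zero _ BH z _ (Matrix.charpoly_monic _) hanns hlow s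
      rwa [aeval_kron_one] at this
    choose g hg using fun i : Fin q => hspan (fun j' => z (i, j'))
    have hzdec : z = ∑ κ, ((1 : Matrix (Fin q) (Fin q) ℂ) ⊗ₖ U κ) *ᵥ (fun ij : Fin q × Fin (nmul κ) => g ij.1 κ ij.2) := by
      funext ij
      obtain ⟨i, j'⟩ := ij
      calc z (i, j') = ∑ κ, ((U κ) *ᵥ g i κ) j' := by
            have := congrFun (hg i) j'
            simpa [Finset.sum_apply] using this
        _ = ∑ κ, (((1 : Matrix (Fin q) (Fin q) ℂ) ⊗ₖ U κ) *ᵥ (fun ij : Fin q × Fin (nmul κ) => g ij.1 κ ij.2)) (i, j') := by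
            refine Finset.sum_congr rfl fun κ _ => ?_
            rw [kron_one_mulVec]
        _ = (∑ κ, ((1 : Matrix (Fin q) (Fin q) ℂ) ⊗ₖ U κ) *ᵥ (fun ij : Fin q × Fin (nmul κ) => g ij.1 κ ij.2)) (i, j') := by
            rw [Finset.sum_apply]
    have hgkl : ∀ κ : Fin m, g k κ = g ℓ κ := by
      intro κ
      set pκ : ℂ[X] := ∏ j' ∈ Finset.univ.erase κ, (X - C (μ j')) ^ nmul j' with hpκ
      set hv : Fin q × Fin (nmul κ) → ℂ :=
        ((1 : Matrix (Fin q) (Fin q) ℂ) ⊗ₖ aeval ((Aκ κ)ᴴ) pκ) *ᵥ (fun ij : Fin q × Fin (nmul κ) => g ij.1 κ ij.2) with hhv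
      have hker : ∀ r < nmul κ,
          (BH * ((1 : Matrix (Fin q) (Fin q) ℂ) ⊗ₖ U κ)) *ᵥ (((1 : Matrix (Fin q) (Fin q) ℂ) ⊗ₖ ((Aκ κ)ᴴ ^ r)) *ᵥ hv) = 0 := by
        intro r _
        have h0 := hz' (X ^ r * pκ)
        rw [hzdec, mulVec_sum_vec, mulVec_sum_vec] at h0
        have hterm : ∀ κ' : Fin m, κ' ∈ Finset.univ → κ' ≠ κ →
            BH *ᵥ (((1 : Matrix (Fin q) (Fin q) ℂ) ⊗ₖ aeval AH (X ^ r * pκ)) *ᵥ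
              (((1 : Matrix (Fin q) (Fin q) ℂ) ⊗ₖ U κ') *ᵥ (fun ij : Fin q × Fin (nmul κ') => g ij.1 κ' ij.2))) = 0 := by
          intro κ' _ hne
          have hdvd : (X - C (μ κ')) ^ nmul κ' ∣ pκ :=
            Finset.dvd_prod_of_mem _ (Finset.mem_erase.mpr ⟨hne, Finset.mem_univ _⟩)
          obtain ⟨c, hc⟩ := hdvd
          have hzero : aeval ((Aκ κ')ᴴ) pκ = 0 := by
            rw [hc, _root_.map_mul]
            have hz0 : aeval ((Aκ κ')ᴴ) ((X - C (μ κ')) ^ nmul κ') = 0 := by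
              rw [← hchar κ']
              exact Matrix.aeval_self_charpoly _
            rw [hz0, zero_mul]
          have hzero2 : aeval ((Aκ κ')ᴴ) (X ^ r * pκ) = 0 := by
            rw [_root_.map_mul, hzero, mul_zero]
          have h1 : aeval AH (X ^ r * pκ) * U κ' = 0 := by
            rw [aeval_intertwine AH ((Aκ κ')ᴴ) (U κ') (hcomm κ') (X ^ r * pκ), hzero2,
              Matrix.mul_zero]
          have hsw : (((1 : Matrix (Fin q) (Fin q) ℂ)) ⊗ₖ aeval AH (X ^ r * pκ))
              * ((1 : Matrix (Fin q) (Fin q) ℂ) ⊗ₖ U κ') = 0 := by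
            rw [kron_one_mul_kron_one, h1, Matrix.kronecker_zero]
          simp only [Matrix.mulVec_mulVec]
          rw [hsw, Matrix.mul_zero, Matrix.zero_mulVec]
        have hsingle : BH *ᵥ (((1 : Matrix (Fin q) (Fin q) ℂ) ⊗ₖ aeval AH (X ^ r * pκ)) *ᵥ
            (((1 : Matrix (Fin q) (Fin q) ℂ) ⊗ₖ U κ) *ᵥ (fun ij : Fin q × Fin (nmul κ) => g ij.1 κ ij.2))) = 0 := by
          have hse := Finset.sum_eq_single_of_mem κ (Finset.mem_univ κ)
            (fun b hb hbne => hterm b hb hbne)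
          rw [hse] at h0
          exact h0
        have h2 : aeval AH (X ^ r * pκ) * U κ
            = U κ * ((Aκ κ)ᴴ ^ r * aeval ((Aκ κ)ᴴ) pκ) := by
          rw [aeval_intertwine AH ((Aκ κ)ᴴ) (U κ) (hcomm κ), _root_.map_mul, map_pow, aeval_X]
        have hone : (((1 : Matrix (Fin q) (Fin q) ℂ)) ⊗ₖ aeval AH (X ^ r * pκ))
            * ((1 : Matrix (Fin q) (Fin q) ℂ) ⊗ₖ U κ)
            = ((1 : Matrix (Fin q) (Fin q) ℂ) ⊗ₖ U κ) * (((1 : Matrix (Fin q) (Fin q) ℂ) ⊗ₖ ((Aκ κ)ᴴ ^ r)) * ((1 : Matrix (Fin q) (Fin q) ℂ) ⊗ₖ aeval ((Aκ κ)ᴴ) pκ)) := by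
          rw [kron_one_mul_kron_one, kron_one_mul_kron_one, kron_one_mul_kron_one, h2]
        calc (BH * ((1 : Matrix (Fin q) (Fin q) ℂ) ⊗ₖ U κ)) *ᵥ (((1 : Matrix (Fin q) (Fin q) ℂ) ⊗ₖ ((Aκ κ)ᴴ ^ r)) *ᵥ hv)
            = (BH * ((1 : Matrix (Fin q) (Fin q) ℂ) ⊗ₖ U κ) * (((1 : Matrix (Fin q) (Fin q) ℂ) ⊗ₖ ((Aκ κ)ᴴ ^ r)) *
                ((1 : Matrix (Fin q) (Fin q) ℂ) ⊗ₖ aeval ((Aκ κ)ᴴ) pκ))) *ᵥ (fun ij : Fin q × Fin (nmul κ) => g ij.1 κ ij.2) := by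
              rw [hhv]
              simp only [Matrix.mulVec_mulVec, Matrix.mul_assoc]
          _ = (BH * (((1 : Matrix (Fin q) (Fin q) ℂ) ⊗ₖ aeval AH (X ^ r * pκ)) * ((1 : Matrix (Fin q) (Fin q) ℂ) ⊗ₖ U κ)))
                *ᵥ (fun ij : Fin q × Fin (nmul κ) => g ij.1 κ ij.2) := by
              rw [hone, Matrix.mul_assoc]
          _ = BH *ᵥ (((1 : Matrix (Fin q) (Fin q) ℂ) ⊗ₖ aeval AH (X ^ r * pκ)) *ᵥ
                (((1 : Matrix (Fin q) (Fin q) ℂ) ⊗ₖ U κ) *ᵥ (fun ij : Fin q × Fin (nmul κ) => g ij.1 κ ij.2))) := by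
              simp only [Matrix.mulVec_mulVec, Matrix.mul_assoc]
          _ = 0 := hsingle
      have hvkl := hR κ hv hker
      have hPeq : aeval ((Aκ κ)ᴴ) pκ *ᵥ g k κ = aeval ((Aκ κ)ᴴ) pκ *ᵥ g ℓ κ := by
        funext j'
        have h1 := kron_one_mulVec (aeval ((Aκ κ)ᴴ) pκ)
          (fun ij : Fin q × Fin (nmul κ) => g ij.1 κ ij.2) k j'
        have h2 := kron_one_mulVec (aeval ((Aκ κ)ᴴ) pκ)
          (fun ij : Fin q × Fin (nmul κ) => g ij.1 κ ij.2) ℓ j'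
        calc (aeval ((Aκ κ)ᴴ) pκ *ᵥ g k κ) j' = hv (k, j') := by rw [hhv]; exact h1.symm
          _ = hv (ℓ, j') := hvkl j'
          _ = (aeval ((Aκ κ)ᴴ) pκ *ᵥ g ℓ κ) j' := by rw [hhv]; exact h2
      have hnilκ : ((Aκ κ)ᴴ - μ κ • 1) ^ nmul κ = 0 := by
        have h := Matrix.aeval_self_charpoly ((Aκ κ)ᴴ)
        rw [hchar κ, map_pow, map_sub, aeval_X, aeval_C, Algebra.algebraMap_eq_smul_one] at h
        exact h
      have heval : pκ.eval (μ κ) ≠ 0 := by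
        rw [hpκ, eval_prod]
        apply Finset.prod_ne_zero_iff.mpr
        intro j' hj'
        rw [eval_pow, eval_sub, eval_X, eval_C]
        apply pow_ne_zero
        apply sub_ne_zero.mpr
        intro hcontra
        exact (Finset.mem_erase.mp hj').1 (hμ hcontra).symm
      have hunit := isUnit_aeval_of_eval_ne_zero ((Aκ κ)ᴴ) (μ κ) hnilκ pκ heval
      have hdiff : g k κ - g ℓ κ = 0 := by
        apply eq_zero_of_isUnit_mulVec _ hunit
        rw [Matrix.mulVec_sub, hPeq, sub_self]
      exact sub_eq_zero.mp hdiff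
    calc z (k, j) = (∑ κ, (U κ) *ᵥ g k κ) j := congrFun (hg k) j
      _ = (∑ κ, (U κ) *ᵥ g ℓ κ) j := by simp only [hgkl]
      _ = z (ℓ, j) := (congrFun (hg ℓ) j).symm
end
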